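/- arXiv:1503.06081 — 3 statements merged into one kernel-verified Lean document; each statement's English description precedes it below -/
import Mathlib

section
/- Let S be a neutral set over a finite alphabet A, let X ⊆ S be a finite S-maximal suffix code and let Y ⊆ S be a finite S-maximal prefix code. Then for every w ∈ S one has m_S^{X,Y}(w) = m_S(w), where m_S^{X,Y}(w) = e_S^{X,Y}(w) − ℓ_S^X(w) − r_S^Y(w) + 1 with ℓ_S^X(w) = Card{x ∈ X | xw ∈ S}, r_S^Y(w) = Card{y ∈ Y | wy ∈ S} and e_S^{X,Y}(w) = Card{(x,y) ∈ X × Y | xwy ∈ S}. -/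
namespace Paper

variable {A : Type*}

/-- A set of words is factorial if it contains all factors (infixes) of its elements. -/
def Factorial (S : Set (List A)) : Prop :=
  ∀ u v : List A, u <:+: v → v ∈ S → u ∈ S

/-- Left extensions: `L_S(w) = {a | aw ∈ S}`. -/
def extL (S : Set (List A)) (w : List A) : Set A := {a | a :: w ∈ S}

/-- Right extensions: `R_S(w) = {a | wa ∈ S}`. -/
def extR (S : Set (List A)) (w : List A) : Set A := {a | w ++ [a] ∈ S}

/-- Two-sided extensions: `E_S(w) = {(a,b) | awb ∈ S}`. -/
def extE (S : Set (List A)) (w : List A) : Set (A × A) := {p | p.1 :: (w ++ [p.2]) ∈ S}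

/-- `m_S(w) = e_S(w) - ℓ_S(w) - r_S(w) + 1`. -/
noncomputable def mS (S : Set (List A)) (w : List A) : ℤ :=
  ((extE S w).ncard : ℤ) - (extL S w).ncard - (extR S w).ncard + 1

/-- A set is neutral if it is factorial and every nonempty word is neutral (`m_S(w) = 0`). -/
def Neutral (S : Set (List A)) : Prop :=
  Factorial S ∧ ∀ w ∈ S, w ≠ [] → mS S w = 0

/-- The characteristic `χ(S) = 1 - m_S(ε)`. -/
noncomputable def chiS (S : Set (List A)) : ℤ := 1 - mS S []

end Paper

namespace Paper

/-- `ρ_S(x) = e_S(x) - ℓ_S(x)`. -/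
noncomputable def rhoS {A : Type*} (S : Set (List A)) (w : List A) : ℤ :=
  ((extE S w).ncard : ℤ) - (extL S w).ncard

/-- `λ_S(x) = e_S(x) - r_S(x)`. -/
noncomputable def lamS {A : Type*} (S : Set (List A)) (w : List A) : ℤ :=
  ((extE S w).ncard : ℤ) - (extR S w).ncard

/-- A prefix code: a set of nonempty words, none of which is a proper prefix of another. -/
def PrefixCode {A : Type*} (X : Set (List A)) : Prop :=
  [] ∉ X ∧ ∀ u ∈ X, ∀ v ∈ X, u <+: v → u = v

/-- A suffix code: a set of nonempty words, none of which is a proper suffix of another. -/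
def SuffixCode {A : Type*} (X : Set (List A)) : Prop :=
  [] ∉ X ∧ ∀ u ∈ X, ∀ v ∈ X, u <:+ v → u = v

/-- A bifix code is both a prefix code and a suffix code. -/
def BifixCode {A : Type*} (X : Set (List A)) : Prop :=
  PrefixCode X ∧ SuffixCode X

/-- An `S`-maximal prefix code: a prefix code contained in `S` and not properly contained
in another prefix code contained in `S`. -/
def MaxPrefixCode {A : Type*} (S X : Set (List A)) : Prop :=
  X ⊆ S ∧ PrefixCode X ∧ ∀ Y : Set (List A), PrefixCode Y → Y ⊆ S → X ⊆ Y → X = Y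

/-- An `S`-maximal suffix code. -/
def MaxSuffixCode {A : Type*} (S X : Set (List A)) : Prop :=
  X ⊆ S ∧ SuffixCode X ∧ ∀ Y : Set (List A), SuffixCode Y → Y ⊆ S → X ⊆ Y → X = Y

/-- An `S`-maximal bifix code. -/
def MaxBifixCode {A : Type*} (S X : Set (List A)) : Prop :=
  X ⊆ S ∧ BifixCode X ∧ ∀ Y : Set (List A), BifixCode Y → Y ⊆ S → X ⊆ Y → X = Y

/-- A set `S ≠ {ε}` is recurrent if it is factorial and any two of its words can be
completed into a word of `S`. -/
def Recurrent {A : Type*} (S : Set (List A)) : Prop :=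
  S ≠ {([] : List A)} ∧ Factorial S ∧ ∀ u ∈ S, ∀ w ∈ S, ∃ v : List A, u ++ v ++ w ∈ S

/-- An infinite factorial set is uniformly recurrent if each of its words occurs as a
factor of every long enough word of `S`. -/
def UniformlyRecurrent {A : Type*} (S : Set (List A)) : Prop :=
  S.Infinite ∧ Factorial S ∧
    ∀ u ∈ S, ∃ n : ℕ, 1 ≤ n ∧ ∀ w ∈ S, w.length = n → u <:+: w

/-- Membership in `X^*`: a concatenation of words of `X`. -/
def InStar {A : Type*} (X : Set (List A)) (m : List A) : Prop :=
  ∃ l : List (List A), (∀ u ∈ l, u ∈ X) ∧ l.flatten = m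

/-- The set of parses of `w` with respect to a bifix code `X`: triples `(q, x, p)` with
`w = qxp`, `q` has no suffix in `X`, `x ∈ X^*`, `p` has no prefix in `X`. -/
def Parses {A : Type*} (X : Set (List A)) (w : List A) :
    Set (List A × List A × List A) :=
  {t | t.1 ++ t.2.1 ++ t.2.2 = w ∧ (∀ x ∈ X, ¬ x <:+ t.1) ∧ InStar X t.2.1 ∧
        ∀ x ∈ X, ¬ x <+: t.2.2}

/-- The number of parses `d_X(w)`. -/
noncomputable def dX {A : Type*} (X : Set (List A)) (w : List A) : ℕ :=
  (Parses X w).ncard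

/-- `X` has `S`-degree `n` : `n` is the maximal number of parses with respect to `X`
of a word of `S`. -/
def HasDegree {A : Type*} (S X : Set (List A)) (n : ℕ) : Prop :=
  IsGreatest (dX X '' S) n

/-- `v` is an internal factor of `x`, i.e. `x = uvw` with `u, w` nonempty. -/
def InternalFactor {A : Type*} (v x : List A) : Prop :=
  ∃ u w : List A, u ≠ [] ∧ w ≠ [] ∧ u ++ v ++ w = x

/-- The set `CR_S(X)` of complete first return words to `X` in `S`: words of `S` with a
proper prefix in `X`, a proper suffix in `X` and no internal factor in `X`. -/
def CR {A : Type*} (S X : Set (List A)) : Set (List A) :=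
  {w ∈ S | (∃ x ∈ X, x <+: w ∧ x ≠ w) ∧ (∃ x ∈ X, x <:+ w ∧ x ≠ w) ∧
    ∀ v : List A, InternalFactor v w → v ∉ X}

end Paper

namespace Paper
set_option linter.unusedSectionVars false
set_option linter.unusedTactic false
open scoped Classical
open Finset

variable {A : Type*} [Fintype A]

section basic
variable {A : Type*} {S : Set (List A)}
lemma mem_of_suffix (hF : Factorial S) {u v : List A} (h : u <:+ v) (hv : v ∈ S) : u ∈ S :=
  hF u v h.isInfix hv
lemma mem_of_prefix (hF : Factorial S) {u v : List A} (h : u <+: v) (hv : v ∈ S) : u ∈ S :=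
  hF u v h.isInfix hv

end basic

variable {A : Type*} [Fintype A]
open Finset
section util
variable {S : Set (List A)} {v w : List A}
open scoped Classical

noncomputable def lc (S : Set (List A)) (w : List A) : ℤ :=
  ((Finset.univ.filter (fun a => a :: w ∈ S)).card : ℤ)
noncomputable def rc (S : Set (List A)) (w : List A) : ℤ :=
  ((Finset.univ.filter (fun b => w ++ [b] ∈ S)).card : ℤ)
noncomputable def ec (S : Set (List A)) (w : List A) : ℤ :=
  ((Finset.univ.filter (fun p : A × A => p.1 :: (w ++ [p.2]) ∈ S)).card : ℤ)

lemma extL_ncard : ((extL S w).ncard : ℤ) = lc S w := by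
  rw [lc, Set.ncard_eq_toFinset_card']
  congr 1
  apply Finset.card_bij (fun a _ => a) <;> simp <;> simp [extL]

lemma extR_ncard : ((extR S w).ncard : ℤ) = rc S w := by
  rw [rc, Set.ncard_eq_toFinset_card']
  congr 1
  apply Finset.card_bij (fun a _ => a) <;> simp <;> simp [extR]

lemma extE_ncard : ((extE S w).ncard : ℤ) = ec S w := by
  rw [ec, Set.ncard_eq_toFinset_card']
  congr 1
  apply Finset.card_bij (fun a _ => a) <;> simp <;> simp [extE]

lemma neutral_ec (hN : Neutral S) (hv : v ∈ S) (hv0 : v ≠ []) :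
    ec S v = lc S v + rc S v - 1 := by
  have := hN.2 v hv hv0
  rw [mS] at this
  rw [extL_ncard, extR_ncard, extE_ncard] at this
  linarith

lemma lc_zero (hF : Factorial S) (h : v ∉ S) : lc S v = 0 := by
  have he : Finset.univ.filter (fun a => a :: v ∈ S) = ∅ :=
    Finset.filter_eq_empty_iff.mpr (fun a _ ha => h (mem_of_suffix hF ⟨[a], rfl⟩ ha))
  rw [lc, he]; simp

lemma rc_zero (hF : Factorial S) (h : v ∉ S) : rc S v = 0 := by
  have he : Finset.univ.filter (fun b => v ++ [b] ∈ S) = ∅ :=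
    Finset.filter_eq_empty_iff.mpr (fun b _ ha => h (mem_of_prefix hF ⟨[b], rfl⟩ ha))
  rw [rc, he]; simp

lemma ec_sum_R : ec S v = ∑ b : A, lc S (v ++ [b]) := by
  have key : (Finset.univ.filter (fun p : A × A => p.1 :: (v ++ [p.2]) ∈ S)).card
      = ∑ b : A, (Finset.univ.filter (fun a => a :: (v ++ [b]) ∈ S)).card := by
    rw [Finset.card_eq_sum_card_fiberwise (f := Prod.snd) (t := Finset.univ) (fun x _ => mem_univ _)]
    apply Finset.sum_congr rfl
    intro b _
    apply Finset.card_bij (fun p _ => p.1)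
    · intro p hp; simp at hp ⊢; rw [← hp.2]; exact hp.1
    · intro p hp q hq h
      simp at hp hq
      exact Prod.ext h (hp.2.trans hq.2.symm)
    · intro a ha; simp at ha; exact ⟨(a, b), by simp [ha], rfl⟩
  rw [ec, key]
  push_cast [lc]
  rfl

lemma ec_sum_L : ec S v = ∑ a : A, rc S (a :: v) := by
  have key : (Finset.univ.filter (fun p : A × A => p.1 :: (v ++ [p.2]) ∈ S)).card
      = ∑ a : A, (Finset.univ.filter (fun b => (a :: v) ++ [b] ∈ S)).card := by
    rw [Finset.card_eq_sum_card_fiberwise (f := Prod.fst) (t := Finset.univ) (fun x _ => mem_univ _)]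
    apply Finset.sum_congr rfl
    intro a _
    apply Finset.card_bij (fun p _ => p.2)
    · intro p hp; simp at hp ⊢; rw [← hp.2]; exact hp.1
    · intro p hp q hq h
      simp at hp hq
      exact Prod.ext (hp.2.trans hq.2.symm) h
    · intro b hb; simp at hb; exact ⟨(a, b), by simp [hb], rfl⟩
  rw [ec, key]
  push_cast [rc]
  rfl

lemma sum_letter_R (hN : Neutral S) (hv : v ∈ S) (hv0 : v ≠ []) :
    ∑ b ∈ Finset.univ.filter (fun b => v ++ [b] ∈ S), (lc S (v ++ [b]) - 1) = lc S v - 1 := by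
  have h1 : ∑ b ∈ Finset.univ.filter (fun b => v ++ [b] ∈ S), lc S (v ++ [b])
      = ∑ b : A, lc S (v ++ [b]) := by
    apply Finset.sum_subset (Finset.subset_univ _)
    intro b _ hb
    simp at hb
    exact lc_zero hN.1 hb
  rw [Finset.sum_sub_distrib, h1, ← ec_sum_R, Finset.sum_const, neutral_ec hN hv hv0, rc]
  push_cast
  ring

lemma sum_letter_L (hN : Neutral S) (hv : v ∈ S) (hv0 : v ≠ []) :
    ∑ a ∈ Finset.univ.filter (fun a => a :: v ∈ S), (rc S (a :: v) - 1) = rc S v - 1 := by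
  have h1 : ∑ a ∈ Finset.univ.filter (fun a => a :: v ∈ S), rc S (a :: v)
      = ∑ a : A, rc S (a :: v) := by
    apply Finset.sum_subset (Finset.subset_univ _)
    intro a _ ha
    simp at ha
    exact rc_zero hN.1 ha
  rw [Finset.sum_sub_distrib, h1, ← ec_sum_L, Finset.sum_const, neutral_ec hN hv hv0, lc]
  push_cast
  ring

end util

variable {A : Type*}
section codes
variable {S Y X : Set (List A)}

lemma maxPrefix_cases (hY : MaxPrefixCode S Y) {w : List A} (hw : w ∈ S) (hw0 : w ≠ []) :
    w ∈ Y ∨ ∃ y ∈ Y, (y <+: w ∧ y ≠ w) ∨ (w <+: y ∧ w ≠ y) := by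
  by_cases hwY : w ∈ Y
  · exact Or.inl hwY
  by_contra hcon
  push_neg at hcon
  obtain ⟨-, hcon⟩ := hcon
  have hcode : PrefixCode (Y ∪ {w}) := by
    constructor
    · rintro (h | h)
      · exact hY.2.1.1 h
      · exact hw0 (by simpa using h)
    · rintro u (hu | hu) v (hv | hv) hpre
      · exact hY.2.1.2 u hu v hv hpre
      · simp only [Set.mem_singleton_iff] at hv; subst hv
        by_contra hne
        exact hne ((hcon u hu).1 hpre)
      · simp only [Set.mem_singleton_iff] at hu; subst hu
        by_contra hne
        exact hne ((hcon v hv).2 hpre)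
      · simp only [Set.mem_singleton_iff] at hu hv; rw [hu, hv]
  have := hY.2.2 (Y ∪ {w}) hcode
    (Set.union_subset hY.1 (by simpa using hw)) Set.subset_union_left
  exact hwY (this ▸ Set.mem_union_right _ rfl : w ∈ Y)

lemma maxSuffix_cases (hX : MaxSuffixCode S X) {w : List A} (hw : w ∈ S) (hw0 : w ≠ []) :
    w ∈ X ∨ ∃ x ∈ X, (x <:+ w ∧ x ≠ w) ∨ (w <:+ x ∧ w ≠ x) := by
  by_cases hwX : w ∈ X
  · exact Or.inl hwX
  by_contra hcon
  push_neg at hcon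
  obtain ⟨-, hcon⟩ := hcon
  have hcode : SuffixCode (X ∪ {w}) := by
    constructor
    · rintro (h | h)
      · exact hX.2.1.1 h
      · exact hw0 (by simpa using h)
    · rintro u (hu | hu) v (hv | hv) hpre
      · exact hX.2.1.2 u hu v hv hpre
      · simp only [Set.mem_singleton_iff] at hv; subst hv
        by_contra hne
        exact hne ((hcon u hu).1 hpre)
      · simp only [Set.mem_singleton_iff] at hu; subst hu
        by_contra hne
        exact hne ((hcon v hv).2 hpre)
      · simp only [Set.mem_singleton_iff] at hu hv; rw [hu, hv]
  have := hX.2.2 (X ∪ {w}) hcode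
    (Set.union_subset hX.1 (by simpa using hw)) Set.subset_union_left
  exact hwX (this ▸ Set.mem_union_right _ rfl : w ∈ X)

end codes

namespace Red
variable {A : Type*} {S Y X : Set (List A)}

lemma cons_suffix_of_proper {u z : List A} (h : u <:+ z) (hne : u ≠ z) :
    ∃ c : A, (c :: u) <:+ z := by
  obtain ⟨t, rfl⟩ := h
  have ht : t ≠ [] := by rintro rfl; simp at hne
  refine ⟨t.getLast ht, t.dropLast, ?_⟩
  rw [show (t.getLast ht :: u) = [t.getLast ht] ++ u from rfl, ← List.append_assoc,
    List.dropLast_append_getLast ht]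

lemma snoc_prefix_of_proper {u z : List A} (h : u <+: z) (hne : u ≠ z) :
    ∃ c : A, (u ++ [c]) <+: z := by
  obtain ⟨t, rfl⟩ := h
  have ht : t ≠ [] := by rintro rfl; simp at hne
  obtain ⟨c, t', rfl⟩ := List.exists_cons_of_ne_nil ht
  exact ⟨c, t', by simp⟩

lemma prefix_reduction (hF : Factorial S) (hY : MaxPrefixCode S Y)
    {u : List A} (hu0 : u ≠ [])
    (hmax : ∀ y ∈ Y, y.length ≤ u.length + 1)
    (hb0 : ∃ b : A, u ++ [b] ∈ Y) :
    u ∈ S ∧ u ∉ Y ∧ (∀ b : A, u ++ [b] ∈ S → u ++ [b] ∈ Y) ∧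
      MaxPrefixCode S ((Y \ {y | ∃ b : A, y = u ++ [b]}) ∪ {u}) := by
  obtain ⟨b0, hb0⟩ := hb0
  set B : Set (List A) := {y | ∃ b : A, y = u ++ [b]} with hB
  have hupre : u <+: u ++ [b0] := ⟨[b0], rfl⟩
  have huS : u ∈ S := mem_of_prefix hF hupre (hY.1 hb0)
  have huY : u ∉ Y := by
    intro h
    have := hY.2.1.2 u h _ hb0 hupre
    simpa using this.symm
  have hall : ∀ b : A, u ++ [b] ∈ S → u ++ [b] ∈ Y := by
    intro b hbS
    rcases maxPrefix_cases hY hbS (by simp) with h | ⟨y, hy, ⟨hpre, hne⟩ | ⟨hpre, hne⟩⟩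
    · exact h
    · -- y proper prefix of u ++ [b]
      have hylen : y.length ≤ u.length := by
        have h1 := hpre.length_le
        simp only [List.length_append, List.length_singleton] at h1
        rcases Nat.lt_or_ge y.length (u.length + 1) with h2 | h2
        · omega
        · exact absurd (hpre.eq_of_length (by simp; omega)) hne
      have hyu : y <+: u := List.prefix_of_prefix_length_le hpre ⟨[b], rfl⟩ hylen
      have := hY.2.1.2 y hy _ hb0 (hyu.trans hupre)
      subst this
      simp at hylen
    · -- u ++ [b] proper prefix of y
      have h1 := hpre.length_le
      have h2 := hmax y hy
      simp only [List.length_append, List.length_singleton] at h1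
      exact absurd (hpre.eq_of_length (by simp; omega)) hne
  refine ⟨huS, huY, hall, ?_, ?_, ?_⟩
  · -- subset of S
    exact Set.union_subset (fun z hz => hY.1 hz.1) (by simpa using huS)
  · -- prefix code
    constructor
    · rintro (⟨h, -⟩ | h)
      · exact hY.2.1.1 h
      · exact hu0 (by simpa using h)
    · rintro z (⟨hzY, hzB⟩ | hz) z' (⟨hz'Y, hz'B⟩ | hz') hpre
      · exact hY.2.1.2 z hzY z' hz'Y hpre
      · -- z ∈ Y \ B, z' = u
        simp only [Set.mem_singleton_iff] at hz'; subst hz'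
        have := hY.2.1.2 z hzY _ hb0 (hpre.trans hupre)
        subst this
        exfalso
        have := hpre.length_le
        simp at this
      · -- z = u, z' ∈ Y \ B
        simp only [Set.mem_singleton_iff] at hz; subst hz
        by_contra hne
        obtain ⟨c, hc⟩ := snoc_prefix_of_proper hpre hne
        have hcS : z ++ [c] ∈ S := mem_of_prefix hF hc (hY.1 hz'Y)
        have hcY := hall c hcS
        have := hY.2.1.2 _ hcY _ hz'Y hc
        exact hz'B ⟨c, this.symm⟩
      · simp only [Set.mem_singleton_iff] at hz hz'; rw [hz, hz']
  · -- maximality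
    intro Z hZ hZS hsub
    refine Set.Subset.antisymm hsub (fun z hzZ => ?_)
    have hzS : z ∈ S := hZS hzZ
    have hz0 : z ≠ [] := fun h => hZ.1 (h ▸ hzZ)
    have huZ : u ∈ Z := hsub (Set.mem_union_right _ rfl)
    rcases maxPrefix_cases hY hzS hz0 with hzY | ⟨y, hy, ⟨hpre, hne⟩ | ⟨hpre, hne⟩⟩
    · by_cases hzB : z ∈ B
      · obtain ⟨c, rfl⟩ := hzB
        have := hZ.2 u huZ _ hzZ ⟨[c], rfl⟩
        simpa using this.symm
      · exact Set.mem_union_left _ ⟨hzY, hzB⟩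
    · -- y proper prefix of z
      exfalso
      by_cases hyB : y ∈ B
      · obtain ⟨c, rfl⟩ := hyB
        have huz : u <+: z := (List.prefix_append u [c]).trans hpre
        have := hZ.2 u huZ z hzZ huz
        subst this
        have := hpre.length_le
        simp at this
      · have hyZ : y ∈ Z := hsub (Set.mem_union_left _ ⟨hy, hyB⟩)
        exact hne (hZ.2 y hyZ z hzZ hpre)
    · -- z proper prefix of y
      by_cases hyB : y ∈ B
      · obtain ⟨c, rfl⟩ := hyB
        have hzlen : z.length ≤ u.length := by
          have h1 := hpre.length_le
          simp only [List.length_append, List.length_singleton] at h1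
          rcases Nat.lt_or_ge z.length (u.length + 1) with h2 | h2
          · omega
          · exact absurd (hpre.eq_of_length (by simp; omega)) hne
        have hzu : z <+: u := List.prefix_of_prefix_length_le hpre ⟨[c], rfl⟩ hzlen
        have := hZ.2 z hzZ u huZ hzu
        subst this
        exact Set.mem_union_right _ rfl
      · exfalso
        have hyZ : y ∈ Z := hsub (Set.mem_union_left _ ⟨hy, hyB⟩)
        exact hne (hZ.2 z hzZ y hyZ hpre)

lemma suffix_reduction (hF : Factorial S) (hX : MaxSuffixCode S X)
    {u : List A} (hu0 : u ≠ [])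
    (hmax : ∀ x ∈ X, x.length ≤ u.length + 1)
    (hb0 : ∃ b : A, b :: u ∈ X) :
    u ∈ S ∧ u ∉ X ∧ (∀ b : A, b :: u ∈ S → b :: u ∈ X) ∧
      MaxSuffixCode S ((X \ {x | ∃ b : A, x = b :: u}) ∪ {u}) := by
  obtain ⟨b0, hb0⟩ := hb0
  set B : Set (List A) := {x | ∃ b : A, x = b :: u} with hB
  have hupre : u <:+ b0 :: u := ⟨[b0], rfl⟩
  have huS : u ∈ S := mem_of_suffix hF hupre (hX.1 hb0)
  have huX : u ∉ X := by
    intro h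
    have := hX.2.1.2 u h _ hb0 hupre
    simpa using this.symm
  have hall : ∀ b : A, b :: u ∈ S → b :: u ∈ X := by
    intro b hbS
    rcases maxSuffix_cases hX hbS (by simp) with h | ⟨y, hy, ⟨hpre, hne⟩ | ⟨hpre, hne⟩⟩
    · exact h
    · have hylen : y.length ≤ u.length := by
        have h1 := hpre.length_le
        simp only [List.length_cons] at h1
        rcases Nat.lt_or_ge y.length (u.length + 1) with h2 | h2
        · omega
        · exact absurd (hpre.eq_of_length (by simp; omega)) hne
      have hyu : y <:+ u := List.suffix_of_suffix_length_le hpre ⟨[b], rfl⟩ hylen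
      have := hX.2.1.2 y hy _ hb0 (hyu.trans hupre)
      subst this
      simp at hylen
    · have h1 := hpre.length_le
      have h2 := hmax y hy
      simp only [List.length_cons] at h1
      exact absurd (hpre.eq_of_length (by simp; omega)) hne
  refine ⟨huS, huX, hall, ?_, ?_, ?_⟩
  · exact Set.union_subset (fun z hz => hX.1 hz.1) (by simpa using huS)
  · constructor
    · rintro (⟨h, -⟩ | h)
      · exact hX.2.1.1 h
      · exact hu0 (by simpa using h)
    · rintro z (⟨hzX, hzB⟩ | hz) z' (⟨hz'X, hz'B⟩ | hz') hpre
      · exact hX.2.1.2 z hzX z' hz'X hpre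
      · simp only [Set.mem_singleton_iff] at hz'; subst hz'
        have := hX.2.1.2 z hzX _ hb0 (hpre.trans hupre)
        subst this
        exfalso
        have := hpre.length_le
        simp at this
      · simp only [Set.mem_singleton_iff] at hz; subst hz
        by_contra hne
        obtain ⟨c, hc⟩ := cons_suffix_of_proper hpre hne
        have hcS : c :: z ∈ S := mem_of_suffix hF hc (hX.1 hz'X)
        have hcX := hall c hcS
        have := hX.2.1.2 _ hcX _ hz'X hc
        exact hz'B ⟨c, this.symm⟩
      · simp only [Set.mem_singleton_iff] at hz hz'; rw [hz, hz']
  · intro Z hZ hZS hsub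
    refine Set.Subset.antisymm hsub (fun z hzZ => ?_)
    have hzS : z ∈ S := hZS hzZ
    have hz0 : z ≠ [] := fun h => hZ.1 (h ▸ hzZ)
    have huZ : u ∈ Z := hsub (Set.mem_union_right _ rfl)
    rcases maxSuffix_cases hX hzS hz0 with hzX | ⟨y, hy, ⟨hpre, hne⟩ | ⟨hpre, hne⟩⟩
    · by_cases hzB : z ∈ B
      · obtain ⟨c, rfl⟩ := hzB
        have := hZ.2 u huZ _ hzZ ⟨[c], rfl⟩
        simpa using this.symm
      · exact Set.mem_union_left _ ⟨hzX, hzB⟩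
    · exfalso
      by_cases hyB : y ∈ B
      · obtain ⟨c, rfl⟩ := hyB
        have huz : u <:+ z := (List.suffix_cons c u).trans hpre
        have := hZ.2 u huZ z hzZ huz
        subst this
        have := hpre.length_le
        simp at this
      · have hyZ : y ∈ Z := hsub (Set.mem_union_left _ ⟨hy, hyB⟩)
        exact hne (hZ.2 y hyZ z hzZ hpre)
    · by_cases hyB : y ∈ B
      · obtain ⟨c, rfl⟩ := hyB
        have hzlen : z.length ≤ u.length := by
          have h1 := hpre.length_le
          simp only [List.length_cons] at h1
          rcases Nat.lt_or_ge z.length (u.length + 1) with h2 | h2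
          · omega
          · exact absurd (hpre.eq_of_length (by simp; omega)) hne
        have hzu : z <:+ u := List.suffix_of_suffix_length_le hpre ⟨[c], rfl⟩ hzlen
        have := hZ.2 z hzZ u huZ hzu
        subst this
        exact Set.mem_union_right _ rfl
      · exfalso
        have hyZ : y ∈ Z := hsub (Set.mem_union_left _ ⟨hy, hyB⟩)
        exact hne (hZ.2 z hzZ y hyZ hpre)

end Red

section letters
variable {A : Type*} {S Y X : Set (List A)}

def L1 (S : Set (List A)) : Set (List A) := {w | w ∈ S ∧ w.length = 1}

lemma L1_prefixCode : PrefixCode (L1 S) := by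
  constructor
  · rintro ⟨-, h⟩; simp at h
  · rintro u ⟨-, hu⟩ v ⟨-, hv⟩ hpre
    exact hpre.eq_of_length (hu.trans hv.symm)

lemma L1_suffixCode : SuffixCode (L1 S) := by
  constructor
  · rintro ⟨-, h⟩; simp at h
  · rintro u ⟨-, hu⟩ v ⟨-, hv⟩ hpre
    exact hpre.eq_of_length (hu.trans hv.symm)

lemma eq_L1_of_short_prefix (hY : MaxPrefixCode S Y) (h : ∀ y ∈ Y, y.length ≤ 1) :
    Y = L1 S := by
  apply hY.2.2 (L1 S) L1_prefixCode (fun w hw => hw.1)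
  intro y hy
  refine ⟨hY.1 hy, ?_⟩
  have h1 := h y hy
  have h2 : y ≠ [] := fun hh => hY.2.1.1 (hh ▸ hy)
  have := List.length_pos_iff.mpr h2
  omega

lemma eq_L1_of_short_suffix (hX : MaxSuffixCode S X) (h : ∀ x ∈ X, x.length ≤ 1) :
    X = L1 S := by
  apply hX.2.2 (L1 S) L1_suffixCode (fun w hw => hw.1)
  intro y hy
  refine ⟨hX.1 hy, ?_⟩
  have h1 := h y hy
  have h2 : y ≠ [] := fun hh => hX.2.1.1 (hh ▸ hy)
  have := List.length_pos_iff.mpr h2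
  omega

end letters
end Paper

namespace Paper
open scoped Classical
open Finset Red

section steps
variable {A : Type*} {S : Set (List A)}

lemma finset_prefix_step (hF : Factorial S) {Y : Finset (List A)} (hY : MaxPrefixCode S ↑Y)
    (hbig : ∃ y ∈ Y, 2 ≤ y.length) :
    ∃ (u : List A) (Y' : Finset (List A)),
      u ≠ [] ∧ u ∈ S ∧ u ∉ Y ∧ (∀ b : A, u ++ [b] ∈ S → u ++ [b] ∈ Y) ∧
      MaxPrefixCode S ↑Y' ∧ (∑ y ∈ Y', y.length) < (∑ y ∈ Y, y.length) ∧
      (↑Y' : Set (List A))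
        = ((↑Y : Set (List A)) \ {y | ∃ b : A, y = u ++ [b]}) ∪ {u} := by
  obtain ⟨y₀, hy₀Y, hy₀len⟩ := hbig
  obtain ⟨y₁, hy₁Y, hy₁max⟩ := Y.exists_max_image List.length ⟨y₀, hy₀Y⟩
  have h2 : 2 ≤ y₁.length := le_trans hy₀len (hy₁max y₀ hy₀Y)
  have hy₁ne : y₁ ≠ [] := by rintro rfl; simp at h2
  set u := y₁.dropLast with hu
  have hulen : u.length = y₁.length - 1 := List.length_dropLast (xs := y₁)
  have hu0 : u ≠ [] := by
    intro h
    rw [← List.length_eq_zero_iff] at h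
    omega
  have hy₁eq : u ++ [y₁.getLast hy₁ne] = y₁ := List.dropLast_append_getLast hy₁ne
  have hmax : ∀ y ∈ (↑Y : Set (List A)), y.length ≤ u.length + 1 := by
    intro y hy
    have := hy₁max y hy
    omega
  obtain ⟨huS, huY, hall, hY'⟩ := prefix_reduction hF hY hu0 hmax
    ⟨y₁.getLast hy₁ne, by rw [hy₁eq]; exact hy₁Y⟩
  have huYf : u ∉ Y := huY
  have hco : (↑(Y.filter (fun y => ¬∃ b : A, y = u ++ [b]) ∪ {u}) : Set (List A))
      = ((↑Y : Set (List A)) \ {y | ∃ b : A, y = u ++ [b]}) ∪ {u} := by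
    ext z
    simp [Set.mem_diff]
  refine ⟨u, Y.filter (fun y => ¬∃ b : A, y = u ++ [b]) ∪ {u},
    hu0, huS, huYf, fun b hb => hall b hb, ?_, ?_, hco⟩
  · rw [hco]
    exact hY'
  · set Yf := Y.filter (fun y => ¬∃ b : A, y = u ++ [b]) with hYf
    set Bf := Y.filter (fun y => ∃ b : A, y = u ++ [b]) with hBf
    have hdisj : Disjoint Bf Yf := Finset.disjoint_filter_filter_not Y Y _
    have hsplit : Bf ∪ Yf = Y := Finset.filter_union_filter_not_eq _ Y
    have huYf' : u ∉ Yf := fun h => huYf (Finset.mem_of_mem_filter u h)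
    have h1 : (∑ y ∈ Yf ∪ {u}, y.length) = (∑ y ∈ Yf, y.length) + u.length := by
      rw [Finset.union_comm, ← Finset.insert_eq, Finset.sum_insert huYf']
      ring
    have h2' : (∑ y ∈ Y, y.length) = (∑ y ∈ Bf, y.length) + ∑ y ∈ Yf, y.length := by
      rw [← hsplit, Finset.sum_union hdisj]
    have hy₁Bf : y₁ ∈ Bf := by
      rw [hBf, Finset.mem_filter]
      exact ⟨hy₁Y, ⟨y₁.getLast hy₁ne, hy₁eq.symm⟩⟩
    have h3 : y₁.length ≤ ∑ y ∈ Bf, y.length :=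
      Finset.single_le_sum (fun y _ => Nat.zero_le _) hy₁Bf
    omega

lemma finset_suffix_step (hF : Factorial S) {X : Finset (List A)} (hX : MaxSuffixCode S ↑X)
    (hbig : ∃ x ∈ X, 2 ≤ x.length) :
    ∃ (u : List A) (X' : Finset (List A)),
      u ≠ [] ∧ u ∈ S ∧ u ∉ X ∧ (∀ b : A, b :: u ∈ S → b :: u ∈ X) ∧
      MaxSuffixCode S ↑X' ∧ (∑ x ∈ X', x.length) < (∑ x ∈ X, x.length) ∧
      (↑X' : Set (List A))
        = ((↑X : Set (List A)) \ {x | ∃ b : A, x = b :: u}) ∪ {u} := by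
  obtain ⟨y₀, hy₀Y, hy₀len⟩ := hbig
  obtain ⟨y₁, hy₁Y, hy₁max⟩ := X.exists_max_image List.length ⟨y₀, hy₀Y⟩
  have h2 : 2 ≤ y₁.length := le_trans hy₀len (hy₁max y₀ hy₀Y)
  have hy₁ne : y₁ ≠ [] := by rintro rfl; simp at h2
  set u := y₁.tail with hu
  have hulen : u.length = y₁.length - 1 := List.length_tail (l := y₁)
  have hu0 : u ≠ [] := by
    intro h
    rw [← List.length_eq_zero_iff] at h
    omega
  have hy₁eq : y₁.head hy₁ne :: u = y₁ := List.cons_head_tail hy₁ne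
  have hmax : ∀ y ∈ (↑X : Set (List A)), y.length ≤ u.length + 1 := by
    intro y hy
    have := hy₁max y hy
    omega
  obtain ⟨huS, huY, hall, hY'⟩ := suffix_reduction hF hX hu0 hmax
    ⟨y₁.head hy₁ne, by rw [hy₁eq]; exact hy₁Y⟩
  have huYf : u ∉ X := huY
  have hco : (↑(X.filter (fun x => ¬∃ b : A, x = b :: u) ∪ {u}) : Set (List A))
      = ((↑X : Set (List A)) \ {x | ∃ b : A, x = b :: u}) ∪ {u} := by
    ext z
    simp [Set.mem_diff]
  refine ⟨u, X.filter (fun x => ¬∃ b : A, x = b :: u) ∪ {u},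
    hu0, huS, huYf, fun b hb => hall b hb, ?_, ?_, hco⟩
  · rw [hco]
    exact hY'
  · set Yf := X.filter (fun x => ¬∃ b : A, x = b :: u) with hYf
    set Bf := X.filter (fun x => ∃ b : A, x = b :: u) with hBf
    have hdisj : Disjoint Bf Yf := Finset.disjoint_filter_filter_not X X _
    have hsplit : Bf ∪ Yf = X := Finset.filter_union_filter_not_eq _ X
    have huYf' : u ∉ Yf := fun h => huYf (Finset.mem_of_mem_filter u h)
    have h1 : (∑ y ∈ Yf ∪ {u}, y.length) = (∑ y ∈ Yf, y.length) + u.length := by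
      rw [Finset.union_comm, ← Finset.insert_eq, Finset.sum_insert huYf']
      ring
    have h2' : (∑ y ∈ X, y.length) = (∑ y ∈ Bf, y.length) + ∑ y ∈ Yf, y.length := by
      rw [← hsplit, Finset.sum_union hdisj]
    have hy₁Bf : y₁ ∈ Bf := by
      rw [hBf, Finset.mem_filter]
      exact ⟨hy₁Y, ⟨y₁.head hy₁ne, hy₁eq.symm⟩⟩
    have h3 : y₁.length ≤ ∑ y ∈ Bf, y.length :=
      Finset.single_le_sum (fun y _ => Nat.zero_le _) hy₁Bf
    omega

end steps
end Paper

namespace Paper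
open scoped Classical
open Finset Red

section key
variable {A : Type*} [Fintype A] {S : Set (List A)}

lemma keyR_base (hN : Neutral S) {Y : Finset (List A)}
    (hY : MaxPrefixCode S ↑Y) (hshort : ∀ y ∈ Y, y.length ≤ 1)
    {v : List A} (hv : v ∈ S) (hv0 : v ≠ []) :
    ∑ y ∈ Y.filter (fun y => v ++ y ∈ S), (lc S (v ++ y) - 1) = lc S v - 1 := by
  have hset : (↑Y : Set (List A)) = L1 S :=
    eq_L1_of_short_prefix hY (fun y hy => hshort y hy)
  have himg : Y.filter (fun y => v ++ y ∈ S)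
      = (Finset.univ.filter (fun b : A => v ++ [b] ∈ S)).image (fun b => [b]) := by
    ext y
    simp only [Finset.mem_filter, Finset.mem_image, Finset.mem_univ, true_and]
    constructor
    · rintro ⟨hyY, hyS⟩
      have hy1 : y ∈ L1 S := hset ▸ (Finset.mem_coe.mpr hyY)
      obtain ⟨b, rfl⟩ := List.length_eq_one_iff.mp hy1.2
      exact ⟨b, hyS, rfl⟩
    · rintro ⟨b, hbS, rfl⟩
      have hbY : [b] ∈ Y := by
        rw [← Finset.mem_coe, hset]
        exact ⟨mem_of_suffix hN.1 ⟨v, rfl⟩ hbS, rfl⟩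
      exact ⟨hbY, hbS⟩
  rw [himg, Finset.sum_image (by intro a _ b _ h; simpa using h)]
  exact sum_letter_R hN hv hv0

lemma keyR (hN : Neutral S) :
    ∀ n : ℕ, ∀ Y : Finset (List A), (∑ y ∈ Y, y.length) ≤ n →
      MaxPrefixCode S ↑Y → ∀ v : List A, v ∈ S → v ≠ [] →
      ∑ y ∈ Y.filter (fun y => v ++ y ∈ S), (lc S (v ++ y) - 1) = lc S v - 1 := by
  intro n
  induction n with
  | zero =>
    intro Y hlen hY v hv hv0
    refine keyR_base hN hY (fun y hy => ?_) hv hv0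
    have := Finset.single_le_sum (f := List.length) (fun _ _ => Nat.zero_le _) hy
    omega
  | succ n ih =>
    intro Y hlen hY v hv hv0
    by_cases hbig : ∃ y ∈ Y, 2 ≤ y.length
    · obtain ⟨u, Y', hu0, huS, huY, hall, hY', hlt, hco⟩ := finset_prefix_step hN.1 hY hbig
      set Yf := Y.filter (fun y => ¬∃ b : A, y = u ++ [b]) with hYf
      set Bf := Y.filter (fun y => ∃ b : A, y = u ++ [b]) with hBf
      have hY'eq : Y' = Yf ∪ {u} := by
        apply Finset.coe_injective
        rw [hco]
        ext z
        simp [hYf, Set.mem_diff]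
      rw [hY'eq] at hY' hlt
      have hsum' := ih (Yf ∪ {u}) (by omega) hY' v hv hv0
      have huYf : u ∉ Yf := fun h => huY (Finset.mem_of_mem_filter u h)
      have hdisj : Disjoint Bf Yf := Finset.disjoint_filter_filter_not Y Y _
      have hsplit : Bf ∪ Yf = Y := Finset.filter_union_filter_not_eq _ Y
      -- split LHS
      have e1 : Y.filter (fun y => v ++ y ∈ S)
          = Bf.filter (fun y => v ++ y ∈ S) ∪ Yf.filter (fun y => v ++ y ∈ S) := by
        rw [← Finset.filter_union, hsplit]
      have e2 : (Yf ∪ {u}).filter (fun y => v ++ y ∈ S)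
          = Yf.filter (fun y => v ++ y ∈ S) ∪ ({u} : Finset (List A)).filter
              (fun y => v ++ y ∈ S) := Finset.filter_union _ _ _
      have hd1 : Disjoint (Bf.filter (fun y => v ++ y ∈ S))
          (Yf.filter (fun y => v ++ y ∈ S)) :=
        (hdisj.mono (Finset.filter_subset _ _) (Finset.filter_subset _ _))
      have hd2 : Disjoint (Yf.filter (fun y => v ++ y ∈ S))
          (({u} : Finset (List A)).filter (fun y => v ++ y ∈ S)) := by
        refine Finset.disjoint_left.mpr ?_
        intro z hz1 hz2
        simp only [Finset.mem_filter, Finset.mem_singleton] at hz1 hz2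
        exact huYf (hz2.1 ▸ hz1.1)
      -- key claim: the two extra sums agree
      have hBfim : Bf.filter (fun y => v ++ y ∈ S)
          = (Finset.univ.filter (fun b : A => (v ++ u) ++ [b] ∈ S)).image
              (fun b => u ++ [b]) := by
        ext y
        simp only [hBf, Finset.mem_filter, Finset.mem_image, Finset.mem_univ, true_and]
        constructor
        · rintro ⟨⟨hyY, b, rfl⟩, hyS⟩
          refine ⟨b, by rwa [List.append_assoc], rfl⟩
        · rintro ⟨b, hbS, rfl⟩
          have hub : u ++ [b] ∈ S :=
            mem_of_suffix hN.1 ⟨v, (List.append_assoc v u [b]).symm⟩ hbS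
          exact ⟨⟨hall b hub, b, rfl⟩, by rw [← List.append_assoc]; exact hbS⟩
      have hextra : ∑ y ∈ Bf.filter (fun y => v ++ y ∈ S), (lc S (v ++ y) - 1)
          = ∑ y ∈ ({u} : Finset (List A)).filter (fun y => v ++ y ∈ S),
              (lc S (v ++ y) - 1) := by
        rw [hBfim, Finset.sum_image (by intro a _ b _ h; simpa using h)]
        by_cases hvu : v ++ u ∈ S
        · have hvu0 : v ++ u ≠ [] := by simp [hu0]
          have hleft : ∑ b ∈ Finset.univ.filter (fun b : A => (v ++ u) ++ [b] ∈ S),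
              (lc S (v ++ (u ++ [b])) - 1) = lc S (v ++ u) - 1 := by
            rw [show (fun b : A => (lc S (v ++ (u ++ [b])) - 1))
                = (fun b : A => (lc S ((v ++ u) ++ [b]) - 1)) from by
                funext b; rw [List.append_assoc]]
            exact sum_letter_R hN hvu hvu0
          rw [hleft, Finset.filter_singleton, if_pos hvu, Finset.sum_singleton]
        · have h1 : Finset.univ.filter (fun b : A => (v ++ u) ++ [b] ∈ S) = ∅ :=
            Finset.filter_eq_empty_iff.mpr (fun b _ hb =>
              hvu (mem_of_prefix hN.1 ⟨[b], rfl⟩ hb))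
          rw [h1, Finset.filter_singleton, if_neg hvu]
          simp
      calc ∑ y ∈ Y.filter (fun y => v ++ y ∈ S), (lc S (v ++ y) - 1)
          = ∑ y ∈ Bf.filter (fun y => v ++ y ∈ S), (lc S (v ++ y) - 1)
            + ∑ y ∈ Yf.filter (fun y => v ++ y ∈ S), (lc S (v ++ y) - 1) := by
            rw [e1, Finset.sum_union hd1]
        _ = ∑ y ∈ Yf.filter (fun y => v ++ y ∈ S), (lc S (v ++ y) - 1)
            + ∑ y ∈ ({u} : Finset (List A)).filter (fun y => v ++ y ∈ S),
                (lc S (v ++ y) - 1) := by rw [hextra]; ring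
        _ = ∑ y ∈ (Yf ∪ {u}).filter (fun y => v ++ y ∈ S), (lc S (v ++ y) - 1) := by
            rw [e2, Finset.sum_union hd2]
        _ = lc S v - 1 := hsum'
    · push_neg at hbig
      exact keyR_base hN hY (fun y hy => by have := hbig y hy; omega) hv hv0

end key
end Paper

namespace Paper
open scoped Classical
open Finset Red

section quantities
variable {A : Type*} [Fintype A] {S : Set (List A)}

noncomputable def eC (S : Set (List A)) (X Y : Finset (List A)) (w : List A) : ℤ :=
  (((X ×ˢ Y).filter (fun p => p.1 ++ w ++ p.2 ∈ S)).card : ℤ)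

noncomputable def lC (S : Set (List A)) (X : Finset (List A)) (w : List A) : ℤ :=
  ((X.filter (fun x => x ++ w ∈ S)).card : ℤ)

noncomputable def rC (S : Set (List A)) (Y : Finset (List A)) (w : List A) : ℤ :=
  ((Y.filter (fun y => w ++ y ∈ S)).card : ℤ)

lemma eC_fiber_snd (X Y : Finset (List A)) (w : List A) :
    eC S X Y w = ∑ y ∈ Y, ((X.filter (fun x => x ++ w ++ y ∈ S)).card : ℤ) := by
  have key : ((X ×ˢ Y).filter (fun p => p.1 ++ w ++ p.2 ∈ S)).card
      = ∑ y ∈ Y, (X.filter (fun x => x ++ w ++ y ∈ S)).card := by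
    rw [Finset.card_eq_sum_card_fiberwise (f := Prod.snd) (t := Y)
      (fun p hp => (Finset.mem_product.mp (Finset.mem_of_mem_filter p hp)).2)]
    apply Finset.sum_congr rfl
    intro y hy
    apply Finset.card_bij (fun p _ => p.1)
    · intro p hp
      simp only [Finset.mem_filter, Finset.mem_product] at hp ⊢
      obtain ⟨⟨⟨h1, h2⟩, h3⟩, h4⟩ := hp
      exact ⟨h1, h4 ▸ h3⟩
    · intro p hp q hq h
      simp only [Finset.mem_filter] at hp hq
      exact Prod.ext h (hp.2.trans hq.2.symm)
    · intro x hx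
      simp only [Finset.mem_filter] at hx
      exact ⟨(x, y), by
        simp only [Finset.mem_filter, Finset.mem_product]
        exact ⟨⟨⟨hx.1, hy⟩, hx.2⟩, trivial⟩, rfl⟩
  rw [eC, key]
  push_cast
  rfl

lemma eC_fiber_fst (X Y : Finset (List A)) (w : List A) :
    eC S X Y w = ∑ x ∈ X, ((Y.filter (fun y => x ++ w ++ y ∈ S)).card : ℤ) := by
  have key : ((X ×ˢ Y).filter (fun p => p.1 ++ w ++ p.2 ∈ S)).card
      = ∑ x ∈ X, (Y.filter (fun y => x ++ w ++ y ∈ S)).card := by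
    rw [Finset.card_eq_sum_card_fiberwise (f := Prod.fst) (t := X)
      (fun p hp => (Finset.mem_product.mp (Finset.mem_of_mem_filter p hp)).1)]
    apply Finset.sum_congr rfl
    intro x hx
    apply Finset.card_bij (fun p _ => p.2)
    · intro p hp
      simp only [Finset.mem_filter, Finset.mem_product] at hp ⊢
      obtain ⟨⟨⟨h1, h2⟩, h3⟩, h4⟩ := hp
      exact ⟨h2, h4 ▸ h3⟩
    · intro p hp q hq h
      simp only [Finset.mem_filter] at hp hq
      exact Prod.ext (hp.2.trans hq.2.symm) h
    · intro y hy
      simp only [Finset.mem_filter] at hy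
      exact ⟨(x, y), by
        simp only [Finset.mem_filter, Finset.mem_product]
        exact ⟨⟨⟨hx, hy.1⟩, hy.2⟩, trivial⟩, rfl⟩
  rw [eC, key]
  push_cast
  rfl

/-- The set of one-letter words of `S`, as a finset. -/
noncomputable def X0 (S : Set (List A)) : Finset (List A) :=
  (Finset.univ.image (fun a : A => [a])).filter (fun w => w ∈ S)

lemma X0_coe : (↑(X0 S) : Set (List A)) = L1 S := by
  ext z
  simp only [X0, Finset.coe_filter, Finset.mem_image, Finset.mem_univ, true_and,
    Set.mem_setOf_eq, L1]
  constructor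
  · rintro ⟨⟨a, rfl⟩, h⟩
    exact ⟨h, rfl⟩
  · rintro ⟨h1, h2⟩
    obtain ⟨a, rfl⟩ := List.length_eq_one_iff.mp h2
    exact ⟨⟨a, rfl⟩, h1⟩

lemma singleton_list_inj : Function.Injective (fun a : A => [a]) := by
  intro a b h; simpa using h

lemma lC_X0 (hF : Factorial S) (w : List A) : lC S (X0 S) w = lc S w := by
  have him : (X0 S).filter (fun x => x ++ w ∈ S)
      = (Finset.univ.filter (fun a : A => a :: w ∈ S)).image (fun a => [a]) := by
    ext z
    simp only [X0, Finset.mem_filter, Finset.mem_image, Finset.mem_univ, true_and]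
    constructor
    · rintro ⟨⟨⟨a, rfl⟩, -⟩, h⟩
      exact ⟨a, h, rfl⟩
    · rintro ⟨a, h, rfl⟩
      exact ⟨⟨⟨a, rfl⟩, mem_of_prefix hF ⟨w, rfl⟩ h⟩, h⟩
  rw [lC, him, Finset.card_image_of_injective _ singleton_list_inj, lc]

lemma rC_X0 (hF : Factorial S) (w : List A) : rC S (X0 S) w = rc S w := by
  have him : (X0 S).filter (fun y => w ++ y ∈ S)
      = (Finset.univ.filter (fun b : A => w ++ [b] ∈ S)).image (fun b => [b]) := by
    ext z
    simp only [X0, Finset.mem_filter, Finset.mem_image, Finset.mem_univ, true_and]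
    constructor
    · rintro ⟨⟨⟨a, rfl⟩, -⟩, h⟩
      exact ⟨a, h, rfl⟩
    · rintro ⟨a, h, rfl⟩
      exact ⟨⟨⟨a, rfl⟩, mem_of_suffix hF ⟨w, rfl⟩ h⟩, h⟩
  rw [rC, him, Finset.card_image_of_injective _ singleton_list_inj, rc]

lemma eC_X0X0 (hF : Factorial S) (w : List A) : eC S (X0 S) (X0 S) w = ec S w := by
  have him : ((X0 S) ×ˢ (X0 S)).filter (fun p => p.1 ++ w ++ p.2 ∈ S)
      = (Finset.univ.filter (fun p : A × A => p.1 :: (w ++ [p.2]) ∈ S)).image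
          (fun p => ([p.1], [p.2])) := by
    ext z
    simp only [X0, Finset.mem_filter, Finset.mem_image, Finset.mem_univ, true_and,
      Finset.mem_product]
    constructor
    · rintro ⟨⟨⟨⟨a, ha⟩, -⟩, ⟨⟨b, hb⟩, -⟩⟩, h⟩
      refine ⟨(a, b), ?_, ?_⟩
      · rw [← ha, ← hb] at h
        simpa using h
      · exact Prod.ext ha hb
    · rintro ⟨⟨a, b⟩, h, rfl⟩
      have hword : [a] ++ w ++ [b] ∈ S := by simpa using h
      refine ⟨⟨⟨⟨a, rfl⟩, ?_⟩, ⟨b, rfl⟩, ?_⟩, hword⟩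
      · exact mem_of_prefix hF ⟨w ++ [b], by simp⟩ hword
      · exact mem_of_suffix hF ⟨[a] ++ w, by simp⟩ hword
  have hinj : Function.Injective (fun p : A × A => ([p.1], [p.2])) := by
    intro p q h
    simp only [Prod.mk.injEq, List.cons.injEq] at h
    exact Prod.ext h.1.1 h.2.1
  rw [eC, him, Finset.card_image_of_injective _ hinj, ec]

end quantities
end Paper

namespace Paper
open scoped Classical
open Finset Red

section main
variable {A : Type*} [Fintype A] {S : Set (List A)}

lemma eC_union_fst {s t : Finset (List A)} (h : Disjoint s t)
    (Y : Finset (List A)) (w : List A) :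
    eC S (s ∪ t) Y w = eC S s Y w + eC S t Y w := by
  rw [eC_fiber_snd, eC_fiber_snd, eC_fiber_snd, ← Finset.sum_add_distrib]
  apply Finset.sum_congr rfl
  intro y _
  rw [Finset.filter_union, Finset.card_union_of_disjoint
    (h.mono (Finset.filter_subset _ _) (Finset.filter_subset _ _))]
  push_cast
  ring

lemma eC_union_snd {s t : Finset (List A)} (h : Disjoint s t)
    (X : Finset (List A)) (w : List A) :
    eC S X (s ∪ t) w = eC S X s w + eC S X t w := by
  rw [eC_fiber_fst, eC_fiber_fst, eC_fiber_fst, ← Finset.sum_add_distrib]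
  apply Finset.sum_congr rfl
  intro x _
  rw [Finset.filter_union, Finset.card_union_of_disjoint
    (h.mono (Finset.filter_subset _ _) (Finset.filter_subset _ _))]
  push_cast
  ring

lemma lC_union {s t : Finset (List A)} (h : Disjoint s t) (w : List A) :
    lC S (s ∪ t) w = lC S s w + lC S t w := by
  rw [lC, lC, lC, Finset.filter_union, Finset.card_union_of_disjoint
    (h.mono (Finset.filter_subset _ _) (Finset.filter_subset _ _))]
  push_cast
  ring

lemma rC_union {s t : Finset (List A)} (h : Disjoint s t) (w : List A) :
    rC S (s ∪ t) w = rC S s w + rC S t w := by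
  rw [rC, rC, rC, Finset.filter_union, Finset.card_union_of_disjoint
    (h.mono (Finset.filter_subset _ _) (Finset.filter_subset _ _))]
  push_cast
  ring

lemma lemA (hN : Neutral S) {Y : Finset (List A)} (hYc : MaxPrefixCode S ↑Y) (w : List A) :
    ∀ n : ℕ, ∀ X : Finset (List A), (∑ x ∈ X, x.length) ≤ n → MaxSuffixCode S ↑X →
      eC S X Y w - lC S X w = eC S (X0 S) Y w - lC S (X0 S) w := by
  intro n
  induction n with
  | zero =>
    intro X hlen hX
    have hshort : ∀ x ∈ (↑X : Set (List A)), x.length ≤ 1 := by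
      intro x hx
      have := Finset.single_le_sum (f := List.length) (fun _ _ => Nat.zero_le _) hx
      omega
    have : X = X0 S := Finset.coe_injective (by rw [eq_L1_of_short_suffix hX hshort, X0_coe])
    rw [this]
  | succ n ih =>
    intro X hlen hX
    by_cases hbig : ∃ x ∈ X, 2 ≤ x.length
    · obtain ⟨u, X', hu0, huS, huX, hall, hX', hlt, hco⟩ := finset_suffix_step hN.1 hX hbig
      set Xf := X.filter (fun x => ¬∃ b : A, x = b :: u) with hXf
      set Bf := X.filter (fun x => ∃ b : A, x = b :: u) with hBf
      have hX'eq : X' = Xf ∪ {u} := by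
        apply Finset.coe_injective
        rw [hco]
        ext z
        simp [hXf, Set.mem_diff]
      rw [hX'eq] at hX' hlt
      have hih := ih (Xf ∪ {u}) (by omega) hX'
      have hdisj : Disjoint Bf Xf := Finset.disjoint_filter_filter_not X X _
      have hsplit : Bf ∪ Xf = X := Finset.filter_union_filter_not_eq _ X
      have huXf : u ∉ Xf := fun h => huX (Finset.mem_of_mem_filter u h)
      have hdisju : Disjoint Xf ({u} : Finset (List A)) := by
        simp [Finset.disjoint_singleton_right, huXf]
      -- eC over Bf
      have hBfim : ∀ y : List A, Bf.filter (fun x => x ++ w ++ y ∈ S)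
          = (Finset.univ.filter (fun b : A => b :: (u ++ w ++ y) ∈ S)).image
              (fun b => b :: u) := by
        intro y
        ext z
        simp only [hBf, Finset.mem_filter, Finset.mem_image, Finset.mem_univ, true_and]
        constructor
        · rintro ⟨⟨hzX, b, rfl⟩, hzS⟩
          exact ⟨b, by simpa using hzS, rfl⟩
        · rintro ⟨b, hbS, rfl⟩
          have hbu : b :: u ∈ S := mem_of_prefix hN.1 ⟨w ++ y, by simp⟩ hbS
          exact ⟨⟨hall b hbu, b, rfl⟩, by simpa using hbS⟩
      have heBf : eC S Bf Y w = ∑ y ∈ Y, lc S (u ++ w ++ y) := by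
        rw [eC_fiber_snd]
        apply Finset.sum_congr rfl
        intro y _
        rw [hBfim y, Finset.card_image_of_injective _ (fun a b h => by simpa using h), lc]
      have heu : eC S ({u} : Finset (List A)) Y w
          = ∑ y ∈ Y, (if u ++ w ++ y ∈ S then (1 : ℤ) else 0) := by
        rw [eC_fiber_snd]
        apply Finset.sum_congr rfl
        intro y _
        rw [Finset.filter_singleton]
        split <;> simp
      -- the key difference identity
      have hkey : eC S Bf Y w - eC S ({u} : Finset (List A)) Y w
          = lC S Bf w - lC S ({u} : Finset (List A)) w := by
        have hlBf : lC S Bf w = lc S (u ++ w) := by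
          have him : Bf.filter (fun x => x ++ w ∈ S)
              = (Finset.univ.filter (fun b : A => b :: (u ++ w) ∈ S)).image
                  (fun b => b :: u) := by
            ext z
            simp only [hBf, Finset.mem_filter, Finset.mem_image, Finset.mem_univ, true_and]
            constructor
            · rintro ⟨⟨hzX, b, rfl⟩, hzS⟩
              exact ⟨b, by simpa using hzS, rfl⟩
            · rintro ⟨b, hbS, rfl⟩
              have hbu : b :: u ∈ S := mem_of_prefix hN.1 ⟨w, by simp⟩ hbS
              exact ⟨⟨hall b hbu, b, rfl⟩, by simpa using hbS⟩
          rw [lC, him, Finset.card_image_of_injective _ (fun a b h => by simpa using h), lc]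
        have hlu : lC S ({u} : Finset (List A)) w
            = if u ++ w ∈ S then (1 : ℤ) else 0 := by
          rw [lC, Finset.filter_singleton]
          split <;> simp
        rw [heBf, heu, ← Finset.sum_sub_distrib, hlBf, hlu]
        have hrestrict : ∑ y ∈ Y, (lc S (u ++ w ++ y) - if u ++ w ++ y ∈ S then (1:ℤ) else 0)
            = ∑ y ∈ Y.filter (fun y => (u ++ w) ++ y ∈ S), (lc S ((u ++ w) ++ y) - 1) := by
          rw [← Finset.sum_filter_add_sum_filter_not Y (fun y => (u ++ w) ++ y ∈ S)]
          have h2 : ∑ y ∈ Y.filter (fun y => ¬(u ++ w) ++ y ∈ S),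
              (lc S (u ++ w ++ y) - if u ++ w ++ y ∈ S then (1:ℤ) else 0) = 0 := by
            apply Finset.sum_eq_zero
            intro y hy
            have hy' := (Finset.mem_filter.mp hy).2
            rw [lc_zero hN.1 hy', if_neg hy']
            ring
          rw [h2, add_zero]
          apply Finset.sum_congr rfl
          intro y hy
          have hy' := (Finset.mem_filter.mp hy).2
          rw [if_pos hy']
        rw [hrestrict]
        by_cases huw : u ++ w ∈ S
        · rw [keyR hN (∑ y ∈ Y, y.length) Y le_rfl hYc (u ++ w) huw (by simp [hu0])]
          rw [if_pos huw]
        · have hempty : Y.filter (fun y => (u ++ w) ++ y ∈ S) = ∅ :=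
            Finset.filter_eq_empty_iff.mpr (fun y _ hy =>
              huw (mem_of_prefix hN.1 ⟨y, rfl⟩ hy))
          rw [hempty, lc_zero hN.1 huw, if_neg huw]
          simp
      calc eC S X Y w - lC S X w
          = (eC S Bf Y w + eC S Xf Y w) - (lC S Bf w + lC S Xf w) := by
            rw [← hsplit, eC_union_fst hdisj, lC_union hdisj]
        _ = (eC S Xf Y w + eC S ({u} : Finset (List A)) Y w)
            - (lC S Xf w + lC S ({u} : Finset (List A)) w) := by
            have := hkey; ring_nf; ring_nf at this; linarith
        _ = eC S (Xf ∪ {u}) Y w - lC S (Xf ∪ {u}) w := by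
            rw [eC_union_fst hdisju, lC_union hdisju]
        _ = eC S (X0 S) Y w - lC S (X0 S) w := hih
    · push_neg at hbig
      have hshort : ∀ x ∈ (↑X : Set (List A)), x.length ≤ 1 := fun x hx => by
        have := hbig x hx; omega
      have : X = X0 S := Finset.coe_injective (by rw [eq_L1_of_short_suffix hX hshort, X0_coe])
      rw [this]

end main
end Paper

namespace Paper
open scoped Classical
open Finset Red

section main2
variable {A : Type*} [Fintype A] {S : Set (List A)}

lemma lemB (hN : Neutral S) (w : List A) :
    ∀ n : ℕ, ∀ Y : Finset (List A), (∑ y ∈ Y, y.length) ≤ n → MaxPrefixCode S ↑Y →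
      eC S (X0 S) Y w - rC S Y w = eC S (X0 S) (X0 S) w - rC S (X0 S) w := by
  intro n
  induction n with
  | zero =>
    intro Y hlen hY
    have hshort : ∀ y ∈ (↑Y : Set (List A)), y.length ≤ 1 := by
      intro y hy
      have := Finset.single_le_sum (f := List.length) (fun _ _ => Nat.zero_le _) hy
      omega
    have : Y = X0 S := Finset.coe_injective (by rw [eq_L1_of_short_prefix hY hshort, X0_coe])
    rw [this]
  | succ n ih =>
    intro Y hlen hY
    by_cases hbig : ∃ y ∈ Y, 2 ≤ y.length
    · obtain ⟨u, Y', hu0, huS, huY, hall, hY', hlt, hco⟩ := finset_prefix_step hN.1 hY hbig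
      set Yf := Y.filter (fun y => ¬∃ b : A, y = u ++ [b]) with hYf
      set Bf := Y.filter (fun y => ∃ b : A, y = u ++ [b]) with hBf
      have hY'eq : Y' = Yf ∪ {u} := by
        apply Finset.coe_injective
        rw [hco]
        ext z
        simp [hYf, Set.mem_diff]
      rw [hY'eq] at hY' hlt
      have hih := ih (Yf ∪ {u}) (by omega) hY'
      have hdisj : Disjoint Bf Yf := Finset.disjoint_filter_filter_not Y Y _
      have hsplit : Bf ∪ Yf = Y := Finset.filter_union_filter_not_eq _ Y
      have huYf : u ∉ Yf := fun h => huY (Finset.mem_of_mem_filter u h)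
      have hdisju : Disjoint Yf ({u} : Finset (List A)) := by
        simp [Finset.disjoint_singleton_right, huYf]
      have hBfim : ∀ x : List A, Bf.filter (fun y => x ++ w ++ y ∈ S)
          = (Finset.univ.filter (fun b : A => ((x ++ w) ++ u) ++ [b] ∈ S)).image
              (fun b => u ++ [b]) := by
        intro x
        ext z
        simp only [hBf, Finset.mem_filter, Finset.mem_image, Finset.mem_univ, true_and]
        constructor
        · rintro ⟨⟨hzY, b, rfl⟩, hzS⟩
          exact ⟨b, by simpa [List.append_assoc] using hzS, rfl⟩
        · rintro ⟨b, hbS, rfl⟩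
          have hub : u ++ [b] ∈ S :=
            mem_of_suffix hN.1 ⟨x ++ w, by simp⟩ hbS
          exact ⟨⟨hall b hub, b, rfl⟩, by simpa [List.append_assoc] using hbS⟩
      have heBf : eC S (X0 S) Bf w = ∑ x ∈ X0 S, rc S (x ++ w ++ u) := by
        rw [eC_fiber_fst]
        apply Finset.sum_congr rfl
        intro x _
        rw [hBfim x, Finset.card_image_of_injective _ (fun a b h => by simpa using h), rc]
      have heu : eC S (X0 S) ({u} : Finset (List A)) w
          = ∑ x ∈ X0 S, (if x ++ w ++ u ∈ S then (1 : ℤ) else 0) := by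
        rw [eC_fiber_fst]
        apply Finset.sum_congr rfl
        intro x _
        rw [Finset.filter_singleton]
        split <;> simp
      have hkey : eC S (X0 S) Bf w - eC S (X0 S) ({u} : Finset (List A)) w
          = rC S Bf w - rC S ({u} : Finset (List A)) w := by
        have hrBf : rC S Bf w = rc S (w ++ u) := by
          have him : Bf.filter (fun y => w ++ y ∈ S)
              = (Finset.univ.filter (fun b : A => (w ++ u) ++ [b] ∈ S)).image
                  (fun b => u ++ [b]) := by
            ext z
            simp only [hBf, Finset.mem_filter, Finset.mem_image, Finset.mem_univ, true_and]
            constructor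
            · rintro ⟨⟨hzY, b, rfl⟩, hzS⟩
              exact ⟨b, by simpa [List.append_assoc] using hzS, rfl⟩
            · rintro ⟨b, hbS, rfl⟩
              have hub : u ++ [b] ∈ S := mem_of_suffix hN.1 ⟨w, by simp⟩ hbS
              exact ⟨⟨hall b hub, b, rfl⟩, by simpa [List.append_assoc] using hbS⟩
          rw [rC, him, Finset.card_image_of_injective _ (fun a b h => by simpa using h), rc]
        have hru : rC S ({u} : Finset (List A)) w
            = if w ++ u ∈ S then (1 : ℤ) else 0 := by
          rw [rC, Finset.filter_singleton]
          split <;> simp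
        rw [heBf, heu, ← Finset.sum_sub_distrib, hrBf, hru]
        have hrestrict : ∑ x ∈ X0 S, (rc S (x ++ w ++ u) - if x ++ w ++ u ∈ S then (1:ℤ) else 0)
            = ∑ x ∈ (X0 S).filter (fun x => x ++ w ++ u ∈ S), (rc S (x ++ w ++ u) - 1) := by
          rw [← Finset.sum_filter_add_sum_filter_not (X0 S) (fun x => x ++ w ++ u ∈ S)]
          have h2 : ∑ x ∈ (X0 S).filter (fun x => ¬x ++ w ++ u ∈ S),
              (rc S (x ++ w ++ u) - if x ++ w ++ u ∈ S then (1:ℤ) else 0) = 0 := by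
            apply Finset.sum_eq_zero
            intro x hx
            have hx' := (Finset.mem_filter.mp hx).2
            rw [rc_zero hN.1 hx', if_neg hx']
            ring
          rw [h2, add_zero]
          apply Finset.sum_congr rfl
          intro x hx
          have hx' := (Finset.mem_filter.mp hx).2
          rw [if_pos hx']
        rw [hrestrict]
        by_cases hwu : w ++ u ∈ S
        · have him2 : (X0 S).filter (fun x => x ++ w ++ u ∈ S)
              = (Finset.univ.filter (fun a : A => a :: (w ++ u) ∈ S)).image
                  (fun a => [a]) := by
            ext z
            simp only [X0, Finset.mem_filter, Finset.mem_image, Finset.mem_univ, true_and]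
            constructor
            · rintro ⟨⟨⟨a, rfl⟩, -⟩, h⟩
              exact ⟨a, by simpa using h, rfl⟩
            · rintro ⟨a, h, rfl⟩
              refine ⟨⟨⟨a, rfl⟩, mem_of_prefix hN.1 ⟨w ++ u, rfl⟩ h⟩, by simpa using h⟩
          rw [him2, Finset.sum_image (fun a _ b _ h => singleton_list_inj h)]
          have hcong : ∑ a ∈ Finset.univ.filter (fun a : A => a :: (w ++ u) ∈ S),
              (rc S ([a] ++ w ++ u) - 1)
              = ∑ a ∈ Finset.univ.filter (fun a : A => a :: (w ++ u) ∈ S),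
                (rc S (a :: (w ++ u)) - 1) := by
            apply Finset.sum_congr rfl
            intro a _
            rfl
          rw [hcong, sum_letter_L hN hwu (by simp [hu0]), if_pos hwu]
        · have hempty : (X0 S).filter (fun x => x ++ w ++ u ∈ S) = ∅ :=
            Finset.filter_eq_empty_iff.mpr (fun x _ hx =>
              hwu (mem_of_suffix hN.1 ⟨x, by simp⟩ hx))
          rw [hempty, rc_zero hN.1 hwu, if_neg hwu]
          simp
      calc eC S (X0 S) Y w - rC S Y w
          = (eC S (X0 S) Bf w + eC S (X0 S) Yf w) - (rC S Bf w + rC S Yf w) := by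
            rw [← hsplit, eC_union_snd hdisj, rC_union hdisj]
        _ = (eC S (X0 S) Yf w + eC S (X0 S) ({u} : Finset (List A)) w)
            - (rC S Yf w + rC S ({u} : Finset (List A)) w) := by linarith
        _ = eC S (X0 S) (Yf ∪ {u}) w - rC S (Yf ∪ {u}) w := by
            rw [eC_union_snd hdisju, rC_union hdisju]
        _ = eC S (X0 S) (X0 S) w - rC S (X0 S) w := hih
    · push_neg at hbig
      have hshort : ∀ y ∈ (↑Y : Set (List A)), y.length ≤ 1 := fun y hy => by
        have := hbig y hy; omega
      have : Y = X0 S := Finset.coe_injective (by rw [eq_L1_of_short_prefix hY hshort, X0_coe])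
      rw [this]

end main2
end Paper


open Paper in
/-- Let `S` be a neutral set, `X` a finite `S`-maximal suffix code and `Y` a finite
`S`-maximal prefix code. Then `m_S^{X,Y}(w) = m_S(w)` for every `w ∈ S`, where
`m_S^{X,Y}(w) = e_S^{X,Y}(w) - ℓ_S^X(w) - r_S^Y(w) + 1`. -/
theorem m_XY_eq_m
    {A : Type*} [Fintype A] (S X Y : Set (List A))
    (hN : Neutral S)
    (hXfin : X.Finite) (hX : MaxSuffixCode S X)
    (hYfin : Y.Finite) (hY : MaxPrefixCode S Y) :
    ∀ w ∈ S,
      (({p : List A × List A | p.1 ∈ X ∧ p.2 ∈ Y ∧ p.1 ++ w ++ p.2 ∈ S}.ncard : ℤ)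
          - ({x ∈ X | x ++ w ∈ S}.ncard : ℤ)
          - ({y ∈ Y | w ++ y ∈ S}.ncard : ℤ) + 1)
        = mS S w := by
  classical
  intro w hw
  set Xf := hXfin.toFinset with hXfdef
  set Yf := hYfin.toFinset with hYfdef
  have hXc : (↑Xf : Set (List A)) = X := hXfin.coe_toFinset
  have hYc : (↑Yf : Set (List A)) = Y := hYfin.coe_toFinset
  have h1 : ({p : List A × List A | p.1 ∈ X ∧ p.2 ∈ Y ∧ p.1 ++ w ++ p.2 ∈ S}.ncard : ℤ)
      = eC S Xf Yf w := by
    rw [show {p : List A × List A | p.1 ∈ X ∧ p.2 ∈ Y ∧ p.1 ++ w ++ p.2 ∈ S}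
        = ↑((Xf ×ˢ Yf).filter (fun p => p.1 ++ w ++ p.2 ∈ S)) from by
      ext p
      simp only [Finset.coe_filter, Finset.mem_product, Set.mem_setOf_eq,
        ← hXc, ← hYc, Finset.mem_coe]
      tauto]
    rw [Set.ncard_coe_finset]
    rfl
  have h2 : ({x ∈ X | x ++ w ∈ S}.ncard : ℤ) = lC S Xf w := by
    rw [show {x ∈ X | x ++ w ∈ S} = ↑(Xf.filter (fun x => x ++ w ∈ S)) from by
      ext x
      simp only [Finset.coe_filter, Set.mem_setOf_eq, ← hXc, Finset.mem_coe]]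
    rw [Set.ncard_coe_finset]
    rfl
  have h3 : ({y ∈ Y | w ++ y ∈ S}.ncard : ℤ) = rC S Yf w := by
    rw [show {y ∈ Y | w ++ y ∈ S} = ↑(Yf.filter (fun y => w ++ y ∈ S)) from by
      ext y
      simp only [Finset.coe_filter, Set.mem_setOf_eq, ← hYc, Finset.mem_coe]]
    rw [Set.ncard_coe_finset]
    rfl
  have hXcode : MaxSuffixCode S ↑Xf := by rw [hXc]; exact hX
  have hYcode : MaxPrefixCode S ↑Yf := by rw [hYc]; exact hY
  have hA := lemA hN hYcode w (∑ x ∈ Xf, x.length) Xf le_rfl hXcode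
  have hB := lemB hN w (∑ y ∈ Yf, y.length) Yf le_rfl hYcode
  have hl0 := lC_X0 (S := S) hN.1 w
  have hr0 := rC_X0 (S := S) hN.1 w
  have he0 := eC_X0X0 (S := S) hN.1 w
  have hm : mS S w = ec S w - lc S w - rc S w + 1 := by
    rw [mS, extE_ncard, extL_ncard, extR_ncard]
  rw [h1, h2, h3, hm]
  linarith
end

section
/- Let S be a recurrent neutral set over a finite alphabet A, let X ⊆ S be a finite S-maximal bifix code, and let f : B* → A* be a coding morphism for X (a morphism mapping an alphabet B bijectively onto X). Then the set U = f^{-1}(S) is a neutral set with χ(U) = χ(S). -/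
namespace MBD
open Paper List

variable {A : Type*}

/-! ### Reversal -/

def rev (S : Set (List A)) : Set (List A) := List.reverse ⁻¹' S

lemma mem_rev {S : Set (List A)} {l : List A} : l ∈ rev S ↔ l.reverse ∈ S := Iff.rfl

lemma rev_factorial {S : Set (List A)} (h : Factorial S) : Factorial (rev S) := by
  intro u v huv hv
  exact h u.reverse v.reverse (List.reverse_infix.mpr huv) hv

lemma extL_rev (S : Set (List A)) (w : List A) : extL (rev S) w = extR S w.reverse := by
  ext a; simp [extL, extR, mem_rev]

lemma extR_rev (S : Set (List A)) (w : List A) : extR (rev S) w = extL S w.reverse := by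
  ext a; simp [extL, extR, mem_rev]

lemma extE_rev (S : Set (List A)) (w : List A) :
    extE (rev S) w = Prod.swap '' extE S w.reverse := by
  rw [Set.image_swap_eq_preimage_swap]
  ext p; simp [extE, mem_rev]

lemma extE_rev_ncard (S : Set (List A)) (w : List A) :
    (extE (rev S) w).ncard = (extE S w.reverse).ncard := by
  rw [extE_rev, Set.ncard_image_of_injective _ Prod.swap_injective]

lemma mS_rev (S : Set (List A)) (w : List A) : mS (rev S) w = mS S w.reverse := by
  simp [mS, extL_rev, extR_rev, extE_rev_ncard]; ring

lemma rev_recurrent {S : Set (List A)} (h : Recurrent S) : Recurrent (rev S) := by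
  obtain ⟨h1, h2, h3⟩ := h
  refine ⟨?_, rev_factorial h2, ?_⟩
  · intro hc
    apply h1
    ext l
    constructor
    · intro hl
      have : l.reverse ∈ rev S := by simpa [mem_rev] using hl
      rw [hc] at this
      simp at this ⊢
      simpa using congrArg List.reverse this
    · intro hl; simp at hl; subst hl
      have : ([] : List A) ∈ rev S := hc ▸ rfl
      simpa [mem_rev] using this
  · intro u hu w hw
    obtain ⟨v, hv⟩ := h3 w.reverse hw u.reverse hu
    exact ⟨v.reverse, by simpa [mem_rev, List.reverse_append] using hv⟩

/-! ### Greedy stripping of codewords -/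

variable (X : Set (List A))

open Classical in
noncomputable def strip (r : List A) : List A :=
  if h : ∃ x, x ∈ X ∧ x ≠ [] ∧ x <+: r then
    strip (r.drop (Classical.choose h).length)
  else r
termination_by r.length
decreasing_by
  obtain ⟨hx, hne, hpre⟩ := Classical.choose_spec h
  have h1 : 0 < (Classical.choose h).length := List.length_pos_iff.mpr hne
  have h2 : (Classical.choose h).length ≤ r.length := hpre.length_le
  simp only [List.length_drop]
  omega

variable {X}

lemma strip_spec (hX : [] ∉ X) (r : List A) :
    (∃ l : List (List A), (∀ u ∈ l, u ∈ X) ∧ l.flatten ++ strip X r = r) ∧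
      ∀ x ∈ X, ¬ x <+: strip X r := by
  induction' hn : r.length using Nat.strong_induction_on with n IH generalizing r
  subst hn
  rw [strip]
  split_ifs with h
  · obtain ⟨hx, hne, hpre⟩ := Classical.choose_spec h
    set x := Classical.choose h with hxdef
    have hlt : (r.drop x.length).length < r.length := by
      have h1 : 0 < x.length := List.length_pos_iff.mpr hne
      have h2 : x.length ≤ r.length := hpre.length_le
      simp only [List.length_drop]; omega
    obtain ⟨⟨l, hl, hfl⟩, hnop⟩ := IH _ hlt _ rfl
    refine ⟨⟨x :: l, ?_, ?_⟩, hnop⟩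
    · intro u hu
      rcases List.mem_cons.mp hu with rfl | hu
      · exact hx
      · exact hl u hu
    · obtain ⟨t, ht⟩ := hpre
      simp only [List.flatten_cons, List.append_assoc, hfl]
      rw [← ht, List.drop_left]
  · refine ⟨⟨[], by simp, by simp⟩, ?_⟩
    intro x hx hpre
    exact h ⟨x, hx, fun he => hX (he ▸ hx), hpre⟩

lemma strip_of_no_prefix (hr : ∀ x ∈ X, ¬ x <+: r) : strip X r = r := by
  rw [strip, dif_neg]
  rintro ⟨x, hx, -, hpre⟩
  exact hr x hx hpre

lemma strip_cons (hP : PrefixCode X) {x : List A} (hx : x ∈ X) (s : List A) :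
    strip X (x ++ s) = strip X s := by
  have hne : x ≠ [] := fun he => hP.1 (he ▸ hx)
  have h : ∃ y, y ∈ X ∧ y ≠ [] ∧ y <+: x ++ s := ⟨x, hx, hne, ⟨s, rfl⟩⟩
  rw [strip, dif_pos h]
  obtain ⟨hy, hyne, hypre⟩ := Classical.choose_spec h
  have : Classical.choose h = x := by
    rcases prefix_or_prefix_of_prefix hypre (⟨s, rfl⟩ : x <+: x ++ s) with h1 | h1
    · exact hP.2 _ hy _ hx h1
    · exact (hP.2 _ hx _ hy h1).symm
  rw [this, List.drop_left]

lemma strip_flatten (hP : PrefixCode X) {l : List (List A)} (hl : ∀ u ∈ l, u ∈ X)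
    {p : List A} (hp : ∀ x ∈ X, ¬ x <+: p) : strip X (l.flatten ++ p) = p := by
  induction l with
  | nil => simpa using strip_of_no_prefix hp
  | cons u l ih =>
    have hu : u ∈ X := hl u (by simp)
    rw [List.flatten_cons, List.append_assoc, strip_cons hP hu]
    exact ih (fun v hv => hl v (by simp [hv]))


lemma finite_prefixes (z : List A) : {p | p <+: z}.Finite := by
  classical
  apply Set.Finite.subset (z.inits.toFinset : Finset (List A)).finite_toSet
  intro p hp; simp [mem_inits]; exact hp

lemma finite_suffixes (z : List A) : {p | p <:+ z}.Finite := by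
  classical
  apply Set.Finite.subset (z.tails.toFinset : Finset (List A)).finite_toSet
  intro p hp; simp [mem_tails]; exact hp

/-- words with no suffix in X followed by X-star words: left part determined. -/
lemma eq_of_append_flatten {X : Set (List A)} (hS : SuffixCode X) :
    ∀ (w q1 q2 : List A) (l1 l2 : List (List A)), q1 ++ l1.flatten = w → q2 ++ l2.flatten = w →
      (∀ u ∈ l1, u ∈ X) → (∀ u ∈ l2, u ∈ X) →
      (∀ x ∈ X, ¬ x <:+ q1) → (∀ x ∈ X, ¬ x <:+ q2) → q1 = q2 := by
  intro w
  induction' hn : w.length using Nat.strong_induction_on with n IH generalizing w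
  subst hn
  intro q1 q2 l1 l2 h1 h2 hl1 hl2 hq1 hq2
  rcases l1.eq_nil_or_concat with rfl | ⟨l1', y1, rfl⟩
  · rcases l2.eq_nil_or_concat with rfl | ⟨l2', y2, rfl⟩
    · simpa using h1.trans h2.symm
    · exfalso
      have hy2 : y2 ∈ X := hl2 y2 (by simp)
      have : y2 <:+ q1 := by
        simp only [List.flatten_nil, List.append_nil] at h1
        subst h1
        exact ⟨q2 ++ l2'.flatten, by rw [← h2]; simp [List.concat_eq_append]⟩
      exact hq1 y2 hy2 this
  · rcases l2.eq_nil_or_concat with rfl | ⟨l2', y2, rfl⟩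
    · exfalso
      have hy1 : y1 ∈ X := hl1 y1 (by simp)
      have : y1 <:+ q2 := by
        simp only [List.flatten_nil, List.append_nil] at h2
        subst h2
        exact ⟨q1 ++ l1'.flatten, by rw [← h1]; simp [List.concat_eq_append]⟩
      exact hq2 y1 hy1 this
    have hy1 : y1 ∈ X := hl1 y1 (by simp)
    have hy2 : y2 ∈ X := hl2 y2 (by simp)
    have hs1 : y1 <:+ w := ⟨q1 ++ l1'.flatten, by rw [← h1]; simp [List.concat_eq_append]⟩
    have hs2 : y2 <:+ w := ⟨q2 ++ l2'.flatten, by rw [← h2]; simp [List.concat_eq_append]⟩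
    have hy : y1 = y2 := by
      rcases suffix_or_suffix_of_suffix hs1 hs2 with h | h
      · exact hS.2 _ hy1 _ hy2 h
      · exact (hS.2 _ hy2 _ hy1 h).symm
    subst hy
    have hyne : y1 ≠ [] := fun he => hS.1 (he ▸ hy1)
    have h1' : (q1 ++ l1'.flatten) ++ y1 = w := by rw [← h1]; simp [List.concat_eq_append]
    have h2' : (q2 ++ l2'.flatten) ++ y1 = w := by rw [← h2]; simp [List.concat_eq_append]
    have hcan : q1 ++ l1'.flatten = q2 ++ l2'.flatten := by
      exact append_cancel_right (h1'.trans h2'.symm)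
    have hlen : (q1 ++ l1'.flatten).length < w.length := by
      rw [← h1']
      simp only [List.length_append]
      have := List.length_pos_iff.mpr hyne
      omega
    exact IH _ hlen _ rfl q1 q2 l1' l2' rfl hcan.symm
      (fun u hu => hl1 u (by simp [hu])) (fun u hu => hl2 u (by simp [hu])) hq1 hq2


/-- reverse of a flatten of X-reverses is a flatten of X-words -/
lemma rev_flatten_mem {X : Set (List A)} {l : List (List A)}
    (hl : ∀ u ∈ l, u ∈ List.reverse '' X) :
    ∃ l2 : List (List A), (∀ u ∈ l2, u ∈ X) ∧ l2.flatten = l.flatten.reverse := by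
  induction l with
  | nil => exact ⟨[], by simp, by simp⟩
  | cons u l ih =>
    obtain ⟨l2, hl2, hfl⟩ := ih (fun v hv => hl v (by simp [hv]))
    obtain ⟨x, hx, hxu⟩ := hl u (by simp)
    refine ⟨l2 ++ [x], ?_, ?_⟩
    · intro v hv
      rcases List.mem_append.mp hv with hv | hv
      · exact hl2 v hv
      · simp at hv; subst hv; exact hx
    · simp [hfl, ← hxu]

lemma nil_not_mem_rev_image {X : Set (List A)} (hX : [] ∉ X) : [] ∉ List.reverse '' X := by
  rintro ⟨x, hx, hxe⟩
  apply hX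
  have : x = [] := by simpa using congrArg List.reverse hxe
  exact this ▸ hx

/-- Key bijection: #prefixes with no suffix in X = #suffixes with no prefix in X. -/
lemma ncard_Q_eq_P {X : Set (List A)} (hB : BifixCode X) (z : List A) :
    {q | q <+: z ∧ ∀ x ∈ X, ¬ x <:+ q}.ncard = {p | p <:+ z ∧ ∀ x ∈ X, ¬ x <+: p}.ncard := by
  set Q := {q | q <+: z ∧ ∀ x ∈ X, ¬ x <:+ q} with hQ
  set P := {p | p <:+ z ∧ ∀ x ∈ X, ¬ x <+: p} with hP
  set φ : List A → List A := fun q => strip X (z.drop q.length) with hφ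
  have hXnil : [] ∉ X := hB.1.1
  -- decomposition for q ∈ Q
  have hdec : ∀ q ∈ Q, ∃ l : List (List A), (∀ u ∈ l, u ∈ X) ∧ q ++ (l.flatten ++ φ q) = z := by
    intro q hq
    obtain ⟨l, hl, hfl⟩ := (strip_spec hXnil (z.drop q.length)).1
    obtain ⟨t, ht⟩ := hq.1
    have hdrop : z.drop q.length = t := by rw [← ht, List.drop_left]
    exact ⟨l, hl, by rw [hφ]; simp only [hdrop] at hfl ⊢; rw [hfl, ht]⟩
  have hmaps : ∀ q ∈ Q, φ q ∈ P := by
    intro q hq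
    obtain ⟨l, hl, hfl⟩ := hdec q hq
    constructor
    · exact ⟨q ++ l.flatten, by rw [← hfl]; simp⟩
    · exact (strip_spec hXnil (z.drop q.length)).2
  have hinj : Set.InjOn φ Q := by
    intro q1 hq1 q2 hq2 heq
    obtain ⟨l1, hl1, hfl1⟩ := hdec q1 hq1
    obtain ⟨l2, hl2, hfl2⟩ := hdec q2 hq2
    have : (q1 ++ l1.flatten) ++ φ q1 = (q2 ++ l2.flatten) ++ φ q2 := by
      rw [List.append_assoc, List.append_assoc, hfl1, hfl2]
    rw [heq] at this
    have hcan : q1 ++ l1.flatten = q2 ++ l2.flatten := append_cancel_right this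
    exact eq_of_append_flatten hB.2 _ q1 q2 l1 l2 rfl hcan.symm hl1 hl2 hq1.2 hq2.2
  have hsurj : ∀ p ∈ P, ∃ q ∈ Q, φ q = p := by
    intro p hp
    obtain ⟨c, hc⟩ := hp.1
    set Xr := List.reverse '' X with hXr
    have hXrnil : [] ∉ Xr := nil_not_mem_rev_image hXnil
    obtain ⟨⟨l, hl, hfl⟩, hnop⟩ := strip_spec hXrnil c.reverse
    set q := (strip Xr c.reverse).reverse with hq'
    obtain ⟨l2, hl2, hfl2⟩ := rev_flatten_mem hl
    have hcq : q ++ l2.flatten = c := by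
      have := congrArg List.reverse hfl
      rw [List.reverse_append] at this
      rw [hq', hfl2, this, List.reverse_reverse]
    have hqQ : q ∈ Q := by
      constructor
      · exact ⟨l2.flatten ++ p, by rw [← List.append_assoc, hcq, hc]⟩
      · intro x hx hsuf
        apply hnop x.reverse ⟨x, hx, rfl⟩
        have h2 : x.reverse <+: q.reverse := List.reverse_prefix.mpr hsuf
        simpa [hq', List.reverse_reverse] using h2
    refine ⟨q, hqQ, ?_⟩
    have hdrop : z.drop q.length = l2.flatten ++ p := by
      have : q ++ (l2.flatten ++ p) = z := by rw [← List.append_assoc, hcq, hc]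
      rw [← this, List.drop_left]
    rw [hφ]
    simp only [hdrop]
    exact strip_flatten hB.1 hl2 hp.2
  have himg : φ '' Q = P := by
    apply Set.Subset.antisymm
    · rintro _ ⟨q, hq, rfl⟩; exact hmaps q hq
    · intro p hp; obtain ⟨q, hq, hqp⟩ := hsurj p hp; exact ⟨q, hq, hqp⟩
  rw [← himg, Set.ncard_image_of_injOn hinj]


def SufComp (X : Set (List A)) (w : List A) : Prop := ∃ x ∈ X, x <:+ w ∨ w <:+ x
def PreComp (X : Set (List A)) (w : List A) : Prop := ∃ x ∈ X, x <+: w ∨ w <+: x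

def MaxSuf (S X : Set (List A)) : Prop :=
  X ⊆ S ∧ SuffixCode X ∧ ∀ w ∈ S, w ≠ [] → SufComp X w
def MaxPre (S X : Set (List A)) : Prop :=
  X ⊆ S ∧ PrefixCode X ∧ ∀ w ∈ S, w ≠ [] → PreComp X w

lemma rev_image_bifix {X : Set (List A)} (hB : BifixCode X) :
    BifixCode (List.reverse '' X) := by
  obtain ⟨⟨hp0, hp⟩, ⟨hs0, hs⟩⟩ := hB
  refine ⟨⟨?_, ?_⟩, ⟨?_, ?_⟩⟩
  · rintro ⟨x, hx, hxe⟩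
    have : x = [] := by simpa using congrArg List.reverse hxe
    exact hs0 (this ▸ hx)
  · rintro _ ⟨u, hu, rfl⟩ _ ⟨v, hv, rfl⟩ h
    rw [List.reverse_prefix] at h
    rw [hs u hu v hv h]
  · rintro ⟨x, hx, hxe⟩
    have : x = [] := by simpa using congrArg List.reverse hxe
    exact hp0 (this ▸ hx)
  · rintro _ ⟨u, hu, rfl⟩ _ ⟨v, hv, rfl⟩ h
    rw [List.reverse_suffix] at h
    rw [hp u hu v hv h]

/-- The counting argument: if every nonempty word of S is suffix-comparable with X but
some nonempty word is prefix-incomparable, contradiction. -/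
lemma count_contradiction {S X : Set (List A)} (hS : Recurrent S) (hfin : X.Finite)
    (hXne : X.Nonempty) (hB : BifixCode X)
    (hsuf : ∀ t ∈ S, t ≠ [] → SufComp X t)
    {w : List A} (hw : w ∈ S) (hwne : w ≠ []) (hinc : ∀ x ∈ X, ¬ x <+: w ∧ ¬ w <+: x) :
    False := by
  classical
  obtain ⟨x0, hx0⟩ := hXne
  set M := hfin.toFinset.sup List.length with hM
  have hMb : ∀ x ∈ X, x.length ≤ M := by
    intro x hx
    exact Finset.le_sup (f := List.length) (hfin.mem_toFinset.mpr hx)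
  -- pumping
  have pump : ∀ k : ℕ, ∃ z ∈ S, k ≤ {p | p <:+ z ∧ w <+: p}.ncard := by
    intro k
    induction k with
    | zero => exact ⟨w, hw, Nat.zero_le _⟩
    | succ k ih =>
      obtain ⟨z, hz, hk⟩ := ih
      obtain ⟨v, hv⟩ := hS.2.2 z hz w hw
      refine ⟨z ++ v ++ w, hv, ?_⟩
      have hsub : insert w ((fun p => p ++ (v ++ w)) '' {p | p <:+ z ∧ w <+: p})
          ⊆ {p | p <:+ z ++ v ++ w ∧ w <+: p} := by
        rintro p hp
        rcases Set.mem_insert_iff.mp hp with rfl | ⟨p', ⟨hp1, hp2⟩, rfl⟩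
        · exact ⟨⟨z ++ v, by simp⟩, List.prefix_refl _⟩
        · obtain ⟨t, ht⟩ := hp1
          exact ⟨⟨t, by rw [← ht]; simp⟩, hp2.trans ⟨v ++ w, rfl⟩⟩
      have hfin' : {p | p <:+ z ++ v ++ w ∧ w <+: p}.Finite :=
        (finite_suffixes _).subset (fun p hp => hp.1)
      have hinj : Function.Injective (fun p : List A => p ++ (v ++ w)) := by
        intro a b hab; exact append_cancel_right hab
      have hwni : w ∉ (fun p => p ++ (v ++ w)) '' {p | p <:+ z ∧ w <+: p} := by
        rintro ⟨p', ⟨hp1, hp2⟩, he⟩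
        have h1 : p' ≠ [] := by
          intro hh; subst hh
          exact hwne (List.prefix_nil.mp hp2)
        have := congrArg List.length he
        simp only [List.length_append] at this
        have := List.length_pos_iff.mpr h1
        have := List.length_pos_iff.mpr hwne
        omega
      have hcard : (insert w ((fun p => p ++ (v ++ w)) '' {p | p <:+ z ∧ w <+: p})).ncard
          = ((fun p => p ++ (v ++ w)) '' {p | p <:+ z ∧ w <+: p}).ncard + 1 := by
        refine Set.ncard_insert_of_notMem hwni ?_
        exact ((finite_suffixes z).subset (fun p hp => hp.1)).image _
      have himgcard : ((fun p => p ++ (v ++ w)) '' {p | p <:+ z ∧ w <+: p}).ncard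
          = {p | p <:+ z ∧ w <+: p}.ncard := Set.ncard_image_of_injective _ hinj
      calc k + 1 ≤ {p | p <:+ z ∧ w <+: p}.ncard + 1 := by omega
        _ = (insert w ((fun p => p ++ (v ++ w)) '' {p | p <:+ z ∧ w <+: p})).ncard := by
            rw [hcard, himgcard]
        _ ≤ {p | p <:+ z ++ v ++ w ∧ w <+: p}.ncard :=
            Set.ncard_le_ncard hsub hfin'
  obtain ⟨z, hz, hk⟩ := pump (M + 2)
  -- T ⊆ P
  have hTP : {p | p <:+ z ∧ w <+: p} ⊆ {p | p <:+ z ∧ ∀ x ∈ X, ¬ x <+: p} := by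
    rintro p ⟨hp1, hp2⟩
    refine ⟨hp1, fun x hx hxp => ?_⟩
    rcases prefix_or_prefix_of_prefix hxp hp2 with h | h
    · exact (hinc x hx).1 h
    · exact (hinc x hx).2 h
  have hPfin : {p | p <:+ z ∧ ∀ x ∈ X, ¬ x <+: p}.Finite :=
    (finite_suffixes z).subset (fun p hp => hp.1)
  have hPcard : M + 2 ≤ {p | p <:+ z ∧ ∀ x ∈ X, ¬ x <+: p}.ncard :=
    le_trans hk (Set.ncard_le_ncard hTP hPfin)
  -- Q is small
  have hQsub : {q | q <+: z ∧ ∀ x ∈ X, ¬ x <:+ q} ⊆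
      (fun i => z.take i) '' (↑(Finset.range (M + 1)) : Set ℕ) := by
    rintro q ⟨hq1, hq2⟩
    have hqlen : q.length ≤ M := by
      by_contra hlen
      push_neg at hlen
      have hqne : q ≠ [] := by
        intro hh; subst hh; simp at hlen
      have hqS : q ∈ S := hS.2.1 q z hq1.isInfix hz
      obtain ⟨x, hx, hcomp⟩ := hsuf q hqS hqne
      rcases hcomp with h | h
      · exact hq2 x hx h
      · have := h.length_le
        have := hMb x hx
        omega
    refine ⟨q.length, by simp; omega, ?_⟩
    obtain ⟨t, ht⟩ := hq1
    rw [← ht]; simp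
  have hQcard : {q | q <+: z ∧ ∀ x ∈ X, ¬ x <:+ q}.ncard ≤ M + 1 := by
    calc {q | q <+: z ∧ ∀ x ∈ X, ¬ x <:+ q}.ncard
        ≤ ((fun i => z.take i) '' (↑(Finset.range (M + 1)) : Set ℕ)).ncard :=
          Set.ncard_le_ncard hQsub (((Finset.range (M+1)).finite_toSet).image _)
      _ ≤ (↑(Finset.range (M + 1)) : Set ℕ).ncard := Set.ncard_image_le ((Finset.range (M+1)).finite_toSet)
      _ = M + 1 := by rw [Set.ncard_coe_finset]; simp
  rw [← ncard_Q_eq_P hB z] at hPcard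
  omega

/-- Key theorem: a finite S-maximal bifix code in a recurrent set is both an S-maximal
prefix code and an S-maximal suffix code. -/
lemma bifix_max_comp {S X : Set (List A)} (hS : Recurrent S) (hfin : X.Finite)
    (hX : MaxBifixCode S X) (hXne : X.Nonempty) : MaxPre S X ∧ MaxSuf S X := by
  obtain ⟨hXS, hB, hmax⟩ := hX
  -- step A: not both a pre-incomparable and a suf-incomparable word exist
  have hA : ¬ ((∃ w ∈ S, w ≠ [] ∧ ¬ PreComp X w) ∧ (∃ t ∈ S, t ≠ [] ∧ ¬ SufComp X t)) := by
    rintro ⟨⟨w, hw, hwne, hwP⟩, ⟨t, ht, htne, htS⟩⟩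
    obtain ⟨v, hv⟩ := hS.2.2 w hw t ht
    set z := w ++ v ++ t with hzdef
    have hzne : z ≠ [] := by
      simp [hzdef]
      intro h; exact absurd h hwne
    have hzpre : ∀ x ∈ X, ¬ x <+: z ∧ ¬ z <+: x := by
      intro x hx
      constructor
      · intro hxz
        have hwz : w <+: z := by
          rw [hzdef, List.append_assoc]; exact ⟨v ++ t, rfl⟩
        rcases prefix_or_prefix_of_prefix hxz hwz with h | h
        · exact hwP ⟨x, hx, Or.inl h⟩
        · exact hwP ⟨x, hx, Or.inr h⟩
      · intro hzx
        have hwz : w <+: z := by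
          rw [hzdef, List.append_assoc]; exact ⟨v ++ t, rfl⟩
        exact hwP ⟨x, hx, Or.inr (hwz.trans hzx)⟩
    have hzsuf : ∀ x ∈ X, ¬ x <:+ z ∧ ¬ z <:+ x := by
      intro x hx
      constructor
      · intro hxz
        have htz : t <:+ z := ⟨w ++ v, by rw [hzdef]⟩
        rcases suffix_or_suffix_of_suffix hxz htz with h | h
        · exact htS ⟨x, hx, Or.inl h⟩
        · exact htS ⟨x, hx, Or.inr h⟩
      · intro hzx
        have htz : t <:+ z := ⟨w ++ v, by rw [hzdef]⟩
        exact htS ⟨x, hx, Or.inr (htz.trans hzx)⟩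
    have hY : BifixCode (insert z X) := by
      refine ⟨⟨?_, ?_⟩, ⟨?_, ?_⟩⟩
      · intro h
        rcases Set.mem_insert_iff.mp h with h | h
        · exact hzne h.symm
        · exact hB.1.1 h
      · intro u hu v' hv' huv
        rcases Set.mem_insert_iff.mp hu with rfl | hu <;>
          rcases Set.mem_insert_iff.mp hv' with rfl | hv'
        · rfl
        · exact absurd huv (hzpre v' hv').2
        · exact absurd huv (hzpre u hu).1
        · exact hB.1.2 u hu v' hv' huv
      · intro h
        rcases Set.mem_insert_iff.mp h with h | h
        · exact hzne h.symm
        · exact hB.2.1 h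
      · intro u hu v' hv' huv
        rcases Set.mem_insert_iff.mp hu with rfl | hu <;>
          rcases Set.mem_insert_iff.mp hv' with rfl | hv'
        · rfl
        · exact absurd huv (hzsuf v' hv').2
        · exact absurd huv (hzsuf u hu).1
        · exact hB.2.2 u hu v' hv' huv
    have hzX : X = insert z X := hmax _ hY (by
      intro u hu
      rcases Set.mem_insert_iff.mp hu with rfl | hu
      · exact hv
      · exact hXS hu) (Set.subset_insert _ _)
    have : z ∈ X := hzX ▸ Set.mem_insert z X
    exact (hzpre z this).1 (List.prefix_refl z)
  -- step B: if some pre-incomparable word exists, contradiction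
  have hBc : ¬ (∃ w ∈ S, w ≠ [] ∧ ¬ PreComp X w) := by
    rintro ⟨w, hw, hwne, hwP⟩
    have hsuf : ∀ t ∈ S, t ≠ [] → SufComp X t := by
      intro t htS htne
      by_contra hc
      exact hA ⟨⟨w, hw, hwne, hwP⟩, ⟨t, htS, htne, hc⟩⟩
    apply count_contradiction hS hfin hXne hB hsuf hw hwne
    intro x hx
    exact ⟨fun h => hwP ⟨x, hx, Or.inl h⟩, fun h => hwP ⟨x, hx, Or.inr h⟩⟩
  -- step C: if some suf-incomparable word exists, contradiction (via reversal)
  have hCc : ¬ (∃ t ∈ S, t ≠ [] ∧ ¬ SufComp X t) := by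
    rintro ⟨t, htS, htne, htc⟩
    have hpre : ∀ w ∈ S, w ≠ [] → PreComp X w := by
      intro u hu hune
      by_contra hc
      exact hBc ⟨u, hu, hune, hc⟩
    -- reversal
    have hSr : Recurrent (rev S) := rev_recurrent hS
    have hBr : BifixCode (List.reverse '' X) := rev_image_bifix hB
    have hfinr : (List.reverse '' X).Finite := hfin.image _
    have hXner : (List.reverse '' X).Nonempty := hXne.image _
    have hsufr : ∀ u ∈ rev S, u ≠ [] → SufComp (List.reverse '' X) u := by
      intro u hu hune
      have huS : u.reverse ∈ S := mem_rev.mp hu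
      have hurne : u.reverse ≠ [] := by
        intro h; apply hune; simpa using congrArg List.reverse h
      obtain ⟨x, hx, hcomp⟩ := hpre u.reverse huS hurne
      refine ⟨x.reverse, ⟨x, hx, rfl⟩, ?_⟩
      rcases hcomp with h | h
      · left
        rw [← List.reverse_reverse u] at h ⊢
        exact List.reverse_suffix.mpr (by simpa using h)
      · right
        have := List.reverse_suffix.mpr h
        simpa using this
    apply count_contradiction hSr hfinr hXner hBr hsufr
      (w := t.reverse) (mem_rev.mpr (by simpa using htS)) (by
        intro h; apply htne; simpa using congrArg List.reverse h)
    rintro _ ⟨x, hx, rfl⟩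
    constructor
    · intro h
      rw [List.reverse_prefix] at h
      exact htc ⟨x, hx, Or.inl h⟩
    · intro h
      rw [List.reverse_prefix] at h
      exact htc ⟨x, hx, Or.inr h⟩
  push_neg at hBc hCc
  refine ⟨⟨hXS, hB.1, ?_⟩, ⟨hXS, hB.2, ?_⟩⟩
  · intro w hw hwne
    exact hBc w hw hwne
  · intro w hw hwne
    exact hCc w hw hwne

/-! ### counting sets -/

abbrev cL (S X : Set (List A)) (w : List A) : Set (List A) := {x | x ∈ X ∧ x ++ w ∈ S}
abbrev cR (S Y : Set (List A)) (w : List A) : Set (List A) := {y | y ∈ Y ∧ w ++ y ∈ S}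
abbrev eE1 (S X : Set (List A)) (w : List A) : Set (List A × A) :=
  {p | p.1 ∈ X ∧ p.1 ++ w ++ [p.2] ∈ S}
abbrev eE2 (S Y : Set (List A)) (w : List A) : Set (A × List A) :=
  {p | p.2 ∈ Y ∧ p.1 :: (w ++ p.2) ∈ S}
abbrev eXY (S X Y : Set (List A)) (w : List A) : Set (List A × List A) :=
  {p | p.1 ∈ X ∧ p.2 ∈ Y ∧ p.1 ++ w ++ p.2 ∈ S}

lemma cL_finite {S X : Set (List A)} (hfin : X.Finite) (w : List A) : (cL S X w).Finite :=
  hfin.subset (fun x hx => hx.1)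

lemma cR_finite {S Y : Set (List A)} (hfin : Y.Finite) (w : List A) : (cR S Y w).Finite :=
  hfin.subset (fun x hx => hx.1)

lemma eE1_finite [Finite A] {S X : Set (List A)} (hfin : X.Finite) (w : List A) :
    (eE1 S X w).Finite :=
  (hfin.prod Set.finite_univ).subset (fun p hp => ⟨hp.1, Set.mem_univ _⟩)

lemma eE2_finite [Finite A] {S Y : Set (List A)} (hfin : Y.Finite) (w : List A) :
    (eE2 S Y w).Finite :=
  (Set.finite_univ.prod hfin).subset (fun p hp => ⟨Set.mem_univ _, hp.1⟩)

lemma eXY_finite {S X Y : Set (List A)} (hfinX : X.Finite) (hfinY : Y.Finite) (w : List A) :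
    (eXY S X Y w).Finite :=
  (hfinX.prod hfinY).subset (fun p hp => ⟨hp.1, hp.2.1⟩)

/-- Generic splitting of a count over a subset `Z ⊆ X`. -/
lemma split_ncard {β : Type*} (g : β → List A) (C : β → Prop) {X Z : Set (List A)} (hZX : Z ⊆ X)
    (hfin : {p | g p ∈ X ∧ C p}.Finite) :
    {p | g p ∈ X ∧ C p}.ncard = {p | g p ∈ X \ Z ∧ C p}.ncard + {p | g p ∈ Z ∧ C p}.ncard := by
  have hu : {p | g p ∈ X ∧ C p} = {p | g p ∈ X \ Z ∧ C p} ∪ {p | g p ∈ Z ∧ C p} := by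
    ext p
    simp only [Set.mem_setOf_eq, Set.mem_union, Set.mem_diff]
    constructor
    · rintro ⟨h1, h2⟩
      by_cases hz : g p ∈ Z
      · exact Or.inr ⟨hz, h2⟩
      · exact Or.inl ⟨⟨h1, hz⟩, h2⟩
    · rintro (⟨⟨h1, _⟩, h2⟩ | ⟨h1, h2⟩)
      · exact ⟨h1, h2⟩
      · exact ⟨hZX h1, h2⟩
  have hf1 : {p | g p ∈ X \ Z ∧ C p}.Finite := hfin.subset (fun p hp => ⟨hp.1.1, hp.2⟩)
  have hf2 : {p | g p ∈ Z ∧ C p}.Finite := hfin.subset (fun p hp => ⟨hZX hp.1, hp.2⟩)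
  have hdis : Disjoint {p | g p ∈ X \ Z ∧ C p} {p | g p ∈ Z ∧ C p} := by
    rw [Set.disjoint_left]
    rintro p ⟨⟨_, hz⟩, _⟩ ⟨hz', _⟩
    exact hz hz'
  rw [hu, Set.ncard_union_eq hdis hf1 hf2]

/-- the set of one-letter left extensions of x' inside S -/
def Zset (S : Set (List A)) (x' : List A) : Set (List A) :=
  {z | (∃ b : A, z = b :: x') ∧ z ∈ S}

lemma surgery {S X : Set (List A)} (hFac : Factorial S) (hmax : MaxSuf S X)
    {x : List A} (hx : x ∈ X) (hxmax : ∀ y ∈ X, y.length ≤ x.length) (h2 : 2 ≤ x.length) :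
    x.tail ≠ [] ∧ x.tail ∈ S ∧ x.tail ∉ X ∧ x ∈ Zset S x.tail ∧ Zset S x.tail ⊆ X ∧
      MaxSuf S ((X \ Zset S x.tail) ∪ {x.tail}) := by
  obtain ⟨hXS, hcode, hcomp⟩ := hmax
  have hxne : x ≠ [] := by intro h; subst h; simp at h2
  have htne : x.tail ≠ [] := by
    intro h
    have := congrArg List.length h
    simp [List.length_tail] at this
    omega
  have hts : x.tail <:+ x := ⟨[x.head hxne], by simp⟩
  have htS : x.tail ∈ S := hFac _ x hts.isInfix (hXS hx)
  have htX : x.tail ∉ X := by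
    intro h
    have := hcode.2 _ h _ hx hts
    have := congrArg List.length this
    simp [List.length_tail] at this
    omega
  have hxZ : x ∈ Zset S x.tail := ⟨⟨x.head hxne, by simp⟩, hXS hx⟩
  have hZX : Zset S x.tail ⊆ X := by
    rintro z ⟨⟨b, rfl⟩, hzS⟩
    have hzlen : (b :: x.tail).length = x.length := by
      simp [List.length_tail]; omega
    obtain ⟨y, hy, hyc⟩ := hcomp _ hzS (by simp)
    rcases hyc with h | h
    · rcases List.suffix_cons_iff.mp h with rfl | h
      · exact hy
      · exfalso
        have := hcode.2 _ hy _ hx (h.trans hts)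
        subst this
        have := h.length_le
        simp [List.length_tail] at this
        omega
    · have : b :: x.tail = y := h.eq_of_length (le_antisymm h.length_le (hzlen ▸ hxmax y hy))
      exact this ▸ hy
  refine ⟨htne, htS, htX, hxZ, hZX, ?_⟩
  refine ⟨?_, ⟨?_, ?_⟩, ?_⟩
  · rintro z (⟨hz, _⟩ | hz)
    · exact hXS hz
    · simp at hz; subst hz; exact htS
  · rintro (⟨h, _⟩ | h)
    · exact hcode.1 h
    · simp at h; exact htne h
  · rintro u hu v hv huv
    rcases hu with ⟨huX, huZ⟩ | hu <;> rcases hv with ⟨hvX, hvZ⟩ | hv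
    · exact hcode.2 _ huX _ hvX huv
    · simp at hv; subst hv
      exfalso
      have := hcode.2 _ huX _ hx (huv.trans hts)
      subst this
      have := huv.length_le
      simp [List.length_tail] at this
      omega
    · simp at hu; subst hu
      obtain ⟨t, ht⟩ := huv
      rcases eq_or_ne t [] with rfl | htne'
      · simpa using ht
      · exfalso
        obtain ⟨t', b, rfl⟩ := t.eq_nil_or_concat.resolve_left htne'
        have hbv : b :: x.tail <:+ v := ⟨t', by rw [← ht]; simp [List.concat_eq_append]⟩
        have hbS : b :: x.tail ∈ S := hFac _ v hbv.isInfix (hXS hvX)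
        have hbZ : b :: x.tail ∈ Zset S x.tail := ⟨⟨b, rfl⟩, hbS⟩
        have := hcode.2 _ (hZX hbZ) _ hvX hbv
        exact hvZ (this ▸ hbZ)
    · simp at hu hv; rw [hu, hv]
  · intro w hw hwne
    obtain ⟨y, hy, hyc⟩ := hcomp w hw hwne
    by_cases hyZ : y ∈ Zset S x.tail
    · obtain ⟨⟨b, rfl⟩, _⟩ := hyZ
      rcases hyc with h | h
      · exact ⟨x.tail, Or.inr rfl, Or.inl (List.IsSuffix.trans ⟨[b], rfl⟩ h)⟩
      · rcases List.suffix_cons_iff.mp h with rfl | h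
        · exact ⟨x.tail, Or.inr rfl, Or.inl ⟨[b], rfl⟩⟩
        · exact ⟨x.tail, Or.inr rfl, Or.inr h⟩
    · exact ⟨y, Or.inl ⟨hy, hyZ⟩, hyc⟩


lemma base_code_eq {S X : Set (List A)} (hmax : MaxSuf S X)
    (hshort : ∀ x ∈ X, x.length < 2) : X = {l | l ∈ S ∧ l.length = 1} := by
  ext l
  constructor
  · intro hl
    refine ⟨hmax.1 hl, ?_⟩
    have h1 : l ≠ [] := fun h => hmax.2.1.1 (h ▸ hl)
    have h2 := hshort l hl
    have h3 := List.length_pos_iff.mpr h1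
    omega
  · rintro ⟨hlS, hlen⟩
    obtain ⟨y, hy, hyc⟩ := hmax.2.2 l hlS (by intro h; subst h; simp at hlen)
    have hylen : y.length = 1 := by
      have h1 : y ≠ [] := fun h => hmax.2.1.1 (h ▸ hy)
      have h2 := hshort y hy
      have h3 := List.length_pos_iff.mpr h1
      omega
    rcases hyc with h | h
    · rwa [h.eq_of_length (by omega)] at hy
    · rwa [← h.eq_of_length (by omega)] at hy

lemma eE1_base {S : Set (List A)} (hFac : Factorial S) (w : List A) :
    eE1 S {l | l ∈ S ∧ l.length = 1} w = (fun q : A × A => ([q.1], q.2)) '' extE S w := by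
  ext ⟨z, c⟩
  constructor
  · rintro ⟨⟨hzS, hlen⟩, hmem⟩
    obtain ⟨a, rfl⟩ := List.length_eq_one_iff.mp hlen
    refine ⟨(a, c), ?_, rfl⟩
    show a :: (w ++ [c]) ∈ S
    simpa using hmem
  · rintro ⟨⟨a, c'⟩, hq, heq⟩
    have hq' : a :: (w ++ [c']) ∈ S := hq
    cases heq
    refine ⟨⟨hFac [a] _ ⟨[], w ++ [c'], by simp⟩ hq', rfl⟩, by simpa using hq'⟩

lemma cL_base {S : Set (List A)} (hFac : Factorial S) (w : List A) :
    cL S {l | l ∈ S ∧ l.length = 1} w = (fun a : A => [a]) '' extL S w := by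
  ext z
  constructor
  · rintro ⟨⟨hzS, hlen⟩, hmem⟩
    obtain ⟨a, rfl⟩ := List.length_eq_one_iff.mp hlen
    exact ⟨a, by simpa [extL] using hmem, rfl⟩
  · rintro ⟨a, ha, rfl⟩
    have haS : a :: w ∈ S := ha
    refine ⟨⟨hFac [a] _ ⟨[], w, by simp⟩ haS, rfl⟩, by simpa using haS⟩


lemma step1 [Finite A] {S : Set (List A)} (hFac : Factorial S)
    (hneu : ∀ w ∈ S, w ≠ [] → mS S w = 0) :
    ∀ (n : ℕ) (X : Set (List A)) (hfin : X.Finite), hfin.toFinset.sum List.length = n →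
      MaxSuf S X → ∀ w : List A,
      ((eE1 S X w).ncard : ℤ) - (cL S X w).ncard =
        ((extE S w).ncard : ℤ) - (extL S w).ncard := by
  classical
  intro n
  induction' n using Nat.strong_induction_on with n IH
  intro X hfin hsum hmax w
  by_cases hlong : ∃ x ∈ X, 2 ≤ x.length
  · obtain ⟨x₀, hx₀, hx₀2⟩ := hlong
    obtain ⟨x, hxF, hxmax'⟩ :=
      hfin.toFinset.exists_max_image List.length ⟨x₀, hfin.mem_toFinset.mpr hx₀⟩
    rw [Set.Finite.mem_toFinset] at hxF
    have hxmax : ∀ y ∈ X, y.length ≤ x.length := fun y hy =>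
      hxmax' y (hfin.mem_toFinset.mpr hy)
    have h2 : 2 ≤ x.length := le_trans hx₀2 (hxmax x₀ hx₀)
    obtain ⟨htne, htS, htX, hxZ, hZX, hmax'⟩ := surgery hFac hmax hxF hxmax h2
    have hlen' : x.tail.length + 1 = x.length := by
      have h1 : x.tail.length = x.length - 1 := List.length_tail
      omega
    set x' := x.tail with hx'd
    set Z := Zset S x' with hZd
    set X' := (X \ Z) ∪ {x'} with hX'd
    have hfinZ : Z.Finite := hfin.subset hZX
    have hfinX' : X'.Finite := (Set.Finite.diff hfin : (X \ Z).Finite).union (Set.finite_singleton x')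
    -- measure decrease
    have hmeas : hfinX'.toFinset.sum List.length < n := by
      have e1 : hfinX'.toFinset = insert x' (hfin.toFinset.filter (fun z => z ∉ Z)) := by
        ext z
        simp only [Set.Finite.mem_toFinset, hX'd, Set.mem_union, Set.mem_diff,
          Set.mem_singleton_iff, Finset.mem_insert, Finset.mem_filter]
        tauto
      have hx'f : x' ∉ hfin.toFinset.filter (fun z => z ∉ Z) := by
        simp only [Finset.mem_filter, Set.Finite.mem_toFinset]
        rintro ⟨h, -⟩
        exact htX h
      have hsum1 : hfinX'.toFinset.sum List.length
          = x'.length + (hfin.toFinset.filter (fun z => z ∉ Z)).sum List.length := by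
        rw [e1, Finset.sum_insert hx'f]
      have hsplit : (hfin.toFinset.filter (fun z => z ∈ Z)).sum List.length
          + (hfin.toFinset.filter (fun z => z ∉ Z)).sum List.length
          = hfin.toFinset.sum List.length :=
        Finset.sum_filter_add_sum_filter_not _ _ _
      have hxmem : x ∈ hfin.toFinset.filter (fun z => z ∈ Z) := by
        simp only [Finset.mem_filter, Set.Finite.mem_toFinset]
        exact ⟨hxF, hxZ⟩
      have hge : x.length ≤ (hfin.toFinset.filter (fun z => z ∈ Z)).sum List.length :=
        Finset.single_le_sum (fun i _ => Nat.zero_le _) hxmem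
      omega
    -- counting identities
    have c1 : (eE1 S X w).ncard = (eE1 S (X \ Z) w).ncard + (eE1 S Z w).ncard :=
      split_ncard (fun p : List A × A => p.1) _ hZX (eE1_finite hfin w)
    have c2 : (cL S X w).ncard = (cL S (X \ Z) w).ncard + (cL S Z w).ncard :=
      split_ncard (fun p => p) _ hZX (cL_finite hfin w)
    have hsing : ({x'} : Set (List A)) ⊆ X' := fun z hz => Or.inr hz
    have hXd : X' \ {x'} = X \ Z := by
      ext z
      simp only [hX'd, Set.mem_diff, Set.mem_union, Set.mem_singleton_iff]
      constructor
      · rintro ⟨h1 | h1, h2⟩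
        · exact h1
        · exact absurd h1 h2
      · rintro ⟨h1, h2⟩
        exact ⟨Or.inl ⟨h1, h2⟩, fun h => htX (h ▸ h1)⟩
    have c3 : (eE1 S X' w).ncard = (eE1 S (X \ Z) w).ncard + (eE1 S {x'} w).ncard := by
      have := split_ncard (fun p : List A × A => p.1) (fun p => p.1 ++ w ++ [p.2] ∈ S)
        hsing (eE1_finite hfinX' w)
      rwa [show ({p : List A × A | p.1 ∈ X' \ {x'} ∧ p.1 ++ w ++ [p.2] ∈ S}) = eE1 S (X \ Z) w
        from by rw [← hXd]] at this
    have c4 : (cL S X' w).ncard = (cL S (X \ Z) w).ncard + (cL S {x'} w).ncard := by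
      have := split_ncard (fun p : List A => p) (fun p => p ++ w ∈ S)
        hsing (cL_finite hfinX' w)
      rwa [show ({p : List A | p ∈ X' \ {x'} ∧ p ++ w ∈ S}) = cL S (X \ Z) w
        from by rw [← hXd]] at this
    -- Z-counts
    have i1 : (eE1 S Z w).ncard = (extE S (x' ++ w)).ncard := by
      have himg : eE1 S Z w = (fun q : A × A => (q.1 :: x', q.2)) '' extE S (x' ++ w) := by
        ext ⟨z, c⟩
        constructor
        · rintro ⟨⟨⟨b, rfl⟩, hzS⟩, hmem⟩
          refine ⟨(b, c), ?_, rfl⟩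
          show b :: ((x' ++ w) ++ [c]) ∈ S
          simpa using hmem
        · rintro ⟨⟨b, c'⟩, hq, heq⟩
          have hq' : b :: ((x' ++ w) ++ [c']) ∈ S := hq
          injection heq with h1 h2
          subst h1; subst h2
          refine ⟨⟨⟨b, rfl⟩, ?_⟩, by simpa using hq'⟩
          exact hFac _ _ (List.IsPrefix.isInfix ⟨w ++ [c'], by simp⟩) hq'
      rw [himg, Set.ncard_image_of_injective]
      rintro ⟨a, b⟩ ⟨c, d⟩ h
      simpa [Prod.ext_iff] using h
    have i2 : (cL S Z w).ncard = (extL S (x' ++ w)).ncard := by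
      have himg : cL S Z w = (fun b : A => b :: x') '' extL S (x' ++ w) := by
        ext z
        constructor
        · rintro ⟨⟨⟨b, rfl⟩, hzS⟩, hmem⟩
          exact ⟨b, by simpa [extL] using hmem, rfl⟩
        · rintro ⟨b, hb, rfl⟩
          have hb' : b :: (x' ++ w) ∈ S := hb
          refine ⟨⟨⟨b, rfl⟩, ?_⟩, by simpa using hb'⟩
          exact hFac _ _ (List.IsPrefix.isInfix ⟨w, by simp⟩) hb'
      rw [himg, Set.ncard_image_of_injective]
      intro a b h
      simpa using h
    have i3 : (eE1 S {x'} w).ncard = (extR S (x' ++ w)).ncard := by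
      have himg : eE1 S {x'} w = (fun c : A => (x', c)) '' extR S (x' ++ w) := by
        ext ⟨z, c⟩
        constructor
        · rintro ⟨hz, hmem⟩
          rw [Set.mem_singleton_iff] at hz
          subst hz
          exact ⟨c, by simpa [extR, List.append_assoc] using hmem, rfl⟩
        · rintro ⟨c', hc, heq⟩
          have hc2 : (x' ++ w) ++ [c'] ∈ S := hc
          injection heq with h1 h2
          subst h1; subst h2
          exact ⟨rfl, by simpa using hc2⟩
      rw [himg, Set.ncard_image_of_injective]
      intro a b h
      simpa [Prod.ext_iff] using h
    have i4 : (cL S {x'} w).ncard = if x' ++ w ∈ S then 1 else 0 := by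
      split_ifs with hc
      · rw [show cL S {x'} w = {x'} from ?_, Set.ncard_singleton]
        ext z
        constructor
        · rintro ⟨hz, -⟩; exact hz
        · rintro rfl; exact ⟨rfl, hc⟩
      · rw [show cL S {x'} w = ∅ from ?_, Set.ncard_empty]
        ext z
        simp only [Set.mem_empty_iff_false, iff_false]
        rintro ⟨hz, hm⟩
        rw [Set.mem_singleton_iff] at hz
        subst hz
        exact hc hm
    -- IH
    have hIH := IH _ (hsum ▸ hmeas) X' hfinX' rfl hmax' w
    rw [c3, c4, i3, i4] at hIH
    rw [c1, c2, i1, i2]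
    -- final case analysis
    by_cases hxw : x' ++ w ∈ S
    · have hm := hneu (x' ++ w) hxw (by simp [htne])
      rw [mS] at hm
      rw [if_pos hxw] at hIH
      push_cast at hIH hm ⊢
      linarith
    · have hEe : extE S (x' ++ w) = ∅ := by
        ext ⟨a, b⟩
        simp only [extE, Set.mem_setOf_eq, Set.mem_empty_iff_false, iff_false]
        intro hmem
        exact hxw (hFac _ _ ⟨[a], [b], by simp⟩ hmem)
      have hLe : extL S (x' ++ w) = ∅ := by
        ext a
        simp only [extL, Set.mem_setOf_eq, Set.mem_empty_iff_false, iff_false]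
        intro hmem
        exact hxw (hFac _ _ (List.IsSuffix.isInfix ⟨[a], rfl⟩) hmem)
      have hRe : extR S (x' ++ w) = ∅ := by
        ext a
        simp only [extR, Set.mem_setOf_eq, Set.mem_empty_iff_false, iff_false]
        intro hmem
        exact hxw (hFac _ _ (List.IsPrefix.isInfix ⟨[a], rfl⟩) hmem)
      rw [if_neg hxw, hRe] at hIH
      rw [hEe, hLe]
      simp only [Set.ncard_empty] at hIH ⊢
      push_cast at hIH ⊢
      linarith
  · push_neg at hlong
    have hXb : X = {l | l ∈ S ∧ l.length = 1} :=
      base_code_eq hmax (fun x hx => hlong x hx)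
    subst hXb
    rw [eE1_base hFac w, cL_base hFac w,
      Set.ncard_image_of_injective _ (by rintro ⟨a, b⟩ ⟨c, d⟩ h; simpa [Prod.ext_iff] using h),
      Set.ncard_image_of_injective _ (by intro a b h; simpa using h)]


lemma maxPre_rev {S Y : Set (List A)} (hmax : MaxPre S Y) :
    MaxSuf (rev S) (List.reverse '' Y) := by
  obtain ⟨hYS, hcode, hcomp⟩ := hmax
  refine ⟨?_, ⟨?_, ?_⟩, ?_⟩
  · rintro _ ⟨y, hy, rfl⟩
    exact mem_rev.mpr (by simpa using hYS hy)
  · rintro ⟨y, hy, hye⟩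
    have : y = [] := by simpa using congrArg List.reverse hye
    exact hcode.1 (this ▸ hy)
  · rintro _ ⟨u, hu, rfl⟩ _ ⟨v, hv, rfl⟩ h
    rw [List.reverse_suffix] at h
    rw [hcode.2 u hu v hv h]
  · intro u hu hune
    have h1 : u.reverse ∈ S := mem_rev.mp hu
    have h2 : u.reverse ≠ [] := by
      intro h; apply hune; simpa using congrArg List.reverse h
    obtain ⟨y, hy, hc⟩ := hcomp u.reverse h1 h2
    refine ⟨y.reverse, ⟨y, hy, rfl⟩, ?_⟩
    rcases hc with h | h
    · left
      have := List.reverse_suffix.mpr h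
      simpa using this
    · right
      have := List.reverse_suffix.mpr h
      simpa using this

lemma step1' [Finite A] {S : Set (List A)} (hFac : Factorial S)
    (hneu : ∀ w ∈ S, w ≠ [] → mS S w = 0)
    {Y : Set (List A)} (hfin : Y.Finite) (hmax : MaxPre S Y) (w : List A) :
    ((eE2 S Y w).ncard : ℤ) - (cR S Y w).ncard =
      ((extE S w).ncard : ℤ) - (extR S w).ncard := by
  have hFacr : Factorial (rev S) := rev_factorial hFac
  have hneur : ∀ u ∈ rev S, u ≠ [] → mS (rev S) u = 0 := by
    intro u hu hune
    rw [mS_rev]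
    exact hneu u.reverse (mem_rev.mp hu)
      (by intro h; apply hune; simpa using congrArg List.reverse h)
  have hmaxr : MaxSuf (rev S) (List.reverse '' Y) := maxPre_rev hmax
  have hfinr : (List.reverse '' Y).Finite := hfin.image _
  have hkey := step1 hFacr hneur _ (List.reverse '' Y) hfinr rfl hmaxr w.reverse
  have tL : (cL (rev S) (List.reverse '' Y) w.reverse).ncard = (cR S Y w).ncard := by
    have himg : cL (rev S) (List.reverse '' Y) w.reverse
        = (fun y : List A => y.reverse) '' cR S Y w := by
      ext z
      constructor
      · rintro ⟨⟨y, hy, rfl⟩, hmem⟩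
        exact ⟨y, ⟨hy, by simpa [List.reverse_append] using mem_rev.mp hmem⟩, rfl⟩
      · rintro ⟨y, ⟨hy, hmem⟩, rfl⟩
        exact ⟨⟨y, hy, rfl⟩, mem_rev.mpr (by simpa [List.reverse_append] using hmem)⟩
    rw [himg, Set.ncard_image_of_injective _ List.reverse_injective]
  have tE : (eE1 (rev S) (List.reverse '' Y) w.reverse).ncard = (eE2 S Y w).ncard := by
    have himg : eE1 (rev S) (List.reverse '' Y) w.reverse
        = (fun q : A × List A => (q.2.reverse, q.1)) '' eE2 S Y w := by
      ext ⟨z, c⟩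
      constructor
      · rintro ⟨⟨y, hy, rfl⟩, hmem⟩
        refine ⟨(c, y), ⟨hy, ?_⟩, rfl⟩
        have := mem_rev.mp hmem
        simpa [List.reverse_append] using this
      · rintro ⟨⟨c', y⟩, ⟨hy, hmem⟩, heq⟩
        injection heq with h1 h2
        subst h1; subst h2
        exact ⟨⟨y, hy, rfl⟩, mem_rev.mpr (by simpa [List.reverse_append] using hmem)⟩
    rw [himg, Set.ncard_image_of_injective]
    rintro ⟨a, b⟩ ⟨c, d⟩ h
    simp only [Prod.mk.injEq] at h
    obtain ⟨h1, h2⟩ := h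
    have h3 : b = d := by simpa using congrArg List.reverse h1
    simp [Prod.ext_iff, h2, h3]
  have tE2 : (extE (rev S) w.reverse).ncard = (extE S w).ncard := by
    rw [extE_rev_ncard]; simp
  have tL2 : (extL (rev S) w.reverse).ncard = (extR S w).ncard := by
    rw [extL_rev]; simp
  rw [tL, tE, tE2, tL2] at hkey
  exact hkey

lemma eXY_base {S Y : Set (List A)} (hFac : Factorial S) (w : List A) :
    eXY S {l | l ∈ S ∧ l.length = 1} Y w = (fun q : A × List A => ([q.1], q.2)) '' eE2 S Y w := by
  ext ⟨z, y⟩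
  constructor
  · rintro ⟨⟨hzS, hlen⟩, hy, hmem⟩
    obtain ⟨a, rfl⟩ := List.length_eq_one_iff.mp hlen
    exact ⟨(a, y), ⟨hy, by simpa using hmem⟩, rfl⟩
  · rintro ⟨⟨a, y'⟩, ⟨hy, hmem⟩, heq⟩
    injection heq with h1 h2
    subst h1; subst h2
    have hmem' : a :: (w ++ y') ∈ S := hmem
    exact ⟨⟨hFac [a] _ ⟨[], w ++ y', by simp⟩ hmem', rfl⟩, hy, by simpa using hmem'⟩

lemma step2 [Finite A] {S : Set (List A)} (hFac : Factorial S)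
    (hneu : ∀ w ∈ S, w ≠ [] → mS S w = 0)
    {Y : Set (List A)} (hfinY : Y.Finite) (hmaxY : MaxPre S Y) :
    ∀ (n : ℕ) (X : Set (List A)) (hfin : X.Finite), hfin.toFinset.sum List.length = n →
      MaxSuf S X → ∀ w : List A,
      ((eXY S X Y w).ncard : ℤ) - (cL S X w).ncard =
        ((eE2 S Y w).ncard : ℤ) - (extL S w).ncard := by
  classical
  intro n
  induction' n using Nat.strong_induction_on with n IH
  intro X hfin hsum hmax w
  by_cases hlong : ∃ x ∈ X, 2 ≤ x.length
  · obtain ⟨x₀, hx₀, hx₀2⟩ := hlong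
    obtain ⟨x, hxF, hxmax'⟩ :=
      hfin.toFinset.exists_max_image List.length ⟨x₀, hfin.mem_toFinset.mpr hx₀⟩
    rw [Set.Finite.mem_toFinset] at hxF
    have hxmax : ∀ y ∈ X, y.length ≤ x.length := fun y hy =>
      hxmax' y (hfin.mem_toFinset.mpr hy)
    have h2 : 2 ≤ x.length := le_trans hx₀2 (hxmax x₀ hx₀)
    obtain ⟨htne, htS, htX, hxZ, hZX, hmax'⟩ := surgery hFac hmax hxF hxmax h2
    have hlen' : x.tail.length + 1 = x.length := by
      have h1 : x.tail.length = x.length - 1 := List.length_tail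
      omega
    set x' := x.tail with hx'd
    set Z := Zset S x' with hZd
    set X' := (X \ Z) ∪ {x'} with hX'd
    have hfinZ : Z.Finite := hfin.subset hZX
    have hfinX' : X'.Finite := (Set.Finite.diff hfin : (X \ Z).Finite).union (Set.finite_singleton x')
    have hmeas : hfinX'.toFinset.sum List.length < n := by
      have e1 : hfinX'.toFinset = insert x' (hfin.toFinset.filter (fun z => z ∉ Z)) := by
        ext z
        simp only [Set.Finite.mem_toFinset, hX'd, Set.mem_union, Set.mem_diff,
          Set.mem_singleton_iff, Finset.mem_insert, Finset.mem_filter]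
        tauto
      have hx'f : x' ∉ hfin.toFinset.filter (fun z => z ∉ Z) := by
        simp only [Finset.mem_filter, Set.Finite.mem_toFinset]
        rintro ⟨h, -⟩
        exact htX h
      have hsum1 : hfinX'.toFinset.sum List.length
          = x'.length + (hfin.toFinset.filter (fun z => z ∉ Z)).sum List.length := by
        rw [e1, Finset.sum_insert hx'f]
      have hsplit : (hfin.toFinset.filter (fun z => z ∈ Z)).sum List.length
          + (hfin.toFinset.filter (fun z => z ∉ Z)).sum List.length
          = hfin.toFinset.sum List.length :=
        Finset.sum_filter_add_sum_filter_not _ _ _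
      have hxmem : x ∈ hfin.toFinset.filter (fun z => z ∈ Z) := by
        simp only [Finset.mem_filter, Set.Finite.mem_toFinset]
        exact ⟨hxF, hxZ⟩
      have hge : x.length ≤ (hfin.toFinset.filter (fun z => z ∈ Z)).sum List.length :=
        Finset.single_le_sum (fun i _ => Nat.zero_le _) hxmem
      omega
    have c1 : (eXY S X Y w).ncard = (eXY S (X \ Z) Y w).ncard + (eXY S Z Y w).ncard :=
      split_ncard (fun p : List A × List A => p.1) _ hZX (eXY_finite hfin hfinY w)
    have c2 : (cL S X w).ncard = (cL S (X \ Z) w).ncard + (cL S Z w).ncard :=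
      split_ncard (fun p => p) _ hZX (cL_finite hfin w)
    have hsing : ({x'} : Set (List A)) ⊆ X' := fun z hz => Or.inr hz
    have hXd : X' \ {x'} = X \ Z := by
      ext z
      simp only [hX'd, Set.mem_diff, Set.mem_union, Set.mem_singleton_iff]
      constructor
      · rintro ⟨h1 | h1, h2⟩
        · exact h1
        · exact absurd h1 h2
      · rintro ⟨h1, h2⟩
        exact ⟨Or.inl ⟨h1, h2⟩, fun h => htX (h ▸ h1)⟩
    have c3 : (eXY S X' Y w).ncard = (eXY S (X \ Z) Y w).ncard + (eXY S {x'} Y w).ncard := by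
      have := split_ncard (fun p : List A × List A => p.1)
        (fun p => p.2 ∈ Y ∧ p.1 ++ w ++ p.2 ∈ S) hsing (eXY_finite hfinX' hfinY w)
      rwa [show ({p : List A × List A | p.1 ∈ X' \ {x'} ∧ p.2 ∈ Y ∧ p.1 ++ w ++ p.2 ∈ S})
        = eXY S (X \ Z) Y w from by rw [← hXd]] at this
    have c4 : (cL S X' w).ncard = (cL S (X \ Z) w).ncard + (cL S {x'} w).ncard := by
      have := split_ncard (fun p : List A => p) (fun p => p ++ w ∈ S)
        hsing (cL_finite hfinX' w)
      rwa [show ({p : List A | p ∈ X' \ {x'} ∧ p ++ w ∈ S}) = cL S (X \ Z) w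
        from by rw [← hXd]] at this
    have i1 : (eXY S Z Y w).ncard = (eE2 S Y (x' ++ w)).ncard := by
      have himg : eXY S Z Y w = (fun q : A × List A => (q.1 :: x', q.2)) '' eE2 S Y (x' ++ w) := by
        ext ⟨z, y⟩
        constructor
        · rintro ⟨⟨⟨b, rfl⟩, hzS⟩, hy, hmem⟩
          refine ⟨(b, y), ⟨hy, ?_⟩, rfl⟩
          show b :: ((x' ++ w) ++ y) ∈ S
          simpa using hmem
        · rintro ⟨⟨b, y'⟩, ⟨hy, hmem⟩, heq⟩
          injection heq with h1 h2
          subst h1; subst h2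
          have hmem' : b :: ((x' ++ w) ++ y') ∈ S := hmem
          refine ⟨⟨⟨b, rfl⟩, ?_⟩, hy, by simpa using hmem'⟩
          exact hFac _ _ (List.IsPrefix.isInfix ⟨w ++ y', by simp⟩) hmem'
      rw [himg, Set.ncard_image_of_injective]
      rintro ⟨a, b⟩ ⟨c, d⟩ h
      simpa [Prod.ext_iff] using h
    have i2 : (cL S Z w).ncard = (extL S (x' ++ w)).ncard := by
      have himg : cL S Z w = (fun b : A => b :: x') '' extL S (x' ++ w) := by
        ext z
        constructor
        · rintro ⟨⟨⟨b, rfl⟩, hzS⟩, hmem⟩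
          exact ⟨b, by simpa [extL] using hmem, rfl⟩
        · rintro ⟨b, hb, rfl⟩
          have hb' : b :: (x' ++ w) ∈ S := hb
          refine ⟨⟨⟨b, rfl⟩, ?_⟩, by simpa using hb'⟩
          exact hFac _ _ (List.IsPrefix.isInfix ⟨w, by simp⟩) hb'
      rw [himg, Set.ncard_image_of_injective]
      intro a b h
      simpa using h
    have i3 : (eXY S {x'} Y w).ncard = (cR S Y (x' ++ w)).ncard := by
      have himg : eXY S {x'} Y w = (fun y : List A => (x', y)) '' cR S Y (x' ++ w) := by
        ext ⟨z, y⟩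
        constructor
        · rintro ⟨hz, hy, hmem⟩
          rw [Set.mem_singleton_iff] at hz
          subst hz
          exact ⟨y, ⟨hy, by simpa [List.append_assoc] using hmem⟩, rfl⟩
        · rintro ⟨y', ⟨hy, hmem⟩, heq⟩
          injection heq with h1 h2
          subst h1; subst h2
          exact ⟨rfl, hy, by simpa using hmem⟩
      rw [himg, Set.ncard_image_of_injective]
      intro a b h
      simpa [Prod.ext_iff] using h
    have i4 : (cL S {x'} w).ncard = if x' ++ w ∈ S then 1 else 0 := by
      split_ifs with hc
      · rw [show cL S {x'} w = {x'} from ?_, Set.ncard_singleton]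
        ext z
        constructor
        · rintro ⟨hz, -⟩; exact hz
        · rintro rfl; exact ⟨rfl, hc⟩
      · rw [show cL S {x'} w = ∅ from ?_, Set.ncard_empty]
        ext z
        simp only [Set.mem_empty_iff_false, iff_false]
        rintro ⟨hz, hm⟩
        rw [Set.mem_singleton_iff] at hz
        subst hz
        exact hc hm
    have hIH := IH _ (hsum ▸ hmeas) X' hfinX' rfl hmax' w
    rw [c3, c4, i3, i4] at hIH
    rw [c1, c2, i1, i2]
    have hst := step1' hFac hneu hfinY hmaxY (x' ++ w)
    by_cases hxw : x' ++ w ∈ S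
    · have hm := hneu (x' ++ w) hxw (by simp [htne])
      rw [mS] at hm
      rw [if_pos hxw] at hIH
      push_cast at hIH hm hst ⊢
      linarith
    · have hLe : extL S (x' ++ w) = ∅ := by
        ext a
        simp only [extL, Set.mem_setOf_eq, Set.mem_empty_iff_false, iff_false]
        intro hmem
        exact hxw (hFac _ _ (List.IsSuffix.isInfix ⟨[a], rfl⟩) hmem)
      have hEe : extE S (x' ++ w) = ∅ := by
        ext ⟨a, b⟩
        simp only [extE, Set.mem_setOf_eq, Set.mem_empty_iff_false, iff_false]
        intro hmem
        exact hxw (hFac _ _ ⟨[a], [b], by simp⟩ hmem)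
      have hRe : extR S (x' ++ w) = ∅ := by
        ext a
        simp only [extR, Set.mem_setOf_eq, Set.mem_empty_iff_false, iff_false]
        intro hmem
        exact hxw (hFac _ _ (List.IsPrefix.isInfix ⟨[a], rfl⟩) hmem)
      rw [if_neg hxw] at hIH
      rw [hLe]
      rw [hEe, hRe] at hst
      simp only [Set.ncard_empty] at hst ⊢
      push_cast at hIH hst ⊢
      linarith
  · push_neg at hlong
    have hXb : X = {l | l ∈ S ∧ l.length = 1} :=
      base_code_eq hmax (fun x hx => hlong x hx)
    subst hXb
    rw [eXY_base hFac w, cL_base hFac w,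
      Set.ncard_image_of_injective _ (by
        rintro ⟨a, b⟩ ⟨c, d⟩ h
        simpa [Prod.ext_iff] using h),
      Set.ncard_image_of_injective _ (by intro a b h; simpa using h)]

lemma star [Finite A] {S : Set (List A)} (hFac : Factorial S)
    (hneu : ∀ w ∈ S, w ≠ [] → mS S w = 0) {X Y : Set (List A)}
    (hfinX : X.Finite) (hfinY : Y.Finite) (hmX : MaxSuf S X) (hmY : MaxPre S Y) (w : List A) :
    ((eXY S X Y w).ncard : ℤ) = (cL S X w).ncard + (cR S Y w).ncard - 1 + mS S w := by
  have h2 := step2 hFac hneu hfinY hmY _ X hfinX rfl hmX w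
  have h1 := step1' hFac hneu hfinY hmY w
  rw [mS]
  push_cast at h1 h2 ⊢
  linarith

end MBD

open Paper in
/-- Maximal bifix decoding of a recurrent neutral set: if `f : B* → A*` is a coding
morphism for a finite `S`-maximal bifix code `X` (a morphism mapping the letters of `B`
bijectively onto `X`), then `U = f⁻¹(S)` is a neutral set with `χ(U) = χ(S)`. -/
theorem maximal_bifix_decoding_neutral
    {A B : Type*} [Fintype A] [Fintype B] (S X : Set (List A))
    (hS : Recurrent S) (hN : Neutral S)
    (hXfin : X.Finite) (hX : MaxBifixCode S X)
    (f : List B → List A)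
    (hf : ∀ u v : List B, f (u ++ v) = f u ++ f v)
    (hbij : Set.BijOn (fun b : B => f [b]) Set.univ X) :
    Neutral (f ⁻¹' S) ∧ chiS (f ⁻¹' S) = chiS S := by
  classical
  by_cases hSemp : S = ∅
  · subst hSemp
    have hU : f ⁻¹' (∅ : Set (List A)) = ∅ := Set.preimage_empty
    refine ⟨⟨?_, ?_⟩, ?_⟩
    · intro u v _ hv
      rw [hU] at hv
      exact absurd hv (Set.notMem_empty v)
    · intro w hw
      rw [hU] at hw
      exact absurd hw (Set.notMem_empty w)
    · rw [hU]
      simp [chiS, mS, extE, extL, extR]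
  · have hFac : Factorial S := hS.2.1
    have hneu : ∀ w ∈ S, w ≠ [] → mS S w = 0 := hN.2
    -- a nonempty word, hence a letter, in S
    have hw0 : ∃ w ∈ S, w ≠ [] := by
      by_contra h
      push_neg at h
      apply hS.1
      obtain ⟨u, hu⟩ := Set.nonempty_iff_ne_empty.mpr hSemp
      have hnil : ([] : List A) ∈ S := (h u hu) ▸ hu
      ext l
      simp only [Set.mem_singleton_iff]
      exact ⟨fun hl => h l hl, fun hl => hl ▸ hnil⟩
    obtain ⟨w0, hw0S, hw0ne⟩ := hw0
    obtain ⟨a, t, rfl⟩ := List.exists_cons_of_ne_nil hw0ne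
    have haS : [a] ∈ S := hFac [a] (a :: t) ⟨[], t, rfl⟩ hw0S
    -- X is nonempty
    have hXne : X.Nonempty := by
      by_contra h
      rw [Set.not_nonempty_iff_eq_empty] at h
      have hsing : BifixCode {[a]} := by
        refine ⟨⟨by simp, ?_⟩, ⟨by simp, ?_⟩⟩
        · rintro u hu v hv _
          simp only [Set.mem_singleton_iff] at hu hv
          rw [hu, hv]
        · rintro u hu v hv _
          simp only [Set.mem_singleton_iff] at hu hv
          rw [hu, hv]
      have := hX.2.2 {[a]} hsing (by
        rintro u hu
        simp only [Set.mem_singleton_iff] at hu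
        rw [hu]; exact haS) (h ▸ Set.empty_subset _)
      rw [h] at this
      exact absurd this.symm (by simp [Set.eq_empty_iff_forall_notMem])
    obtain ⟨hPre, hSuf⟩ := MBD.bifix_max_comp hS hXfin hX hXne
    set U := f ⁻¹' S with hUdef
    set g : B → List A := fun b => f [b] with hgdef
    have ginj : Function.Injective g := fun b c h =>
      hbij.injOn (Set.mem_univ b) (Set.mem_univ c) h
    have gX : ∀ b, g b ∈ X := fun b => hbij.mapsTo (Set.mem_univ b)
    have hf0 : f [] = [] := by
      have h := hf [] []
      simp only [List.append_nil] at h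
      have hl := congrArg List.length h
      rw [List.length_append] at hl
      exact List.length_eq_zero_iff.mp (by omega)
    have hfcons : ∀ (b : B) (u : List B), f (b :: u) = g b ++ f u := fun b u => hf [b] u
    have hfne : ∀ u : List B, u ≠ [] → f u ≠ [] := by
      intro u hu
      obtain ⟨b, u', rfl⟩ := List.exists_cons_of_ne_nil hu
      rw [hfcons]
      intro h
      have : g b = [] := (List.append_eq_nil_iff.mp h).1
      exact hX.2.1.1.1 (this ▸ gX b)
    have hUfac : Factorial U := by
      intro u v huv hv
      obtain ⟨s, t', hst⟩ := huv
      have : f u <:+: f v := ⟨f s, f t', by rw [← hst, hf (s ++ u) t', hf s u]⟩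
      exact hFac _ _ this hv
    -- count transfers
    have kL : ∀ u : List B, (extL U u).ncard = (MBD.cL S X (f u)).ncard := by
      intro u
      have himg : g '' extL U u = MBD.cL S X (f u) := by
        ext x
        constructor
        · rintro ⟨b, hb, rfl⟩
          have hb' : f (b :: u) ∈ S := hb
          rw [hfcons] at hb'
          exact ⟨gX b, hb'⟩
        · rintro ⟨hx1, hx2⟩
          obtain ⟨b, -, rfl⟩ := hbij.surjOn hx1
          refine ⟨b, ?_, rfl⟩
          show f (b :: u) ∈ S
          rw [hfcons]
          exact hx2
      rw [← himg, Set.ncard_image_of_injective _ ginj]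
    have kR : ∀ u : List B, (extR U u).ncard = (MBD.cR S X (f u)).ncard := by
      intro u
      have himg : g '' extR U u = MBD.cR S X (f u) := by
        ext x
        constructor
        · rintro ⟨b, hb, rfl⟩
          have hb' : f (u ++ [b]) ∈ S := hb
          rw [hf u [b]] at hb'
          exact ⟨gX b, hb'⟩
        · rintro ⟨hx1, hx2⟩
          obtain ⟨b, -, rfl⟩ := hbij.surjOn hx1
          refine ⟨b, ?_, rfl⟩
          show f (u ++ [b]) ∈ S
          rw [hf u [b]]
          exact hx2
      rw [← himg, Set.ncard_image_of_injective _ ginj]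
    have kE : ∀ u : List B, (extE U u).ncard = (MBD.eXY S X X (f u)).ncard := by
      intro u
      have hGinj : Function.Injective (fun q : B × B => (g q.1, g q.2)) := by
        rintro ⟨b, c⟩ ⟨b', c'⟩ h
        simp only [Prod.mk.injEq] at h
        simp [Prod.ext_iff, ginj h.1, ginj h.2]
      have himg : (fun q : B × B => (g q.1, g q.2)) '' extE U u = MBD.eXY S X X (f u) := by
        ext ⟨x, y⟩
        constructor
        · rintro ⟨⟨b, c⟩, hb, heq⟩
          injection heq with h1 h2
          subst h1; subst h2
          have hb' : f (b :: (u ++ [c])) ∈ S := hb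
          rw [hfcons, hf u [c]] at hb'
          exact ⟨gX b, gX c, by simpa [List.append_assoc] using hb'⟩
        · rintro ⟨hx1, hy1, hmem⟩
          obtain ⟨b, -, rfl⟩ := hbij.surjOn hx1
          obtain ⟨c, -, rfl⟩ := hbij.surjOn hy1
          refine ⟨(b, c), ?_, rfl⟩
          show f (b :: (u ++ [c])) ∈ S
          rw [hfcons, hf u [c]]
          simpa [List.append_assoc] using hmem
      rw [← himg, Set.ncard_image_of_injective _ hGinj]
    have hmSU : ∀ u : List B, mS U u = mS S (f u) := by
      intro u
      have hstar := MBD.star hFac hneu hXfin hXfin hSuf hPre (f u)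
      rw [mS] at hstar
      rw [mS, mS, kE u, kL u, kR u]
      push_cast at hstar ⊢
      linarith
    refine ⟨⟨hUfac, ?_⟩, ?_⟩
    · intro u hu hune
      rw [hmSU u]
      exact hneu (f u) hu (hfne u hune)
    · rw [chiS, chiS, hmSU [], hf0]
end

section
/- Let T be an interval exchange transformation over I without connection of length ≥ 1. Let w ∈ L(T) and a, b ∈ L_{L(T)}(w) (resp. a, b ∈ R_{L(T)}(w)). Then the vertices 1⊗a and 1⊗b (resp. a⊗1 and b⊗1) lie in the same connected component of the extension graph E(w) if and only if J_a and J_b (resp. I_a and I_b) lie in the same component of I. -/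
namespace Paper

/-- An interval exchange transformation (with flips) on the open interval `]l, r[`,
with intervals indexed by the finite alphabet `A` : the families `(Ia a)` and `(Ja a)`
are partitions of `]l, r[` minus `Card A - 1` points into nonempty open intervals
(pairwise disjoint, hence ordered by suitable total orders on `A`), with `Ia a` and
`Ja a` of the same length, and the restriction of `T` to `Ia a` is either a translation
or a symmetry from `Ia a` onto `Ja a`. -/
structure IET (A : Type*) [Fintype A] where
  l : ℝ
  r : ℝ
  hlr : l < r
  Ia : A → Set ℝ
  Ja : A → Set ℝ
  T : ℝ → ℝ
  hIa : ∀ a, ∃ p q : ℝ, p < q ∧ Ia a = Set.Ioo p q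
  hJa : ∀ a, ∃ p q : ℝ, p < q ∧ Ja a = Set.Ioo p q
  hIsub : ∀ a, Ia a ⊆ Set.Ioo l r
  hJsub : ∀ a, Ja a ⊆ Set.Ioo l r
  hIdisj : Pairwise (Function.onFun Disjoint Ia)
  hJdisj : Pairwise (Function.onFun Disjoint Ja)
  hIcard : (Set.Ioo l r \ ⋃ a, Ia a).ncard = Fintype.card A - 1
  hJcard : (Set.Ioo l r \ ⋃ a, Ja a).ncard = Fintype.card A - 1
  hlen : ∀ a, MeasureTheory.volume (Ia a) = MeasureTheory.volume (Ja a)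
  hTimage : ∀ a, T '' Ia a = Ja a
  hTiso : ∀ a, (∃ t : ℝ, ∀ x ∈ Ia a, T x = x + t) ∨ (∃ s : ℝ, ∀ x ∈ Ia a, T x = s - x)

namespace IET

variable {A : Type*} [Fintype A] (E : IET A)

/-- The interval `I_w` of points whose orbit starts by visiting the intervals
prescribed by the word `w` (with `I_ε = ]l, r[`). -/
def Iw (w : List A) : Set ℝ :=
  {x ∈ Set.Ioo E.l E.r | ∀ i : Fin w.length, E.T^[(i : ℕ)] x ∈ E.Ia (w.get i)}

/-- `J_w = T^{|w|}(I_w)`. -/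
def Jw (w : List A) : Set ℝ := E.T^[w.length] '' E.Iw w

/-- The natural coding language `L(T)`: the set of factors of the natural codings
`Σ_T(z)` of points `z` whose whole orbit stays in `⋃ a, I_a`. -/
def lang : Set (List A) :=
  {w | ∃ z ∈ Set.Ioo E.l E.r, (∀ n : ℕ, E.T^[n] z ∈ ⋃ a, E.Ia a) ∧
        ∃ k : ℕ, ∀ i : Fin w.length, E.T^[k + (i : ℕ)] z ∈ E.Ia (w.get i)}

/-- The singularities of `T`: the points of `]l, r[` separating the intervals `I_a`. -/
def singT : Set ℝ := Set.Ioo E.l E.r \ ⋃ a, E.Ia a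

/-- The singularities of `T⁻¹`: the points of `]l, r[` separating the intervals `J_a`. -/
def singTinv : Set ℝ := Set.Ioo E.l E.r \ ⋃ a, E.Ja a

/-- A connection of length `n`: a triple `(x, y, n)` where `x` is a singularity of
`T⁻¹`, `y` is a singularity of `T`, and `Tⁿ x = y`, the orbit of `x` being defined
up to time `n`. -/
def IsConnection (x y : ℝ) (n : ℕ) : Prop :=
  x ∈ E.singTinv ∧ y ∈ E.singT ∧ E.T^[n] x = y ∧ ∀ i < n, E.T^[i] x ∉ E.singT

end IET

variable {A : Type*}

/-- The vertex set of the extension graph of `w` : the disjoint union of (a copy of)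
`L_S(w)` and (a copy of) `R_S(w)`. -/
def extVerts (S : Set (List A)) (w : List A) : Set (A ⊕ A) :=
  {v | Sum.elim (fun a => a :: w ∈ S) (fun b => w ++ [b] ∈ S) v}

/-- The edge relation of the extension graph of `w`: `1 ⊗ a` is joined to `b ⊗ 1`
whenever `awb ∈ S`. -/
def extRel (S : Set (List A)) (w : List A) : (A ⊕ A) → (A ⊕ A) → Prop :=
  fun u v => ∃ a b : A, u = Sum.inl a ∧ v = Sum.inr b ∧ a :: (w ++ [b]) ∈ S

/-- The extension graph `E(w)` of `w` with respect to `S`. -/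
def extGraph (S : Set (List A)) (w : List A) : SimpleGraph (extVerts S w) :=
  SimpleGraph.induce (extVerts S w) (SimpleGraph.fromRel (extRel S w))

end Paper

namespace Paper
namespace IET

open Set

variable {A : Type*} [Fintype A] (E : IET A)

/-- Full (forward) orbit stays in the union of the `Ia`. -/
def FO (x : ℝ) : Prop := ∀ n : ℕ, E.T^[n] x ∈ ⋃ a, E.Ia a

variable {E}

lemma Ia_subset_Ioo {a : A} : E.Ia a ⊆ Set.Ioo E.l E.r := E.hIsub a
lemma Ja_subset_Ioo {a : A} : E.Ja a ⊆ Set.Ioo E.l E.r := E.hJsub a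

lemma union_Ia_subset : (⋃ a, E.Ia a) ⊆ Set.Ioo E.l E.r :=
  Set.iUnion_subset fun a => E.hIsub a

lemma mapsTo_Ja {a : A} {x : ℝ} (hx : x ∈ E.Ia a) : E.T x ∈ E.Ja a := by
  rw [← E.hTimage a]; exact ⟨x, hx, rfl⟩

lemma FO.mem_Ioo {x : ℝ} (h : E.FO x) : x ∈ Set.Ioo E.l E.r :=
  union_Ia_subset (by simpa using h 0)

lemma FO.tail {x : ℝ} (h : E.FO x) (m : ℕ) : E.FO (E.T^[m] x) := by
  intro n
  rw [← Function.iterate_add_apply]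
  exact h (n + m)

lemma FO.of_T_eq {x y : ℝ} (h : E.FO x) (hy : E.T y = x) (hy2 : y ∈ ⋃ a, E.Ia a) :
    E.FO y := by
  intro n
  cases n with
  | zero => simpa using hy2
  | succ n => rw [Function.iterate_succ_apply, hy]; exact h n

lemma isOpen_Ia {a : A} : IsOpen (E.Ia a) := by
  obtain ⟨p, q, _, h⟩ := E.hIa a; rw [h]; exact isOpen_Ioo

lemma isOpen_Ja {a : A} : IsOpen (E.Ja a) := by
  obtain ⟨p, q, _, h⟩ := E.hJa a; rw [h]; exact isOpen_Ioo

lemma preconn_Ia {a : A} : IsPreconnected (E.Ia a) := by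
  obtain ⟨p, q, _, h⟩ := E.hIa a; rw [h]; exact isPreconnected_Ioo

lemma preconn_Ja {a : A} : IsPreconnected (E.Ja a) := by
  obtain ⟨p, q, _, h⟩ := E.hJa a; rw [h]; exact isPreconnected_Ioo

lemma Ia_nonempty {a : A} : (E.Ia a).Nonempty := by
  obtain ⟨p, q, hpq, h⟩ := E.hIa a; rw [h]; exact Set.nonempty_Ioo.2 hpq

lemma Ja_nonempty {a : A} : (E.Ja a).Nonempty := by
  obtain ⟨p, q, hpq, h⟩ := E.hJa a; rw [h]; exact Set.nonempty_Ioo.2 hpq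

lemma ordconn_Ia {a : A} {x y z : ℝ} (hx : x ∈ E.Ia a) (hy : y ∈ E.Ia a)
    (h1 : x ≤ z) (h2 : z ≤ y) : z ∈ E.Ia a := by
  obtain ⟨p, q, _, h⟩ := E.hIa a
  rw [h] at hx hy ⊢
  exact ⟨lt_of_lt_of_le hx.1 h1, lt_of_le_of_lt h2 hy.2⟩

lemma Ia_eq_of_mem {a b : A} {x : ℝ} (hx : x ∈ E.Ia a) (hx' : x ∈ E.Ia b) : a = b := by
  by_contra h
  exact (E.hIdisj h).le_bot ⟨hx, hx'⟩ 

lemma Ja_eq_of_mem {a b : A} {x : ℝ} (hx : x ∈ E.Ja a) (hx' : x ∈ E.Ja b) : a = b := by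
  by_contra h
  exact (E.hJdisj h).le_bot ⟨hx, hx'⟩ 

lemma not_mem_singT_of_Ia {a : A} {x : ℝ} (hx : x ∈ E.Ia a) : x ∉ E.singT :=
  fun h => h.2 (Set.mem_iUnion.2 ⟨a, hx⟩)

lemma not_mem_singTinv_of_Ja {a : A} {x : ℝ} (hx : x ∈ E.Ja a) : x ∉ E.singTinv :=
  fun h => h.2 (Set.mem_iUnion.2 ⟨a, hx⟩)

/-- membership in `Iw`. -/
lemma mem_Iw {w : List A} {x : ℝ} :
    x ∈ E.Iw w ↔ x ∈ Set.Ioo E.l E.r ∧ ∀ i : Fin w.length, E.T^[(i : ℕ)] x ∈ E.Ia (w.get i) :=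
  Iff.rfl

lemma mem_Iw_nil {x : ℝ} : x ∈ E.Iw ([] : List A) ↔ x ∈ Set.Ioo E.l E.r := by
  simp [mem_Iw]

lemma mem_Iw_cons {c : A} {w : List A} {x : ℝ} :
    x ∈ E.Iw (c :: w) ↔ x ∈ E.Ia c ∧ E.T x ∈ E.Iw w := by
  constructor
  · rintro ⟨hIoo, h⟩
    have h0 : x ∈ E.Ia c := by simpa using h ⟨0, by simp⟩
    refine ⟨h0, Ja_subset_Ioo (mapsTo_Ja h0), fun i => ?_⟩
    have := h i.succ
    simpa [Function.iterate_succ_apply] using this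
  · rintro ⟨h0, hIoo, h⟩
    refine ⟨Ia_subset_Ioo h0, fun i => ?_⟩
    refine Fin.cases ?_ (fun j => ?_) i
    · simpa using h0
    · have := h j
      simpa [Function.iterate_succ_apply] using this

end IET
end Paper
namespace Paper
namespace IET

open Set

variable {A : Type*} [Fintype A] {E : IET A}

/-- `T` is affine (slope `±1`) on each `Ia c`. -/
lemma exists_affine1 (E : IET A) (c : A) :
    ∃ σ ε : ℝ, (σ = 1 ∨ σ = -1) ∧ ∀ x ∈ E.Ia c, E.T x = σ * x + ε := by
  rcases E.hTiso c with ⟨t, ht⟩ | ⟨s, hs⟩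
  · exact ⟨1, t, Or.inl rfl, fun x hx => by rw [ht x hx]; ring⟩
  · exact ⟨-1, s, Or.inr rfl, fun x hx => by rw [hs x hx]; ring⟩

/-- `T^[|w|]` is affine with slope `±1` on the cylinder `Iw w`. -/
lemma exists_affine (E : IET A) (w : List A) :
    ∃ σ ε : ℝ, (σ = 1 ∨ σ = -1) ∧ ∀ x ∈ E.Iw w, E.T^[w.length] x = σ * x + ε := by
  induction w with
  | nil => exact ⟨1, 0, Or.inl rfl, fun x _ => by simp⟩
  | cons c w ih =>
    obtain ⟨σ, ε, hσ, hiter⟩ := ih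
    obtain ⟨σ₀, ε₀, hσ₀, hT⟩ := exists_affine1 E c
    refine ⟨σ * σ₀, σ * ε₀ + ε, ?_, fun x hx => ?_⟩
    · rcases hσ with h | h <;> rcases hσ₀ with h' | h' <;> simp [h, h']
    · rw [mem_Iw_cons] at hx
      rw [List.length_cons, Function.iterate_succ_apply, hiter _ hx.2, hT x hx.1]
      ring

lemma Iw_cons_eq (E : IET A) (c : A) (w : List A) {σ₀ ε₀ : ℝ}
    (hT : ∀ x ∈ E.Ia c, E.T x = σ₀ * x + ε₀) :
    E.Iw (c :: w) = E.Ia c ∩ (fun x => σ₀ * x + ε₀) ⁻¹' (E.Iw w) := by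
  ext x
  rw [mem_Iw_cons]
  constructor
  · rintro ⟨h1, h2⟩; exact ⟨h1, by rw [Set.mem_preimage, ← hT x h1]; exact h2⟩
  · rintro ⟨h1, h2⟩; exact ⟨h1, by rw [hT x h1]; exact h2⟩

lemma isOpen_Iw (E : IET A) (w : List A) : IsOpen (E.Iw w) := by
  induction w with
  | nil => rw [Set.ext fun x => (mem_Iw_nil (E := E))]; exact isOpen_Ioo
  | cons c w ih =>
    obtain ⟨σ₀, ε₀, _, hT⟩ := exists_affine1 E c
    rw [Iw_cons_eq E c w hT]
    exact isOpen_Ia.inter (((continuous_const.mul continuous_id).add continuous_const).isOpen_preimage _ ih)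

lemma ordconn_Iw (E : IET A) (w : List A) :
    ∀ x ∈ E.Iw w, ∀ y ∈ E.Iw w, ∀ z, x ≤ z → z ≤ y → z ∈ E.Iw w := by
  induction w with
  | nil =>
    intro x hx y hy z h1 h2
    rw [mem_Iw_nil] at *
    exact ⟨lt_of_lt_of_le hx.1 h1, lt_of_le_of_lt h2 hy.2⟩
  | cons c w ih =>
    intro x hx y hy z h1 h2
    rw [mem_Iw_cons] at hx hy ⊢
    obtain ⟨σ₀, ε₀, hσ₀, hT⟩ := exists_affine1 E c
    have hz : z ∈ E.Ia c := ordconn_Ia hx.1 hy.1 h1 h2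
    refine ⟨hz, ?_⟩
    rw [hT z hz]
    rcases hσ₀ with h | h
    · subst h
      refine ih _ hx.2 _ hy.2 _ ?_ ?_
      · rw [hT x hx.1]; linarith
      · rw [hT y hy.1]; linarith
    · subst h
      refine ih _ hy.2 _ hx.2 _ ?_ ?_
      · rw [hT y hy.1]; linarith
      · rw [hT x hx.1]; linarith

lemma Iw_append_singleton (E : IET A) (w : List A) (d : A) :
    E.Iw (w ++ [d]) = {x ∈ E.Iw w | E.T^[w.length] x ∈ E.Ia d} := by
  induction w with
  | nil =>
    ext x
    simp only [List.nil_append, List.length_nil, Function.iterate_zero_apply]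
    rw [mem_Iw_cons, mem_Iw_nil, Set.mem_sep_iff, mem_Iw_nil]
    constructor
    · rintro ⟨h1, _⟩; exact ⟨Ia_subset_Ioo h1, h1⟩
    · rintro ⟨_, h1⟩; exact ⟨h1, Ja_subset_Ioo (mapsTo_Ja h1)⟩
  | cons c w ih =>
    ext x
    simp only [List.cons_append]
    rw [mem_Iw_cons, Set.mem_sep_iff, mem_Iw_cons, ih, Set.mem_sep_iff]
    constructor
    · rintro ⟨h1, h2, h3⟩
      exact ⟨⟨h1, h2⟩, by rwa [List.length_cons, Function.iterate_succ_apply]⟩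
    · rintro ⟨⟨h1, h2⟩, h3⟩
      exact ⟨h1, h2, by rwa [List.length_cons, Function.iterate_succ_apply] at h3⟩

end IET
end Paper
namespace Paper
namespace IET

open Set

variable {A : Type*} [Fintype A] {E : IET A}

/-- Characterization of the language by full-orbit points in cylinders. -/
lemma mem_lang_iff {w : List A} : w ∈ E.lang ↔ ∃ x, E.FO x ∧ x ∈ E.Iw w := by
  constructor
  · rintro ⟨z, hz, hFO, k, h⟩
    refine ⟨E.T^[k] z, FO.tail hFO k, (FO.tail hFO k).mem_Ioo, fun i => ?_⟩
    rw [← Function.iterate_add_apply, Nat.add_comm]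
    exact h i
  · rintro ⟨x, hFO, hx⟩
    refine ⟨x, hFO.mem_Ioo, hFO, 0, fun i => ?_⟩
    simpa using hx.2 i

lemma cons_mem_lang {c : A} {w : List A} {x : ℝ} (hFO : E.FO x) (hJ : x ∈ E.Ja c)
    (hw : x ∈ E.Iw w) : c :: w ∈ E.lang := by
  rw [← E.hTimage c] at hJ
  obtain ⟨y, hy, hTy⟩ := hJ
  refine mem_lang_iff.2 ⟨y, ?_, mem_Iw_cons.2 ⟨hy, by rwa [hTy]⟩⟩
  exact hFO.of_T_eq hTy (Set.mem_iUnion.2 ⟨c, hy⟩)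

lemma lang_prefix_of_cons_append {c d : A} {w : List A} (h : c :: (w ++ [d]) ∈ E.lang) :
    c :: w ∈ E.lang := by
  obtain ⟨x, hFO, hx⟩ := mem_lang_iff.1 h
  rw [mem_Iw_cons] at hx
  have h2 := hx.2
  rw [Iw_append_singleton] at h2
  exact mem_lang_iff.2 ⟨x, hFO, mem_Iw_cons.2 ⟨hx.1, h2.1⟩⟩

lemma lang_suffix_of_cons {c : A} {v : List A} (h : c :: v ∈ E.lang) : v ∈ E.lang := by
  obtain ⟨x, hFO, hx⟩ := mem_lang_iff.1 h
  rw [mem_Iw_cons] at hx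
  exact mem_lang_iff.2 ⟨E.T x, by simpa using hFO.tail 1, hx.2⟩

/-- From an edge word, a full-orbit point witnessing the edge. -/
lemma edge_point {c d : A} {w : List A} (h : c :: (w ++ [d]) ∈ E.lang) :
    ∃ x, E.FO x ∧ x ∈ E.Ja c ∧ x ∈ E.Iw w ∧ E.T^[w.length] x ∈ E.Ia d := by
  obtain ⟨y, hFO, hy⟩ := mem_lang_iff.1 h
  rw [mem_Iw_cons] at hy
  have h2 := hy.2
  rw [Iw_append_singleton] at h2
  exact ⟨E.T y, by simpa using hFO.tail 1, mapsTo_Ja hy.1, h2.1, h2.2⟩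

lemma edge_of_point {c d : A} {w : List A} {p : ℝ} (hFO : E.FO p) (hp : p ∈ E.Iw w)
    (hJ : p ∈ E.Ja c) (hd : E.T^[w.length] p ∈ E.Ia d) : c :: (w ++ [d]) ∈ E.lang :=
  cons_mem_lang hFO hJ (by rw [Iw_append_singleton]; exact ⟨hp, hd⟩)

lemma mem_Ja_getLast {v : List A} (hne : v ≠ []) {x : ℝ} (hx : x ∈ E.Iw v) :
    E.T^[v.length] x ∈ E.Ja (v.getLast hne) := by
  induction v generalizing x with
  | nil => exact absurd rfl hne
  | cons c w ih =>
    rw [mem_Iw_cons] at hx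
    cases w with
    | nil => simpa using mapsTo_Ja hx.1
    | cons e w' =>
      have := ih (by simp) hx.2
      rw [List.length_cons, Function.iterate_succ_apply, List.getLast_cons (by simp)]
      exact this

lemma mem_Ia_headI [Inhabited A] {v : List A} (hne : v ≠ []) {x : ℝ} (hx : x ∈ E.Iw v) :
    x ∈ E.Ia v.headI := by
  cases v with
  | nil => exact absurd rfl hne
  | cons c w => exact (mem_Iw_cons.1 hx).1

end IET

section Graph

variable {A : Type*} [Fintype A] {E : IET A}

open IET

lemma adj_of_lang {c d : A} {w : List A} (h : c :: (w ++ [d]) ∈ E.lang)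
    (hv1 : (Sum.inl c : A ⊕ A) ∈ extVerts E.lang w)
    (hv2 : (Sum.inr d : A ⊕ A) ∈ extVerts E.lang w) :
    (extGraph E.lang w).Adj ⟨Sum.inl c, hv1⟩ ⟨Sum.inr d, hv2⟩ := by
  show (SimpleGraph.fromRel (extRel E.lang w)).Adj (Sum.inl c) (Sum.inr d)
  rw [SimpleGraph.fromRel_adj]
  exact ⟨by simp, Or.inl ⟨c, d, rfl, rfl, h⟩⟩

lemma reach_invariant {w : List A} (φ : A ⊕ A → Set ℝ)
    (hφ : ∀ c d : A, c :: (w ++ [d]) ∈ E.lang → φ (Sum.inl c) = φ (Sum.inr d))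
    {u v : extVerts E.lang w} (h : (extGraph E.lang w).Reachable u v) :
    φ u.val = φ v.val := by
  obtain ⟨p⟩ := h
  induction p with
  | nil => rfl
  | @cons u x v hadj _ ih =>
    refine Eq.trans ?_ ih
    have hadj' : (SimpleGraph.fromRel (extRel E.lang w)).Adj u.val x.val := hadj
    rw [SimpleGraph.fromRel_adj] at hadj'
    rcases hadj'.2 with hrel | hrel <;> obtain ⟨c, d, h1, h2, hcd⟩ := hrel
    · rw [h1, h2]; exact hφ c d hcd
    · rw [h1, h2]; exact (hφ c d hcd).symm

end Graph
end Paper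
namespace Paper
namespace IET

open Set

variable {A : Type*} [Fintype A] {E : IET A}

/-- The complement of the (length-0) connection points inside `]l,r[`. -/
def compSet (E : IET A) : Set ℝ := Set.Ioo E.l E.r \ {z : ℝ | E.IsConnection z z 0}

lemma connSet_eq (E : IET A) : {z : ℝ | E.IsConnection z z 0} = E.singTinv ∩ E.singT := by
  ext z
  simp only [Set.mem_setOf_eq, IsConnection, Set.mem_inter_iff, Function.iterate_zero_apply]
  tauto

lemma Ja_subset_compSet {c : A} : E.Ja c ⊆ E.compSet := by
  intro x hx
  refine ⟨Ja_subset_Ioo hx, fun h => ?_⟩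
  exact (not_mem_singTinv_of_Ja hx) h.1

lemma Ia_subset_compSet {c : A} : E.Ia c ⊆ E.compSet := by
  intro x hx
  refine ⟨Ia_subset_Ioo hx, fun h => ?_⟩
  rw [connSet_eq] at *
  exact (not_mem_singT_of_Ia hx) h.2

lemma comp_eq_of_preconn {s C : Set ℝ} {x y : ℝ} (hC : IsPreconnected C) (hCs : C ⊆ s)
    (hx : x ∈ C) (hy : y ∈ C) :
    connectedComponentIn s x = connectedComponentIn s y :=
  connectedComponentIn_eq (hC.subset_connectedComponentIn hx hCs hy)

noncomputable def jpt (E : IET A) (c : A) : ℝ := (Ja_nonempty (E := E) (a := c)).some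

lemma jpt_mem (E : IET A) (c : A) : E.jpt c ∈ E.Ja c := (Ja_nonempty).some_mem

noncomputable def ipt (E : IET A) (c : A) : ℝ := (Ia_nonempty (E := E) (a := c)).some

lemma ipt_mem (E : IET A) (c : A) : E.ipt c ∈ E.Ia c := (Ia_nonempty).some_mem

lemma comp_eq_jpt {c : A} {x : ℝ} (hx : x ∈ E.Ja c) :
    connectedComponentIn E.compSet x = connectedComponentIn E.compSet (E.jpt c) :=
  comp_eq_of_preconn preconn_Ja Ja_subset_compSet hx (jpt_mem E c)

lemma comp_eq_ipt {c : A} {x : ℝ} (hx : x ∈ E.Ia c) :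
    connectedComponentIn E.compSet x = connectedComponentIn E.compSet (E.ipt c) :=
  comp_eq_of_preconn preconn_Ia Ia_subset_compSet hx (ipt_mem E c)

end IET
end Paper
namespace Paper
namespace IET

open Set

variable {A : Type*} [Fintype A] {E : IET A}

lemma forward_left {w : List A} {a b : A} (ha : a :: w ∈ E.lang) (hb : b :: w ∈ E.lang)
    (h : (extGraph E.lang w).Reachable ⟨Sum.inl a, ha⟩ ⟨Sum.inl b, hb⟩) :
    connectedComponentIn E.compSet (E.jpt a) = connectedComponentIn E.compSet (E.jpt b) := by
  haveI : Inhabited A := ⟨a⟩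
  have := reach_invariant (E := E)
    (Sum.elim (fun c => connectedComponentIn E.compSet (E.jpt c))
      (fun d => connectedComponentIn E.compSet (E.ipt ((w ++ [d]).headI))))
    (fun c d hcd => ?_) h
  · simpa using this
  · obtain ⟨x, hFO, hJ, hw, hd⟩ := edge_point hcd
    have hx2 : x ∈ E.Iw (w ++ [d]) := by rw [Iw_append_singleton]; exact ⟨hw, hd⟩
    have hx3 : x ∈ E.Ia ((w ++ [d]).headI) := mem_Ia_headI (by simp) hx2
    simpa using (comp_eq_jpt hJ).symm.trans (comp_eq_ipt hx3)

lemma forward_right {w : List A} {a b : A} (ha : w ++ [a] ∈ E.lang) (hb : w ++ [b] ∈ E.lang)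
    (h : (extGraph E.lang w).Reachable ⟨Sum.inr a, ha⟩ ⟨Sum.inr b, hb⟩) :
    connectedComponentIn E.compSet (E.ipt a) = connectedComponentIn E.compSet (E.ipt b) := by
  have := reach_invariant (E := E)
    (Sum.elim (fun c => connectedComponentIn E.compSet (E.jpt ((c :: w).getLast (by simp))))
      (fun d => connectedComponentIn E.compSet (E.ipt d)))
    (fun c d hcd => ?_) h
  · simpa using this
  · have hcd' : (c :: w) ++ [d] ∈ E.lang := by simpa using hcd
    obtain ⟨y, hFO, hy⟩ := mem_lang_iff.1 hcd'
    rw [Iw_append_singleton] at hy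
    have hq : E.T^[(c :: w).length] y ∈ E.Ja ((c :: w).getLast (by simp)) :=
      mem_Ja_getLast (by simp) hy.1
    simpa using (comp_eq_jpt hq).symm.trans (comp_eq_ipt hy.2)

end IET
end Paper
namespace Paper
namespace IET

open Set MeasureTheory

variable {A : Type*} [Fintype A] {E : IET A}

lemma cut_finite (hfinT : E.singT.Finite) (w : List A) :
    {p ∈ E.Iw w | E.T^[w.length] p ∈ E.singT}.Finite := by
  obtain ⟨σ, ε, hσ, hiter⟩ := exists_affine E w
  have hinj : Set.InjOn (fun p : ℝ => σ * p + ε) ((fun p : ℝ => σ * p + ε) ⁻¹' E.singT) := by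
    intro p _ q _ h
    simp only at h
    rcases hσ with h' | h' <;> subst h' <;> linarith
  refine (hfinT.preimage hinj).subset ?_
  rintro p ⟨hp, hsing⟩
  show σ * p + ε ∈ E.singT
  rwa [← hiter p hp]

lemma bad_countable (hfinT : E.singT.Finite) :
    {p ∈ Set.Ioo E.l E.r | ¬ E.FO p}.Countable := by
  have hsub : {p ∈ Set.Ioo E.l E.r | ¬ E.FO p} ⊆
      ⋃ (n : ℕ), ⋃ (f : Fin n → A),
        {p ∈ E.Iw (List.ofFn f) | E.T^[(List.ofFn f).length] p ∈ E.singT} := by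
    rintro p ⟨hIoo, hbad⟩
    have hex : ∃ n, E.T^[n] p ∉ ⋃ a, E.Ia a := by
      by_contra hc; push_neg at hc; exact hbad hc
    classical
    obtain ⟨n, hspec, hmin⟩ : ∃ n, (E.T^[n] p ∉ ⋃ a, E.Ia a) ∧
        ∀ i, i < n → E.T^[i] p ∈ ⋃ a, E.Ia a :=
      ⟨Nat.find hex, Nat.find_spec hex, fun i hi => by
        by_contra hcon; exact Nat.find_min hex hi hcon⟩
    have hf : ∀ i : Fin n, ∃ a, E.T^[(i : ℕ)] p ∈ E.Ia a := fun i =>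
      Set.mem_iUnion.1 (hmin i i.2)
    choose f hfmem using hf
    refine Set.mem_iUnion.2 ⟨n, Set.mem_iUnion.2 ⟨f, ⟨⟨hIoo, fun i => ?_⟩, ?_⟩⟩⟩
    · rw [List.get_ofFn]
      exact hfmem _
    · rw [List.length_ofFn]
      constructor
      · rcases Nat.eq_zero_or_pos n with h0 | h0
        · rwa [h0, Function.iterate_zero_apply]
        · obtain ⟨m, rfl⟩ : ∃ m, n = m + 1 := ⟨n - 1, (Nat.succ_pred_eq_of_pos h0).symm⟩
          rw [Function.iterate_succ_apply']
          obtain ⟨a, ha⟩ := Set.mem_iUnion.1 (hmin m (Nat.lt_succ_self m))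
          exact Ja_subset_Ioo (mapsTo_Ja ha)
      · exact hspec
  refine Set.Countable.mono hsub ?_
  exact Set.countable_iUnion fun n => Set.countable_iUnion fun f => (cut_finite hfinT _).countable

lemma exists_FO_avoid (hfinT : E.singT.Finite) {U K : Set ℝ} (hU : IsOpen U)
    (hUsub : U ⊆ Set.Ioo E.l E.r) {z₀ : ℝ} (hz : z₀ ∈ U) (hK : K.Countable) :
    ∃ p ∈ U, E.FO p ∧ p ∉ K := by
  by_contra hcon
  push_neg at hcon
  obtain ⟨ε, hε, hball⟩ := Metric.isOpen_iff.1 hU z₀ hz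
  have hsub : Set.Ioo (z₀ - ε) (z₀ + ε) ⊆ {p ∈ Set.Ioo E.l E.r | ¬ E.FO p} ∪ K := by
    intro p hp
    rw [← Real.ball_eq_Ioo] at hp
    have hpU := hball hp
    by_cases hFO : E.FO p
    · exact Or.inr (hcon p hpU hFO)
    · exact Or.inl ⟨hUsub hpU, hFO⟩
  have hc : ({p ∈ Set.Ioo E.l E.r | ¬ E.FO p} ∪ K).Countable := (bad_countable hfinT).union hK
  have h0 : volume (Set.Ioo (z₀ - ε) (z₀ + ε)) = 0 :=
    le_antisymm (hc.measure_zero volume ▸ measure_mono hsub) zero_le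
  rw [Real.volume_Ioo] at h0
  rw [ENNReal.ofReal_eq_zero] at h0
  linarith

end IET
end Paper
namespace Paper
namespace IET

open Set

variable {A : Type*} [Fintype A] {E : IET A}

lemma Iw_subset_Ioo {w : List A} : E.Iw w ⊆ Set.Ioo E.l E.r := fun _ hp => hp.1

lemma iterate_len_mem {w : List A} {p : ℝ} (hp : p ∈ E.Iw w) :
    E.T^[w.length] p ∈ Set.Ioo E.l E.r := by
  cases w with
  | nil => simpa using hp.1
  | cons c v => exact Ja_subset_Ioo (mem_Ja_getLast (by simp) hp)

lemma no_common_cut (hnc : ∀ x y : ℝ, ∀ n : ℕ, E.IsConnection x y n → n = 0) {w : List A}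
    {t : ℝ} (ht : t ∈ E.Iw w) (h1 : t ∈ E.singTinv) (h2 : E.T^[w.length] t ∈ E.singT) :
    t ∈ E.singT := by
  have hconn : E.IsConnection t (E.T^[w.length] t) w.length :=
    ⟨h1, h2, rfl, fun i hi => not_mem_singT_of_Ia (ht.2 ⟨i, hi⟩)⟩
  have h0 := hnc _ _ _ hconn
  rw [h0] at h2
  simpa using h2

lemma subset_of_preconn {ι : Type*} {F : ι → Set ℝ} (hop : ∀ c, IsOpen (F c))
    (hdisj : ∀ c c', c ≠ c' → Disjoint (F c) (F c')) {s : Set ℝ} (hs : IsPreconnected s)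
    (hcov : ∀ p ∈ s, ∃ c, p ∈ F c) {c : ι} {x : ℝ} (hx : x ∈ s) (hxc : x ∈ F c) :
    s ⊆ F c := by
  classical
  set v := ⋃ c' ∈ {c' : ι | c' ≠ c}, F c' with hv
  have hvop : IsOpen v := isOpen_biUnion fun c' _ => hop c'
  have hcover : s ⊆ F c ∪ v := by
    intro p hp
    obtain ⟨c', hc'⟩ := hcov p hp
    by_cases h : c' = c
    · exact Or.inl (h ▸ hc')
    · exact Or.inr (Set.mem_biUnion h hc')
  have hempty : ¬ (s ∩ v).Nonempty := by
    rintro hne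
    obtain ⟨p, hps, hpv⟩ := hs (F c) v (hop c) hvop hcover ⟨x, hx, hxc⟩ hne
    obtain ⟨c', hc', hpc'⟩ := Set.mem_iUnion₂.1 hpv.2
    exact (hdisj c' c hc').le_bot ⟨hpc', hpv.1⟩
  intro p hp
  rcases hcover hp with h | h
  · exact h
  · exact absurd ⟨p, hp, h⟩ hempty

lemma find_delta {W : Set ℝ} (hW : IsOpen W) {t x y : ℝ} (htW : t ∈ W) (hx : x < t)
    (hy : t < y) {C : Set ℝ} (hC : C.Finite) (htC : t ∉ C) :
    ∃ δ > 0, δ ≤ t - x ∧ δ ≤ y - t ∧ Set.Ioo (t - δ) (t + δ) ⊆ W ∧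
      ∀ p ∈ Set.Ioo (t - δ) (t + δ), p ∉ C := by
  obtain ⟨δ₁, hδ₁, hball₁⟩ := Metric.isOpen_iff.1 hW t htW
  have hCcl : IsOpen Cᶜ := hC.isClosed.isOpen_compl
  obtain ⟨δ₂, hδ₂, hball₂⟩ := Metric.isOpen_iff.1 hCcl t htC
  refine ⟨min (min δ₁ δ₂) (min (t - x) (y - t)), lt_min (lt_min hδ₁ hδ₂) (lt_min (by linarith) (by linarith)), ?_, ?_, ?_, ?_⟩
  · exact le_trans (min_le_right _ _) (min_le_left _ _)
  · exact le_trans (min_le_right _ _) (min_le_right _ _)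
  · intro p hp
    refine hball₁ ?_
    rw [Real.ball_eq_Ioo]
    have h1 : min (min δ₁ δ₂) (min (t - x) (y - t)) ≤ δ₁ :=
      le_trans (min_le_left _ _) (min_le_left _ _)
    exact ⟨by linarith [hp.1], by linarith [hp.2]⟩
  · intro p hp
    refine hball₂ ?_
    rw [Real.ball_eq_Ioo]
    have h1 : min (min δ₁ δ₂) (min (t - x) (y - t)) ≤ δ₂ :=
      le_trans (min_le_left _ _) (min_le_right _ _)
    exact ⟨by linarith [hp.1], by linarith [hp.2]⟩

end IET
end Paper
namespace Paper
namespace IET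

open Set

variable {A : Type*} [Fintype A] {E : IET A}

lemma same_Ja_of_no_sing {x y : ℝ} {c c' : A} (hxy : x ≤ y)
    (hsub : Set.Icc x y ⊆ Set.Ioo E.l E.r)
    (hnos : ∀ p ∈ Set.Icc x y, p ∉ E.singTinv)
    (hxc : x ∈ E.Ja c) (hyc : y ∈ E.Ja c') : c = c' := by
  have hcov : ∀ p ∈ Set.Icc x y, ∃ e, p ∈ E.Ja e := by
    intro p hp
    by_contra hno
    push_neg at hno
    refine hnos p hp ⟨hsub hp, fun hmem => ?_⟩
    obtain ⟨e, he⟩ := Set.mem_iUnion.1 hmem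
    exact hno e he
  have hsub2 := subset_of_preconn (fun e => isOpen_Ja) (fun e e' h => E.hJdisj h)
    isPreconnected_Icc hcov (Set.left_mem_Icc.2 hxy) hxc
  exact Ja_eq_of_mem (hsub2 (Set.right_mem_Icc.2 hxy)) hyc

lemma chain (hnc : ∀ x y : ℝ, ∀ n : ℕ, E.IsConnection x y n → n = 0)
    (hfinT : E.singT.Finite) (hfinJ : E.singTinv.Finite) (w : List A) :
    ∀ n : ℕ, ∀ x y : ℝ, E.FO x → E.FO y → x ∈ E.Iw w → y ∈ E.Iw w → x ≤ y →
      (∀ p ∈ Set.Icc x y, ¬(p ∈ E.singTinv ∧ p ∈ E.singT)) →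
      ((E.singTinv ∪ {p ∈ E.Iw w | E.T^[w.length] p ∈ E.singT}) ∩ Set.Icc x y).ncard ≤ n →
      ∀ c c' : A, x ∈ E.Ja c → y ∈ E.Ja c' →
      ∀ (hc : c :: w ∈ E.lang) (hc' : c' :: w ∈ E.lang),
      (extGraph E.lang w).Reachable ⟨Sum.inl c, hc⟩ ⟨Sum.inl c', hc'⟩ := by
  intro n
  induction n with
  | zero =>
    intro x y hFOx hFOy hxw hyw hxy hfree hcard c c' hxc hyc hc hc'
    have hIcc : Set.Icc x y ⊆ E.Iw w := fun p hp => ordconn_Iw E w x hxw y hyw p hp.1 hp.2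
    have hCutFin : ((E.singTinv ∪ {p ∈ E.Iw w | E.T^[w.length] p ∈ E.singT}) ∩
        Set.Icc x y).Finite := (hfinJ.union (cut_finite hfinT w)).inter_of_left _
    have hem := (Set.ncard_eq_zero hCutFin).1 (Nat.le_zero.1 hcard)
    have hnos : ∀ p ∈ Set.Icc x y, p ∉ E.singTinv := by
      intro p hp hsing
      have : p ∈ (E.singTinv ∪ {p ∈ E.Iw w | E.T^[w.length] p ∈ E.singT}) ∩ Set.Icc x y :=
        ⟨Or.inl hsing, hp⟩
      rw [hem] at this
      exact this
    have hcc : c = c' := same_Ja_of_no_sing hxy (fun p hp => Iw_subset_Ioo (hIcc hp)) hnos hxc hyc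
    subst hcc
    exact SimpleGraph.Reachable.refl _
  | succ n ih =>
    intro x y hFOx hFOy hxw hyw hxy hfree hcard c c' hxc hyc hc hc'
    classical
    have hIcc : Set.Icc x y ⊆ E.Iw w := fun p hp => ordconn_Iw E w x hxw y hyw p hp.1 hp.2
    set Cut2 : Set ℝ := {p ∈ E.Iw w | E.T^[w.length] p ∈ E.singT} with hCut2def
    set Cut : Set ℝ := (E.singTinv ∪ Cut2) ∩ Set.Icc x y with hCutdef
    have hCutFin : Cut.Finite := (hfinJ.union (cut_finite hfinT w)).inter_of_left _
    have hxCut : x ∉ Cut := by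
      rintro ⟨h | h, -⟩
      · exact not_mem_singTinv_of_Ja hxc h
      · exact h.2.2 (hFOx w.length)
    have hyCut : y ∉ Cut := by
      rintro ⟨h | h, -⟩
      · exact not_mem_singTinv_of_Ja hyc h
      · exact h.2.2 (hFOy w.length)
    by_cases hempty : Cut = ∅
    · have hnos : ∀ p ∈ Set.Icc x y, p ∉ E.singTinv := by
        intro p hp hsing
        have hmem : p ∈ Cut := ⟨Or.inl hsing, hp⟩
        rw [hempty] at hmem
        exact hmem
      have hcc : c = c' := same_Ja_of_no_sing hxy (fun p hp => Iw_subset_Ioo (hIcc hp)) hnos hxc hyc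
      subst hcc
      exact SimpleGraph.Reachable.refl _
    · have hne : Cut.Nonempty := Set.nonempty_iff_ne_empty.2 hempty
      have hFnne : hCutFin.toFinset.Nonempty := by rwa [Set.Finite.toFinset_nonempty]
      set t := hCutFin.toFinset.min' hFnne with htdef
      have htCut : t ∈ Cut := by
        have := hCutFin.toFinset.min'_mem hFnne
        rwa [Set.Finite.mem_toFinset] at this
      have htmin : ∀ s ∈ Cut, t ≤ s := fun s hs =>
        hCutFin.toFinset.min'_le s (hCutFin.mem_toFinset.2 hs)
      have htIcc : t ∈ Set.Icc x y := htCut.2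
      have htx : x < t := lt_of_le_of_ne htIcc.1 (fun h => hxCut (by rw [h]; exact htCut))
      have hty : t < y := lt_of_le_of_ne htIcc.2 (fun h => hyCut (by rw [← h]; exact htCut))
      have htw : t ∈ E.Iw w := hIcc htIcc
      have hnotboth : ¬(t ∈ E.singTinv ∧ t ∈ Cut2) := by
        rintro ⟨h1, h2⟩
        exact hfree t htIcc ⟨h1, no_common_cut hnc htw h1 h2.2⟩
      have htlen : E.T^[w.length] t ∈ Set.Ioo E.l E.r := iterate_len_mem htw
      -- new cut set bound for the inductive call
      have hcut_sub : ∀ y₁, t < y₁ → ((E.singTinv ∪ Cut2) ∩ Set.Icc y₁ y).ncard ≤ n := by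
        intro y₁ hty₁
        have hsub : (E.singTinv ∪ Cut2) ∩ Set.Icc y₁ y ⊆ Cut \ {t} := by
          rintro p ⟨hp1, hp2⟩
          refine ⟨⟨hp1, ⟨le_trans (le_of_lt (lt_trans htx hty₁)) hp2.1, hp2.2⟩⟩, ?_⟩
          intro hpt
          rw [Set.mem_singleton_iff] at hpt
          subst hpt
          exact absurd hp2.1 (not_le.2 hty₁)
        have hlt : ((E.singTinv ∪ Cut2) ∩ Set.Icc y₁ y).ncard < n + 1 :=
          calc ((E.singTinv ∪ Cut2) ∩ Set.Icc y₁ y).ncard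
              ≤ (Cut \ {t}).ncard := Set.ncard_le_ncard hsub hCutFin.diff
            _ < Cut.ncard := Set.ncard_diff_singleton_lt_of_mem htCut hCutFin
            _ ≤ n + 1 := hcard
        omega
      rcases htCut.1 with ht1 | ht2
      · -- t is a singularity of T⁻¹ (a `Ja`-cut); it is not a `Cut2` point
        have ht2' : t ∉ Cut2 := fun h => hnotboth ⟨ht1, h⟩
        have htIa : E.T^[w.length] t ∈ ⋃ a, E.Ia a := by
          by_contra hcon
          exact ht2' ⟨htw, ⟨htlen, hcon⟩⟩
        obtain ⟨d, hd⟩ := Set.mem_iUnion.1 htIa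
        have htW : t ∈ E.Iw (w ++ [d]) := by
          rw [Iw_append_singleton]; exact ⟨htw, hd⟩
        obtain ⟨δ, hδ, hδx, hδy, hδW, hδC⟩ :=
          find_delta (isOpen_Iw E (w ++ [d])) htW htx hty (hCutFin.diff : (Cut \ {t}).Finite)
            (fun h => h.2 rfl)
        have hsubL : Set.Ioo (t - δ) t ⊆ Set.Icc x y := fun p hp =>
          ⟨le_trans (by linarith) (le_of_lt hp.1), le_trans (le_of_lt hp.2) (le_of_lt hty)⟩
        have hsubR : Set.Ioo t (t + δ) ⊆ Set.Icc x y := fun p hp =>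
          ⟨le_trans (le_of_lt htx) (le_of_lt hp.1), le_trans (le_of_lt hp.2) (by linarith)⟩
        obtain ⟨x₁, hx₁mem, hFOx₁, -⟩ := exists_FO_avoid hfinT isOpen_Ioo
          (fun p hp => Iw_subset_Ioo (hIcc (hsubL hp)))
          (show t - δ/2 ∈ Set.Ioo (t - δ) t from ⟨by linarith, by linarith⟩)
          Set.countable_empty
        obtain ⟨y₁, hy₁mem, hFOy₁, -⟩ := exists_FO_avoid hfinT isOpen_Ioo
          (fun p hp => Iw_subset_Ioo (hIcc (hsubR hp)))
          (show t + δ/2 ∈ Set.Ioo t (t + δ) from ⟨by linarith, by linarith⟩)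
          Set.countable_empty
        have hx₁Icc : x₁ ∈ Set.Icc x y := hsubL hx₁mem
        have hy₁Icc : y₁ ∈ Set.Icc x y := hsubR hy₁mem
        have hx₁Cut : x₁ ∉ Cut := by
          intro hmem
          exact hδC x₁ ⟨hx₁mem.1, lt_trans hx₁mem.2 (by linarith)⟩
            ⟨hmem, fun h => absurd (Set.mem_singleton_iff.1 h ▸ hx₁mem.2) (lt_irrefl t)⟩
        have hy₁Cut : y₁ ∉ Cut := by
          intro hmem
          exact hδC y₁ ⟨lt_trans (by linarith) hy₁mem.1, hy₁mem.2⟩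
            ⟨hmem, fun h => absurd (Set.mem_singleton_iff.1 h ▸ hy₁mem.1) (lt_irrefl t)⟩
        -- x₁ lies in the same Ja as x
        have hJaIcc : Set.Icc x x₁ ⊆ E.Ja c := by
          refine subset_of_preconn (fun e => isOpen_Ja) (fun e e' h => E.hJdisj h)
            isPreconnected_Icc ?_ (Set.left_mem_Icc.2 (le_of_lt (lt_of_le_of_lt (by linarith) hx₁mem.1))) hxc
          intro p hp
          have hpIcc : p ∈ Set.Icc x y := ⟨hp.1, le_trans hp.2 hx₁Icc.2⟩
          have hpsing : p ∉ E.singTinv := by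
            intro hsing
            have : t ≤ p := htmin p ⟨Or.inl hsing, hpIcc⟩
            exact absurd (lt_of_le_of_lt this (lt_of_le_of_lt hp.2 hx₁mem.2)) (lt_irrefl t)
          by_contra hno
          push_neg at hno
          refine hpsing ⟨Iw_subset_Ioo (hIcc hpIcc), fun hmem => ?_⟩
          obtain ⟨e, he⟩ := Set.mem_iUnion.1 hmem
          exact hno e he
        have hx₁Jc : x₁ ∈ E.Ja c := hJaIcc (Set.right_mem_Icc.2 (le_of_lt (lt_of_le_of_lt (by linarith) hx₁mem.1)))
        -- y₁ is in some Ja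
        have hy₁Ja : ∃ e, y₁ ∈ E.Ja e := by
          by_contra hno
          push_neg at hno
          refine hy₁Cut ⟨Or.inl ⟨Iw_subset_Ioo (hIcc hy₁Icc), fun hmem => ?_⟩, hy₁Icc⟩
          obtain ⟨e, he⟩ := Set.mem_iUnion.1 hmem
          exact hno e he
        obtain ⟨c₂, hy₁J⟩ := hy₁Ja
        -- both x₁ and y₁ are in Iw (w ++ [d])
        have hx₁W : x₁ ∈ E.Iw (w ++ [d]) := hδW ⟨hx₁mem.1, lt_trans hx₁mem.2 (by linarith)⟩
        have hy₁W : y₁ ∈ E.Iw (w ++ [d]) := hδW ⟨lt_trans (by linarith) hy₁mem.1, hy₁mem.2⟩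
        rw [Iw_append_singleton] at hx₁W hy₁W
        have hword1 : c :: (w ++ [d]) ∈ E.lang := edge_of_point hFOx₁ hx₁W.1 hx₁Jc hx₁W.2
        have hword2 : c₂ :: (w ++ [d]) ∈ E.lang := edge_of_point hFOy₁ hy₁W.1 hy₁J hy₁W.2
        have hvinr : w ++ [d] ∈ E.lang := lang_suffix_of_cons hword1
        have hc₂ : c₂ :: w ∈ E.lang := lang_prefix_of_cons_append hword2
        have reach1 := (adj_of_lang hword1 hc hvinr).reachable
        have reach2 := (adj_of_lang hword2 hc₂ hvinr).reachable
        have reachIH := ih y₁ y hFOy₁ hFOy hy₁W.1 hyw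
          (le_trans (le_of_lt hy₁mem.2) (by linarith))
          (fun p hp => hfree p ⟨le_trans hx₁Icc.1 (le_trans (le_of_lt (lt_trans hx₁mem.2 hy₁mem.1)) hp.1), hp.2⟩)
          (hcut_sub y₁ hy₁mem.1) c₂ c' hy₁J hyc hc₂ hc'
        exact (reach1.trans reach2.symm).trans reachIH
      · -- t is a `Cut2` point; it is not a singularity of T⁻¹
        have ht1' : t ∉ E.singTinv := fun h => hnotboth ⟨h, ht2⟩
        have htJa : ∃ e, t ∈ E.Ja e := by
          by_contra hno
          push_neg at hno
          refine ht1' ⟨Iw_subset_Ioo htw, fun hmem => ?_⟩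
          obtain ⟨e, he⟩ := Set.mem_iUnion.1 hmem
          exact hno e he
        obtain ⟨ct, htJ⟩ := htJa
        obtain ⟨δ, hδ, hδx, hδy, hδW, hδC⟩ :=
          find_delta (isOpen_Ja.inter (isOpen_Iw E w)) (⟨htJ, htw⟩ : t ∈ E.Ja ct ∩ E.Iw w)
            htx hty (hCutFin.diff : (Cut \ {t}).Finite) (fun h => h.2 rfl)
        have hsubL : Set.Ioo (t - δ) t ⊆ Set.Icc x y := fun p hp =>
          ⟨le_trans (by linarith) (le_of_lt hp.1), le_trans (le_of_lt hp.2) (le_of_lt hty)⟩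
        have hsubR : Set.Ioo t (t + δ) ⊆ Set.Icc x y := fun p hp =>
          ⟨le_trans (le_of_lt htx) (le_of_lt hp.1), le_trans (le_of_lt hp.2) (by linarith)⟩
        obtain ⟨x₁, hx₁mem, hFOx₁, -⟩ := exists_FO_avoid hfinT isOpen_Ioo
          (fun p hp => Iw_subset_Ioo (hIcc (hsubL hp)))
          (show t - δ/2 ∈ Set.Ioo (t - δ) t from ⟨by linarith, by linarith⟩)
          Set.countable_empty
        obtain ⟨y₁, hy₁mem, hFOy₁, -⟩ := exists_FO_avoid hfinT isOpen_Ioo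
          (fun p hp => Iw_subset_Ioo (hIcc (hsubR hp)))
          (show t + δ/2 ∈ Set.Ioo t (t + δ) from ⟨by linarith, by linarith⟩)
          Set.countable_empty
        have hx₁Icc : x₁ ∈ Set.Icc x y := hsubL hx₁mem
        have hy₁Icc : y₁ ∈ Set.Icc x y := hsubR hy₁mem
        have hx₁W : x₁ ∈ E.Ja ct ∩ E.Iw w := hδW ⟨hx₁mem.1, lt_trans hx₁mem.2 (by linarith)⟩
        have hy₁W : y₁ ∈ E.Ja ct ∩ E.Iw w := hδW ⟨lt_trans (by linarith) hy₁mem.1, hy₁mem.2⟩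
        -- the right-extension letter of x
        obtain ⟨dx, hdx⟩ := Set.mem_iUnion.1 (hFOx w.length)
        -- x₁ has the same right-extension letter as x
        have hMIcc : Set.Icc x x₁ ⊆ E.Iw (w ++ [dx]) := by
          refine subset_of_preconn (fun e => isOpen_Iw E (w ++ [e])) ?_
            isPreconnected_Icc ?_ (Set.left_mem_Icc.2 (le_of_lt (lt_of_le_of_lt (by linarith) hx₁mem.1))) ?_
          · intro e e' hee
            rw [Set.disjoint_left]
            intro p hp hp'
            rw [Iw_append_singleton] at hp hp'
            exact hee (Ia_eq_of_mem hp.2 hp'.2)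
          · intro p hp
            have hpIcc : p ∈ Set.Icc x y := ⟨hp.1, le_trans hp.2 hx₁Icc.2⟩
            have hpw : p ∈ E.Iw w := hIcc hpIcc
            have hpc2 : p ∉ Cut2 := by
              intro hmem
              have : t ≤ p := htmin p ⟨Or.inr hmem, hpIcc⟩
              exact absurd (lt_of_le_of_lt this (lt_of_le_of_lt hp.2 hx₁mem.2)) (lt_irrefl t)
            have hpIa : E.T^[w.length] p ∈ ⋃ a, E.Ia a := by
              by_contra hcon
              exact hpc2 ⟨hpw, ⟨iterate_len_mem hpw, hcon⟩⟩
            obtain ⟨e, he⟩ := Set.mem_iUnion.1 hpIa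
            refine ⟨e, ?_⟩
            rw [Iw_append_singleton]
            exact ⟨hpw, he⟩
          · rw [Iw_append_singleton]
            exact ⟨hxw, hdx⟩
        have hx₁M : x₁ ∈ E.Iw (w ++ [dx]) :=
          hMIcc (Set.right_mem_Icc.2 (le_of_lt (lt_of_le_of_lt (by linarith) hx₁mem.1)))
        rw [Iw_append_singleton] at hx₁M
        have hword1 : c :: (w ++ [dx]) ∈ E.lang := edge_of_point hFOx hxw hxc hdx
        have hword2 : ct :: (w ++ [dx]) ∈ E.lang := edge_of_point hFOx₁ hx₁M.1 hx₁W.1 hx₁M.2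
        have hvinr : w ++ [dx] ∈ E.lang := lang_suffix_of_cons hword1
        have hct : ct :: w ∈ E.lang := lang_prefix_of_cons_append hword2
        have reach1 := (adj_of_lang hword1 hc hvinr).reachable
        have reach2 := (adj_of_lang hword2 hct hvinr).reachable
        have reachIH := ih y₁ y hFOy₁ hFOy hy₁W.2 hyw
          (le_trans (le_of_lt hy₁mem.2) (by linarith))
          (fun p hp => hfree p ⟨le_trans hx₁Icc.1 (le_trans (le_of_lt (lt_trans hx₁mem.2 hy₁mem.1)) hp.1), hp.2⟩)
          (hcut_sub y₁ hy₁mem.1) ct c' hy₁W.1 hyc hct hc'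
        exact (reach1.trans reach2.symm).trans reachIH

end IET
end Paper
namespace Paper
namespace IET

open Set

variable {A : Type*} [Fintype A] {E : IET A}

lemma free_of_comp {x y : ℝ} (hx : x ∈ E.compSet) (hy : y ∈ E.compSet)
    (h : connectedComponentIn E.compSet x = connectedComponentIn E.compSet y) :
    ∀ p ∈ Set.Icc x y, ¬(p ∈ E.singTinv ∧ p ∈ E.singT) := by
  have hord : Set.OrdConnected (connectedComponentIn E.compSet x) :=
    (isPreconnected_connectedComponentIn).ordConnected
  have hxm : x ∈ connectedComponentIn E.compSet x := mem_connectedComponentIn hx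
  have hym : y ∈ connectedComponentIn E.compSet x := by
    rw [h]; exact mem_connectedComponentIn hy
  intro p hp hcon
  have hpS : p ∈ E.compSet := connectedComponentIn_subset _ _ (hord.out hxm hym hp)
  exact hpS.2 (by rw [connSet_eq]; exact ⟨hcon.1, hcon.2⟩)

lemma singT_finite (E : IET A) [Nontrivial A] : E.singT.Finite := by
  by_contra hcon
  have h0 : E.singT.ncard = 0 := Set.Infinite.ncard hcon
  have h1 : E.singT.ncard = Fintype.card A - 1 := E.hIcard
  have h2 : 1 < Fintype.card A := Fintype.one_lt_card
  omega

lemma singTinv_finite (E : IET A) [Nontrivial A] : E.singTinv.Finite := by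
  by_contra hcon
  have h0 : E.singTinv.ncard = 0 := Set.Infinite.ncard hcon
  have h1 : E.singTinv.ncard = Fintype.card A - 1 := E.hJcard
  have h2 : 1 < Fintype.card A := Fintype.one_lt_card
  omega

end IET
end Paper


open Paper Paper.IET in
/-- Let `T` be an interval exchange transformation without connection of length `≥ 1`,
and let `C` be the set of its (length-0) connection points. For `w ∈ L(T)` and
`a, b ∈ L(w)` (resp. `a, b ∈ R(w)`), the vertices `1 ⊗ a` and `1 ⊗ b` (resp. `a ⊗ 1`
and `b ⊗ 1`) are in the same connected component of the extension graph `E(w)` iff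
`J_a` and `J_b` (resp. `I_a` and `I_b`) are in the same component of `I`,
i.e. the same connected component of `]l, r[` minus the connection points. -/
theorem same_component_iff
    {A : Type*} [Fintype A] (E : IET A)
    (hnc : ∀ x y : ℝ, ∀ n : ℕ, E.IsConnection x y n → n = 0) :
    ∀ w ∈ E.lang,
      (∀ a b : A, ∀ (ha : a :: w ∈ E.lang) (hb : b :: w ∈ E.lang),
        ((extGraph E.lang w).Reachable
            ⟨Sum.inl a, ha⟩ ⟨Sum.inl b, hb⟩ ↔
          ∃ x ∈ E.Ja a, ∃ y ∈ E.Ja b,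
            connectedComponentIn
                (Set.Ioo E.l E.r \ {z : ℝ | E.IsConnection z z 0}) x =
              connectedComponentIn
                (Set.Ioo E.l E.r \ {z : ℝ | E.IsConnection z z 0}) y)) ∧
      (∀ a b : A, ∀ (ha : w ++ [a] ∈ E.lang) (hb : w ++ [b] ∈ E.lang),
        ((extGraph E.lang w).Reachable
            ⟨Sum.inr a, ha⟩ ⟨Sum.inr b, hb⟩ ↔
          ∃ x ∈ E.Ia a, ∃ y ∈ E.Ia b,
            connectedComponentIn
                (Set.Ioo E.l E.r \ {z : ℝ | E.IsConnection z z 0}) x =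
              connectedComponentIn
                (Set.Ioo E.l E.r \ {z : ℝ | E.IsConnection z z 0}) y)) := by
  intro w hw
  constructor
  · intro a b ha hb
    constructor
    · intro h
      exact ⟨E.jpt a, jpt_mem E a, E.jpt b, jpt_mem E b, forward_left ha hb h⟩
    · rintro ⟨x, hxJ, y, hyJ, hcomp⟩
      by_cases hab : a = b
      · subst hab
        exact SimpleGraph.Reachable.refl _
      haveI : Nontrivial A := ⟨a, b, hab⟩
      have hfinT : E.singT.Finite := singT_finite E
      have hfinJ : E.singTinv.Finite := singTinv_finite E
      have hcomp0 : connectedComponentIn E.compSet x = connectedComponentIn E.compSet y := hcomp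
      obtain ⟨qa, hFOqa, hqa⟩ := mem_lang_iff.1 ha
      rw [mem_Iw_cons] at hqa
      obtain ⟨qb, hFOqb, hqb⟩ := mem_lang_iff.1 hb
      rw [mem_Iw_cons] at hqb
      have hFOxa : E.FO (E.T qa) := by simpa using hFOqa.tail 1
      have hFOxb : E.FO (E.T qb) := by simpa using hFOqb.tail 1
      have hxaJ : E.T qa ∈ E.Ja a := mapsTo_Ja hqa.1
      have hxbJ : E.T qb ∈ E.Ja b := mapsTo_Ja hqb.1
      have hcomp' : connectedComponentIn E.compSet (E.T qa) =
          connectedComponentIn E.compSet (E.T qb) :=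
        ((comp_eq_jpt hxaJ).trans (comp_eq_jpt hxJ).symm).trans
          ((hcomp0.trans (comp_eq_jpt hyJ)).trans (comp_eq_jpt hxbJ).symm)
      rcases le_total (E.T qa) (E.T qb) with hle | hle
      · exact chain hnc hfinT hfinJ w _ (E.T qa) (E.T qb) hFOxa hFOxb hqa.2 hqb.2 hle
          (free_of_comp (Ja_subset_compSet hxaJ) (Ja_subset_compSet hxbJ) hcomp')
          le_rfl a b hxaJ hxbJ ha hb
      · exact (chain hnc hfinT hfinJ w _ (E.T qb) (E.T qa) hFOxb hFOxa hqb.2 hqa.2 hle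
          (free_of_comp (Ja_subset_compSet hxbJ) (Ja_subset_compSet hxaJ) hcomp'.symm)
          le_rfl b a hxbJ hxaJ hb ha).symm
  · intro a b ha hb
    constructor
    · intro h
      exact ⟨E.ipt a, ipt_mem E a, E.ipt b, ipt_mem E b, forward_right ha hb h⟩
    · rintro ⟨x, hxI, y, hyI, hcomp⟩
      by_cases hab : a = b
      · subst hab
        exact SimpleGraph.Reachable.refl _
      haveI : Nontrivial A := ⟨a, b, hab⟩
      haveI : Inhabited A := ⟨a⟩
      have hfinT : E.singT.Finite := singT_finite E
      have hfinJ : E.singTinv.Finite := singTinv_finite E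
      have hcomp0 : connectedComponentIn E.compSet x = connectedComponentIn E.compSet y := hcomp
      obtain ⟨pa, hFOpa, hpa⟩ := mem_lang_iff.1 ha
      obtain ⟨pb, hFOpb, hpb⟩ := mem_lang_iff.1 hb
      obtain ⟨qa, hqaU, hFOqa, hqaNJ⟩ := exists_FO_avoid hfinT (isOpen_Iw E (w ++ [a]))
        Iw_subset_Ioo hpa hfinJ.countable
      obtain ⟨qb, hqbU, hFOqb, hqbNJ⟩ := exists_FO_avoid hfinT (isOpen_Iw E (w ++ [b]))
        Iw_subset_Ioo hpb hfinJ.countable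
      have hqaJa : ∃ e, qa ∈ E.Ja e := by
        by_contra hno
        push_neg at hno
        refine hqaNJ ⟨Iw_subset_Ioo hqaU, fun hmem => ?_⟩
        obtain ⟨e, he⟩ := Set.mem_iUnion.1 hmem
        exact hno e he
      have hqbJa : ∃ e, qb ∈ E.Ja e := by
        by_contra hno
        push_neg at hno
        refine hqbNJ ⟨Iw_subset_Ioo hqbU, fun hmem => ?_⟩
        obtain ⟨e, he⟩ := Set.mem_iUnion.1 hmem
        exact hno e he
      obtain ⟨ca, hca⟩ := hqaJa
      obtain ⟨cb, hcb⟩ := hqbJa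
      have hqa_head : qa ∈ E.Ia ((w ++ [a]).headI) := mem_Ia_headI (by simp) hqaU
      have hqb_head : qb ∈ E.Ia ((w ++ [b]).headI) := mem_Ia_headI (by simp) hqbU
      have hqa2 := hqaU
      have hqb2 := hqbU
      rw [Iw_append_singleton] at hqa2 hqb2
      have hworda : ca :: (w ++ [a]) ∈ E.lang := edge_of_point hFOqa hqa2.1 hca hqa2.2
      have hwordb : cb :: (w ++ [b]) ∈ E.lang := edge_of_point hFOqb hqb2.1 hcb hqb2.2
      have hcaw : ca :: w ∈ E.lang := lang_prefix_of_cons_append hworda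
      have hcbw : cb :: w ∈ E.lang := lang_prefix_of_cons_append hwordb
      have adja := adj_of_lang hworda hcaw ha
      have adjb := adj_of_lang hwordb hcbw hb
      have hq_comp : connectedComponentIn E.compSet qa = connectedComponentIn E.compSet qb := by
        cases w with
        | nil =>
          simp only [List.nil_append, List.headI] at hqa_head hqb_head
          exact ((comp_eq_ipt hqa_head).trans (comp_eq_ipt hxI).symm).trans
            ((hcomp0.trans (comp_eq_ipt hyI)).trans (comp_eq_ipt hqb_head).symm)
        | cons e w' =>
          simp only [List.cons_append, List.headI] at hqa_head hqb_head
          exact comp_eq_of_preconn preconn_Ia Ia_subset_compSet hqa_head hqb_head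
      rcases le_total qa qb with hle | hle
      · have hchain := chain hnc hfinT hfinJ w _ qa qb hFOqa hFOqb hqa2.1 hqb2.1 hle
          (free_of_comp (Ja_subset_compSet hca) (Ja_subset_compSet hcb) hq_comp)
          le_rfl ca cb hca hcb hcaw hcbw
        exact (adja.reachable.symm.trans hchain).trans adjb.reachable
      · have hchain := chain hnc hfinT hfinJ w _ qb qa hFOqb hFOqa hqb2.1 hqa2.1 hle
          (free_of_comp (Ja_subset_compSet hcb) (Ja_subset_compSet hca) hq_comp.symm)
          le_rfl cb ca hcb hca hcbw hcaw
        exact (adja.reachable.symm.trans hchain.symm).trans adjb.reachable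
end
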